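/- arXiv:0903.4625 — 9 statements merged into one kernel-verified Lean document; each statement's English description precedes it below -/
import Mathlib

section
/- Let σ be a probability measure on ℝ with ∫|x|^k dσ(x) < ∞ which is purely atomic with exactly m atoms, and let k ≥ 2m. Then the only quadrature formula of degree at least k for σ is σ itself; that is, if x₁ < … < x_n are distinct reals and λ₁,…,λ_n > 0 satisfy ∑_{i=1}^n λ_i = 1 and ∑_{i=1}^n λ_i x_i^j = ∫ x^j dσ(x) for all integers 0 ≤ j ≤ k, then the measure ∑_{i=1}^n λ_i δ_{x_i} equals σ. -/
open MeasureTheory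
open Polynomial
open scoped ENNReal

/-- If `σ` is a purely atomic probability measure with exactly `m` atoms, `k ≥ 2m`, and
`σ` has finite `k`-th absolute moment, then the only quadrature formula of degree at least `k`
for `σ` is `σ` itself. -/
theorem purely_atomic_unique_quadrature
    (σ : Measure ℝ) [IsProbabilityMeasure σ] (m k : ℕ) (hk : 2 * m ≤ k)
    (hint : Integrable (fun x => |x| ^ k) σ)
    (hatomic : ∃ (a : Fin m → ℝ) (w : Fin m → ℝ≥0∞),
      Function.Injective a ∧ (∀ i, w i ≠ 0) ∧ σ = ∑ i, w i • Measure.dirac (a i))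
    (n : ℕ) (x : Fin n → ℝ) (l : Fin n → ℝ)
    (hx : StrictMono x) (hl : ∀ i, 0 < l i) (hlsum : ∑ i, l i = 1)
    (hquad : ∀ j : ℕ, j ≤ k → ∑ i, l i * x i ^ j = ∫ t, t ^ j ∂σ) :
    (∑ i, ENNReal.ofReal (l i) • Measure.dirac (x i)) = σ := by
  classical
  obtain ⟨a, w, ha, hw0, hσ⟩ := hatomic
  have huniv : (∑ i, w i) = 1 := by
    have h := measure_univ (μ := σ)
    rw [hσ] at h
    simpa [Measure.finset_sum_apply, Measure.smul_apply, Measure.dirac_apply] using h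
  have hwtop : ∀ i, w i ≠ ∞ := by
    intro i hi
    have : (∑ j, w j) = ∞ := ENNReal.sum_eq_top.mpr ⟨i, Finset.mem_univ i, hi⟩
    rw [huniv] at this
    exact ENNReal.one_ne_top this
  have hmom : ∀ r : ℕ, ∫ t, t ^ r ∂σ = ∑ i, (w i).toReal * a i ^ r := by
    intro r
    rw [hσ, integral_finset_sum_measure]
    · refine Finset.sum_congr rfl fun i _ => ?_
      rw [integral_smul_measure, integral_dirac]
      simp [smul_eq_mul]
    · intro i _
      refine Integrable.smul_measure ?_ (hwtop i)
      exact (integrable_const ((a i) ^ r)).congr (ae_eq_dirac (fun t : ℝ => t ^ r)).symm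
  have hpoly : ∀ P : Polynomial ℝ, P.natDegree ≤ k →
      ∑ j, l j * P.eval (x j) = ∑ i, (w i).toReal * P.eval (a i) := by
    intro P hP
    have hev : ∀ t : ℝ, P.eval t = ∑ r ∈ Finset.range (k + 1), P.coeff r * t ^ r := fun t =>
      P.eval_eq_sum_range' (lt_of_le_of_lt hP (Nat.lt_succ_self k)) t
    calc ∑ j, l j * P.eval (x j)
        = ∑ r ∈ Finset.range (k + 1), P.coeff r * ∑ j, l j * x j ^ r := by
          simp_rw [hev, Finset.mul_sum]
          rw [Finset.sum_comm]
          exact Finset.sum_congr rfl fun r _ => Finset.sum_congr rfl fun j _ => by ring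
      _ = ∑ r ∈ Finset.range (k + 1), P.coeff r * ∑ i, (w i).toReal * a i ^ r := by
          refine Finset.sum_congr rfl fun r hr => ?_
          rw [hquad r (Nat.lt_succ_iff.mp (Finset.mem_range.mp hr)), hmom r]
      _ = ∑ i, (w i).toReal * P.eval (a i) := by
          simp_rw [hev, Finset.mul_sum]
          rw [Finset.sum_comm]
          exact Finset.sum_congr rfl fun r _ => Finset.sum_congr rfl fun i _ => by ring
  -- every node is an atom
  set P2 : Polynomial ℝ := ∏ i, (X - C (a i)) ^ 2 with hP2def
  have hP2deg : P2.natDegree ≤ k := by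
    refine le_trans (le_trans (natDegree_prod_le _ _) ?_) hk
    have : ∀ i : Fin m, ((X - C (a i)) ^ 2).natDegree = 2 := fun i => by
      rw [natDegree_pow, natDegree_X_sub_C]
    simp [this, Finset.sum_const, mul_comm]
  have hP2eval : ∀ t : ℝ, P2.eval t = ∏ i, (t - a i) ^ 2 := by
    intro t; simp [hP2def, eval_prod]
  have hzero : ∑ j, l j * P2.eval (x j) = 0 := by
    rw [hpoly P2 hP2deg]
    refine Finset.sum_eq_zero fun i _ => ?_
    rw [hP2eval]
    rw [Finset.prod_eq_zero (Finset.mem_univ i) (by simp)]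
    ring
  have hnode : ∀ j, ∃ i, x j = a i := by
    intro j
    have hnn : ∀ j' ∈ Finset.univ, (0:ℝ) ≤ l j' * P2.eval (x j') := by
      intro j' _
      refine mul_nonneg (hl j').le ?_
      rw [hP2eval]
      exact Finset.prod_nonneg fun i _ => sq_nonneg _
    have hterm := (Finset.sum_eq_zero_iff_of_nonneg hnn).mp hzero j (Finset.mem_univ j)
    have hPx : P2.eval (x j) = 0 := by
      rcases mul_eq_zero.mp hterm with h | h
      · exact absurd h (hl j).ne'
      · exact h
    rw [hP2eval] at hPx
    obtain ⟨i, _, hi⟩ := Finset.prod_eq_zero_iff.mp hPx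
    exact ⟨i, by nlinarith [sq_nonneg (x j - a i), pow_eq_zero_iff (n := 2) (two_ne_zero) |>.mp hi]⟩
  choose f hf using hnode
  -- matching weights
  have hL : ∀ t : Fin m,
      (∑ j ∈ Finset.univ.filter (fun j => f j = t), l j) = (w t).toReal := by
    intro t
    set Q : Polynomial ℝ := ∏ i ∈ Finset.univ.erase t, (X - C (a i)) with hQdef
    have hQdeg : Q.natDegree ≤ k := by
      refine le_trans (le_trans (natDegree_prod_le _ _) ?_) (le_trans (Nat.le_mul_of_pos_left m two_pos) hk)
      calc ∑ i ∈ Finset.univ.erase t, (X - C (a i)).natDegree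
          = ∑ i ∈ Finset.univ.erase t, 1 := by
            exact Finset.sum_congr rfl fun i _ => natDegree_X_sub_C _
        _ ≤ m := by
            rw [Finset.sum_const, smul_eq_mul, mul_one]
            exact le_trans (Finset.card_le_card (Finset.erase_subset _ _)) (by simp)
    have hQeval : ∀ s : ℝ, Q.eval s = ∏ i ∈ Finset.univ.erase t, (s - a i) := by
      intro s; simp [hQdef, eval_prod]
    have hQa : ∀ i, i ≠ t → Q.eval (a i) = 0 := by
      intro i hi
      rw [hQeval]
      exact Finset.prod_eq_zero (Finset.mem_erase.mpr ⟨hi, Finset.mem_univ i⟩) (by simp)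
    have hQt : Q.eval (a t) ≠ 0 := by
      rw [hQeval]
      refine Finset.prod_ne_zero_iff.mpr fun i hi => ?_
      rw [sub_ne_zero]
      exact fun h => (Finset.mem_erase.mp hi).1 (ha h.symm)
    have hkey := hpoly Q hQdeg
    rw [Finset.sum_eq_single t (fun i _ hi => by rw [hQa i hi, mul_zero]) (by simp)] at hkey
    have hLHS : ∑ j, l j * Q.eval (x j)
        = (∑ j ∈ Finset.univ.filter (fun j => f j = t), l j) * Q.eval (a t) := by
      rw [Finset.sum_mul, ← Finset.sum_filter_add_sum_filter_not Finset.univ (fun j => f j = t)]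
      have h2 : ∑ j ∈ Finset.univ.filter (fun j => ¬ f j = t), l j * Q.eval (x j) = 0 := by
        refine Finset.sum_eq_zero fun j hj => ?_
        rw [hf j, hQa (f j) (Finset.mem_filter.mp hj).2, mul_zero]
      rw [h2, add_zero]
      refine Finset.sum_congr rfl fun j hj => ?_
      rw [hf j, (Finset.mem_filter.mp hj).2]
    rw [hLHS] at hkey
    exact mul_right_cancel₀ hQt hkey
  -- conclude measure equality
  rw [hσ]
  calc (∑ j, ENNReal.ofReal (l j) • Measure.dirac (x j))
      = ∑ t : Fin m, ∑ j ∈ Finset.univ.filter (fun j => f j = t),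
          ENNReal.ofReal (l j) • Measure.dirac (a t) := by
        rw [← Finset.sum_fiberwise Finset.univ f
          (fun j => ENNReal.ofReal (l j) • Measure.dirac (x j))]
        refine Finset.sum_congr rfl fun t _ => Finset.sum_congr rfl fun j hj => ?_
        rw [hf j, (Finset.mem_filter.mp hj).2]
    _ = ∑ t : Fin m, w t • Measure.dirac (a t) := by
        refine Finset.sum_congr rfl fun t _ => ?_
        rw [← Finset.sum_smul]
        congr 1
        rw [← ENNReal.ofReal_sum_of_nonneg (fun j _ => (hl j).le), hL t,
          ENNReal.ofReal_toReal (hwtop t)]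
end

section
/- Let m ≥ 1 and k = 2m−1, and let σ be a probability measure on ℝ with ∫|x|^k dσ(x) < ∞. Suppose ξ₁ < ξ₂ < … < ξ_m are real numbers and λ₁,…,λ_m > 0 satisfy ∑_{i=1}^m λ_i = 1 and ∑_{i=1}^m λ_i·ξ_i^j = ∫ x^j dσ(x) for all integers 0 ≤ j ≤ k (i.e., they form the Gaussian quadrature for σ). Then every Chebyshev-type quadrature for σ of degree at least k with n nodes satisfies n ≥ 1/min(λ₁, λ_m). -/
open MeasureTheory Polynomial Finset

private lemma bernstein_side {m n : ℕ} (hm : 1 ≤ m) (hn : 1 ≤ n)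
    (ξ lam : Fin m → ℝ) (x : Fin n → ℝ)
    (hlam : ∀ i, 0 < lam i) (hlsum : ∑ i, lam i = 1)
    (hmom : ∀ j : ℕ, 1 ≤ j → j ≤ 2 * m - 1 →
      (n : ℝ)⁻¹ * ∑ i, x i ^ j = ∑ i, lam i * ξ i ^ j)
    (i₀ : Fin m) (ε : ℝ) (hε : ε = 1 ∨ ε = -1)
    (hside : ∀ i : Fin m, i ≠ i₀ → 0 < ε * (ξ i - ξ i₀)) :
    1 / lam i₀ ≤ (n : ℝ) := by
  have hn0 : (0:ℝ) < n := by exact_mod_cast hn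
  have hmom' : ∀ j : ℕ, j ≤ 2 * m - 1 →
      (n : ℝ)⁻¹ * ∑ i, x i ^ j = ∑ i, lam i * ξ i ^ j := by
    intro j hj
    rcases Nat.eq_zero_or_pos j with rfl | hjpos
    · simp only [pow_zero, mul_one, Finset.sum_const, Finset.card_univ, Fintype.card_fin,
        nsmul_eq_mul, mul_one]
      rw [hlsum, inv_mul_cancel₀ (ne_of_gt hn0)]
    · exact hmom j hjpos hj
  -- transfer lemma for polynomials of degree ≤ 2m-1
  have transfer : ∀ P : ℝ[X], P.natDegree ≤ 2 * m - 1 →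
      (n : ℝ)⁻¹ * ∑ j, P.eval (x j) = ∑ i, lam i * P.eval (ξ i) := by
    intro P hd
    have h1 : ∀ t : ℝ, P.eval t = ∑ i ∈ Finset.range (P.natDegree + 1), P.coeff i * t ^ i :=
      fun t => P.eval_eq_sum_range t
    calc (n : ℝ)⁻¹ * ∑ j, P.eval (x j)
        = ∑ i ∈ Finset.range (P.natDegree + 1), P.coeff i * ((n:ℝ)⁻¹ * ∑ j, x j ^ i) := by
          simp_rw [h1]
          rw [Finset.sum_comm, Finset.mul_sum]
          refine Finset.sum_congr rfl fun i _ => ?_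
          rw [← Finset.mul_sum]; ring
      _ = ∑ i ∈ Finset.range (P.natDegree + 1), P.coeff i * (∑ k, lam k * ξ k ^ i) := by
          refine Finset.sum_congr rfl fun i hi => ?_
          rw [hmom' i (by have := Finset.mem_range.mp hi; omega)]
      _ = ∑ k, lam k * P.eval (ξ k) := by
          simp_rw [h1, Finset.mul_sum]
          rw [Finset.sum_comm]
          exact Finset.sum_congr rfl fun k _ => Finset.sum_congr rfl fun i _ => by ring
  set S : Finset (Fin m) := Finset.univ.erase i₀ with hS
  have hcard : S.card = m - 1 := by
    rw [hS, Finset.card_erase_of_mem (Finset.mem_univ _), Finset.card_univ, Fintype.card_fin]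
  set P : ℝ[X] := ∏ i ∈ S, (X - C (ξ i))^2 with hP
  have hPeval : ∀ t : ℝ, P.eval t = ∏ i ∈ S, (t - ξ i)^2 := by
    intro t; simp [hP, Polynomial.eval_prod]
  have hPdeg : P.natDegree ≤ 2 * (m - 1) := by
    refine le_trans (Polynomial.natDegree_prod_le _ _) ?_
    have h2 : ∀ i ∈ S, ((X - C (ξ i))^2 : ℝ[X]).natDegree = 2 := by
      intro i _
      rw [Polynomial.natDegree_pow, Polynomial.natDegree_X_sub_C]
    rw [Finset.sum_congr rfl h2, Finset.sum_const, hcard, smul_eq_mul]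
    omega
  have hPdeg' : P.natDegree ≤ 2 * m - 1 := le_trans hPdeg (by omega)
  have hPnonneg : ∀ t : ℝ, 0 ≤ P.eval t := by
    intro t; rw [hPeval]; exact Finset.prod_nonneg fun i _ => sq_nonneg _
  have hξne : ∀ i ∈ S, ξ i₀ - ξ i ≠ 0 := by
    intro i hi
    have := hside i (Finset.ne_of_mem_erase hi)
    rcases hε with rfl | rfl <;> intro h <;> nlinarith
  have hPpos : 0 < P.eval (ξ i₀) := by
    rw [hPeval]
    refine Finset.prod_pos fun i hi => ?_
    exact lt_of_le_of_ne (sq_nonneg _) (Ne.symm (pow_ne_zero 2 (hξne i hi)))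
  have hPzero : ∀ i : Fin m, i ≠ i₀ → P.eval (ξ i) = 0 := by
    intro i hi
    rw [hPeval]
    exact Finset.prod_eq_zero (Finset.mem_erase.mpr ⟨hi, Finset.mem_univ i⟩) (by ring)
  -- the odd polynomial Q
  set Q : ℝ[X] := (X - C (ξ i₀)) * P with hQ
  have hQdeg : Q.natDegree ≤ 2 * m - 1 := by
    refine le_trans (Polynomial.natDegree_mul_le) ?_
    have : ((X - C (ξ i₀)) : ℝ[X]).natDegree = 1 := Polynomial.natDegree_X_sub_C _
    omega
  have hQeval : ∀ t : ℝ, Q.eval t = (t - ξ i₀) * P.eval t := by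
    intro t; simp [hQ]
  have hQsum : ∑ j, (x j - ξ i₀) * P.eval (x j) = 0 := by
    have ht := transfer Q hQdeg
    have hr : ∑ i, lam i * Q.eval (ξ i) = 0 := by
      refine Finset.sum_eq_zero fun i _ => ?_
      rcases eq_or_ne i i₀ with rfl | hi
      · rw [hQeval, sub_self, zero_mul, mul_zero]
      · rw [hQeval, hPzero i hi]; ring
    rw [hr] at ht
    simp_rw [hQeval] at ht
    have := mul_eq_zero.mp ht
    rcases this with h | h
    · exact absurd h (by positivity)
    · exact h
  -- there is a node on the other side of ξ i₀
  have hex : ∃ j : Fin n, ε * (x j - ξ i₀) ≤ 0 := by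
    by_contra h
    push_neg at h
    have hsum0 : ∑ j, (ε * (x j - ξ i₀)) * P.eval (x j) = 0 := by
      calc ∑ j, (ε * (x j - ξ i₀)) * P.eval (x j)
          = ε * ∑ j, (x j - ξ i₀) * P.eval (x j) := by
            rw [Finset.mul_sum]; exact Finset.sum_congr rfl fun j _ => by ring
        _ = 0 := by rw [hQsum, mul_zero]
    have hterm : ∀ j : Fin n, P.eval (x j) = 0 := by
      intro j
      have hz := (Finset.sum_eq_zero_iff_of_nonneg
        (fun j _ => mul_nonneg (le_of_lt (h j)) (hPnonneg (x j)))).mp hsum0 j (Finset.mem_univ j)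
      rcases mul_eq_zero.mp hz with h' | h'
      · exact absurd h' (ne_of_gt (h j))
      · exact h'
    have ht := transfer P hPdeg'
    rw [Finset.sum_eq_zero (fun j _ => hterm j), mul_zero] at ht
    have hr : ∑ i, lam i * P.eval (ξ i) = lam i₀ * P.eval (ξ i₀) := by
      refine Finset.sum_eq_single i₀ (fun i _ hi => by rw [hPzero i hi, mul_zero]) ?_
      intro h'; exact absurd (Finset.mem_univ i₀) h'
    rw [hr] at ht
    nlinarith [hlam i₀, hPpos]
  obtain ⟨j₀, hj₀⟩ := hex
  -- P is large at x j₀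
  have hPbig : P.eval (ξ i₀) ≤ P.eval (x j₀) := by
    rw [hPeval, hPeval]
    refine Finset.prod_le_prod (fun i _ => sq_nonneg _) fun i hi => ?_
    have h1 := hside i (Finset.ne_of_mem_erase hi)
    rcases hε with rfl | rfl <;> nlinarith
  -- conclude
  have ht := transfer P hPdeg'
  have hr : ∑ i, lam i * P.eval (ξ i) = lam i₀ * P.eval (ξ i₀) := by
    refine Finset.sum_eq_single i₀ (fun i _ hi => by rw [hPzero i hi, mul_zero]) ?_
    intro h'; exact absurd (Finset.mem_univ i₀) h'
  have hge : (n:ℝ)⁻¹ * P.eval (ξ i₀) ≤ lam i₀ * P.eval (ξ i₀) := by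
    rw [← hr, ← ht]
    have h1 : P.eval (x j₀) ≤ ∑ j, P.eval (x j) :=
      Finset.single_le_sum (fun j _ => hPnonneg (x j)) (Finset.mem_univ j₀)
    have h2 : P.eval (ξ i₀) ≤ ∑ j, P.eval (x j) := le_trans hPbig h1
    exact mul_le_mul_of_nonneg_left h2 (by positivity)
  have hlge : (n:ℝ)⁻¹ ≤ lam i₀ := le_of_mul_le_mul_right (by linarith) hPpos
  rw [div_le_iff₀ (hlam i₀)]
  have : (n:ℝ) * (n:ℝ)⁻¹ ≤ (n:ℝ) * lam i₀ := mul_le_mul_of_nonneg_left hlge (le_of_lt hn0)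
  rw [mul_inv_cancel₀ (ne_of_gt hn0)] at this
  linarith

/-- Bernstein's lower bound: if `ξ₁ < … < ξ_m` with weights `λ₁,…,λ_m` form the Gaussian
quadrature of the probability measure `σ` (reproducing moments up to order `k = 2m−1`), then
every Chebyshev-type quadrature for `σ` of degree at least `k` with `n ≥ 1` nodes satisfies
`n ≥ 1/min(λ₁, λ_m)`. -/
theorem bernstein_gaussian_lower_bound
    (m : ℕ) (hm : 1 ≤ m) (σ : Measure ℝ) [IsProbabilityMeasure σ]
    (hint : Integrable (fun x => |x| ^ (2 * m - 1)) σ)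
    (ξ lam : Fin m → ℝ) (hξ : StrictMono ξ) (hlam : ∀ i, 0 < lam i)
    (hlsum : ∑ i, lam i = 1)
    (hgauss : ∀ j : ℕ, j ≤ 2 * m - 1 → ∑ i, lam i * ξ i ^ j = ∫ t, t ^ j ∂σ)
    (n : ℕ) (hn : 1 ≤ n) (x : Fin n → ℝ)
    (hquad : ∀ j : ℕ, 1 ≤ j → j ≤ 2 * m - 1 →
      (n : ℝ)⁻¹ * ∑ i, x i ^ j = ∫ t, t ^ j ∂σ) :
    1 / min (lam ⟨0, by omega⟩) (lam ⟨m - 1, by omega⟩) ≤ (n : ℝ) := by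
  have hmom : ∀ j : ℕ, 1 ≤ j → j ≤ 2 * m - 1 →
      (n : ℝ)⁻¹ * ∑ i, x i ^ j = ∑ i, lam i * ξ i ^ j := by
    intro j h1 h2
    rw [hquad j h1 h2, ← hgauss j h2]
  have hfirst : 1 / lam ⟨0, by omega⟩ ≤ (n : ℝ) := by
    refine bernstein_side hm hn ξ lam x hlam hlsum hmom ⟨0, by omega⟩ 1 (Or.inl rfl) ?_
    intro i hi
    rw [one_mul, sub_pos]
    refine hξ ?_
    have h3 : (i : ℕ) ≠ 0 := fun h => hi (Fin.ext h)
    have h4 : ((⟨0, by omega⟩ : Fin m) : ℕ) = 0 := rfl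
    exact Fin.lt_def.mpr (by omega)
  have hlast : 1 / lam ⟨m - 1, by omega⟩ ≤ (n : ℝ) := by
    refine bernstein_side hm hn ξ lam x hlam hlsum hmom ⟨m - 1, by omega⟩ (-1) (Or.inr rfl) ?_
    intro i hi
    have h1 : ξ i < ξ ⟨m - 1, by omega⟩ := by
      refine hξ ?_
      have h2 : (i : ℕ) ≠ m - 1 := fun h => hi (Fin.ext h)
      have h5 := i.isLt
      have h4 : ((⟨m - 1, by omega⟩ : Fin m) : ℕ) = m - 1 := rfl
      exact Fin.lt_def.mpr (by omega)
    nlinarith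
  rcases le_total (lam ⟨0, by omega⟩) (lam ⟨m - 1, by omega⟩) with h | h
  · rw [min_eq_left h]; exact hfirst
  · rw [min_eq_right h]; exact hlast
end

section
/- Let σ be a probability measure on ℝ with σ([0,1]) = 1, absolutely continuous with respect to Lebesgue measure with density essentially bounded by M. Let m ≥ 1, suppose ξ₁ < ξ₂ < … < ξ_m are real numbers and λ₁,…,λ_m > 0 satisfy ∑_{i=1}^m λ_i = 1 and ∑_{i=1}^m λ_i·ξ_i^j = ∫ x^j dσ(x) for all integers 0 ≤ j ≤ 2m−1 (the Gaussian quadrature for σ). Then λ₁ ≥ 1/⌈75·e⁴·(2m−1)·M·(12eM)^{2m−2}⌉. -/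
open MeasureTheory
open scoped ENNReal
open Finset Polynomial

section Quantile
variable {E : Set ℝ}

lemma vol_E_fin (hE : E ⊆ Set.Icc (0:ℝ) 1) : volume E ≠ ∞ := by
  refine ne_top_of_le_ne_top ?_ (measure_mono hE)
  simp [Real.volume_Icc]

lemma g_mono (hE : E ⊆ Set.Icc (0:ℝ) 1) :
    Monotone (fun y => (volume (E ∩ Set.Iic y)).toReal) := by
  intro a b hab
  have h1 : volume (E ∩ Set.Iic a) ≤ volume (E ∩ Set.Iic b) :=
    measure_mono (Set.inter_subset_inter_right _ (Set.Iic_subset_Iic.mpr hab))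
  exact ENNReal.toReal_mono (ne_top_of_le_ne_top (vol_E_fin hE)
    (measure_mono Set.inter_subset_left)) h1

lemma g_diff (hEm : MeasurableSet E) (hE : E ⊆ Set.Icc (0:ℝ) 1) {a b : ℝ} (hab : a ≤ b) :
    (volume (E ∩ Set.Iic b)).toReal - (volume (E ∩ Set.Iic a)).toReal
      = (volume (E ∩ Set.Ioc a b)).toReal := by
  have hsplit : E ∩ Set.Iic b = (E ∩ Set.Iic a) ∪ (E ∩ Set.Ioc a b) := by
    rw [← Set.inter_union_distrib_left]
    congr 1
    rw [Set.Iic_union_Ioc_eq_Iic hab]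
  have hdisj : Disjoint (E ∩ Set.Iic a) (E ∩ Set.Ioc a b) := by
    refine Set.disjoint_left.mpr fun x hx hx' => ?_
    exact absurd hx'.2.1 (not_lt.mpr hx.2)
  have : volume (E ∩ Set.Iic a ∪ E ∩ Set.Ioc a b) = volume (E ∩ Set.Iic a) + volume (E ∩ Set.Ioc a b) := measure_union hdisj (hEm.inter measurableSet_Ioc)
  rw [hsplit, this, ENNReal.toReal_add
    (ne_top_of_le_ne_top (vol_E_fin hE) (measure_mono Set.inter_subset_left))
    (ne_top_of_le_ne_top (vol_E_fin hE) (measure_mono Set.inter_subset_left))]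
  ring

lemma g_lip (hEm : MeasurableSet E) (hE : E ⊆ Set.Icc (0:ℝ) 1) {a b : ℝ} (hab : a ≤ b) :
    (volume (E ∩ Set.Iic b)).toReal - (volume (E ∩ Set.Iic a)).toReal ≤ b - a := by
  rw [g_diff hEm hE hab]
  have h1 : volume (E ∩ Set.Ioc a b) ≤ volume (Set.Ioc a b) :=
    measure_mono Set.inter_subset_right
  have h2 := ENNReal.toReal_mono (by simp [Real.volume_Ioc]) h1
  rw [Real.volume_Ioc, ENNReal.toReal_ofReal (by linarith)] at h2
  exact h2

lemma g_cont (hEm : MeasurableSet E) (hE : E ⊆ Set.Icc (0:ℝ) 1) :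
    Continuous (fun y => (volume (E ∩ Set.Iic y)).toReal) := by
  refine (LipschitzWith.of_dist_le_mul (K := 1) fun x y => ?_).continuous
  rw [Real.dist_eq, Real.dist_eq, NNReal.coe_one, one_mul, abs_sub_le_iff]
  rcases le_total x y with h | h
  · constructor
    · have := g_lip hEm hE h
      have := g_mono hE h
      nlinarith [abs_nonneg (x - y), le_abs_self (x - y), neg_abs_le (x - y)]
    · have := g_lip hEm hE h
      nlinarith [neg_abs_le (x - y)]
  · constructor
    · have := g_lip hEm hE h
      nlinarith [le_abs_self (x - y)]
    · have := g_mono hE h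
      nlinarith [abs_nonneg (x - y)]

lemma quantile_select (hEm : MeasurableSet E) (hE : E ⊆ Set.Icc (0:ℝ) 1)
    {a b : ℝ} (ha : 0 ≤ a) (hab : a < b) (hb : b ≤ (volume E).toReal) :
    ∃ x ∈ E, a ≤ (volume (E ∩ Set.Iic x)).toReal ∧ (volume (E ∩ Set.Iic x)).toReal ≤ b := by
  set g : ℝ → ℝ := fun y => (volume (E ∩ Set.Iic y)).toReal with hg
  have hg0 : g 0 = 0 := by
    have : E ∩ Set.Iic 0 ⊆ {0} := fun x hx => le_antisymm hx.2 (hE hx.1).1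
    have h2 := measure_mono_null this Real.volume_singleton
    show (volume (E ∩ Set.Iic 0)).toReal = 0
    simp [h2]
  have hg1 : g 1 = (volume E).toReal := by
    have : E ∩ Set.Iic 1 = E := Set.inter_eq_left.mpr fun x hx => (hE hx).2
    simp [hg, this]
  have hcont := g_cont hEm hE
  have hmono := g_mono hE
  -- the quantile function
  have key : ∀ c : ℝ, 0 ≤ c → c ≤ (volume E).toReal → ∃ u : ℝ, g u = c ∧
      ∀ y, g y < c → y ≤ u := by
    intro c hc0 hc1
    set S : Set ℝ := {y ∈ Set.Icc (0:ℝ) 1 | c ≤ g y} with hS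
    have hSne : S.Nonempty := ⟨1, by simp [hS, hg1, hc1]⟩
    have hSbdd : BddBelow S := ⟨0, fun y hy => hy.1.1⟩
    have hSclosed : IsClosed S := by
      have : S = Set.Icc (0:ℝ) 1 ∩ {y | c ≤ g y} := rfl
      rw [this]
      exact isClosed_Icc.inter (isClosed_le continuous_const hcont)
    set u := sInf S with hu
    have huS : u ∈ S := hSclosed.csInf_mem hSne hSbdd
    refine ⟨u, le_antisymm ?_ huS.2, ?_⟩
    · -- g u ≤ c
      rcases eq_or_lt_of_le huS.1.1 with h0 | h0
      · -- u = 0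
        rw [← h0, hg0]; exact hc0
      · -- u > 0 : left limit
        have hten : Filter.Tendsto g (nhdsWithin u (Set.Iio u)) (nhds (g u)) :=
          (Continuous.continuousWithinAt hcont).tendsto
        refine le_of_tendsto hten ?_
        filter_upwards [self_mem_nhdsWithin] with y (hy : y ∈ Set.Iio u)
        by_cases hy0 : y < 0
        · calc g y ≤ g 0 := hmono hy0.le
            _ = 0 := hg0
            _ ≤ c := hc0
        · push_neg at hy0
          by_contra hcon
          push_neg at hcon
          have hyS : y ∈ S := ⟨⟨hy0, le_trans (le_of_lt hy) huS.1.2⟩, hcon.le⟩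
          exact absurd (csInf_le hSbdd hyS) (not_le.mpr hy)
    · intro y hy
      by_contra hcon
      push_neg at hcon
      have := hmono (le_of_lt hcon)
      have : c ≤ g y := le_trans huS.2 this
      linarith
  obtain ⟨ua, hua, hua2⟩ := key a ha (le_trans hab.le hb)
  obtain ⟨ub, hub, hub2⟩ := key b (le_trans ha hab.le) hb
  have huab : ua ≤ ub := hub2 ua (by rw [hua]; exact hab)
  have hpos : 0 < (volume (E ∩ Set.Ioc ua ub)).toReal := by
    have h := g_diff hEm hE huab
    have e1 : (volume (E ∩ Set.Iic ub)).toReal = g ub := rfl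
    have e2 : (volume (E ∩ Set.Iic ua)).toReal = g ua := rfl
    rw [e1, e2, hua, hub] at h
    linarith
  have hne : (E ∩ Set.Ioc ua ub).Nonempty := by
    by_contra hcon
    rw [Set.not_nonempty_iff_eq_empty] at hcon
    rw [hcon] at hpos
    simp at hpos
  obtain ⟨x, hxE, hxa, hxb⟩ := hne
  refine ⟨x, hxE, ?_, ?_⟩
  · rw [← hua]; exact hmono hxa.le
  · rw [← hub]; exact hmono hxb
end Quantile

lemma prod_abs_sub_factorial (d k : ℕ) (hk : k ≤ d) :
    ∏ j ∈ (Finset.range (d+1)).erase k, |(k:ℝ) - (j:ℝ)|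
      = (Nat.factorial k : ℝ) * (Nat.factorial (d - k) : ℝ) := by
  have hsplit : (Finset.range (d+1)).erase k = Finset.range k ∪ Finset.Ico (k+1) (d+1) := by
    ext j
    simp only [mem_erase, mem_range, mem_union, mem_Ico]
    omega
  have hdisj : Disjoint (Finset.range k) (Finset.Ico (k+1) (d+1)) := by
    rw [Finset.disjoint_left]
    intro j hj hj'
    simp only [mem_range] at hj
    simp only [mem_Ico] at hj'
    omega
  rw [hsplit, Finset.prod_union hdisj]
  have h1 : ∏ j ∈ Finset.range k, |(k:ℝ) - (j:ℝ)| = (Nat.factorial k : ℝ) := by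
    have : ∀ j ∈ Finset.range k, |(k:ℝ) - (j:ℝ)| = ((k - j : ℕ) : ℝ) := by
      intro j hj
      rw [mem_range] at hj
      rw [Nat.cast_sub hj.le, abs_of_nonneg (by
        have : (j:ℝ) ≤ k := Nat.cast_le.mpr hj.le
        linarith)]
    rw [Finset.prod_congr rfl this, ← Nat.cast_prod]
    congr 1
    rw [← Finset.prod_range_reflect (fun i => k - i) k]
    have : ∀ j ∈ Finset.range k, k - (k - 1 - j) = j + 1 := by intro j hj; rw [mem_range] at hj; omega
    rw [Finset.prod_congr rfl this]
    exact Finset.prod_range_add_one_eq_factorial k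
  have h2 : ∏ j ∈ Finset.Ico (k+1) (d+1), |(k:ℝ) - (j:ℝ)| = (Nat.factorial (d - k) : ℝ) := by
    have : ∀ j ∈ Finset.Ico (k+1) (d+1), |(k:ℝ) - (j:ℝ)| = ((j - k : ℕ) : ℝ) := by
      intro j hj
      rw [mem_Ico] at hj
      rw [abs_sub_comm, Nat.cast_sub (by omega), abs_of_nonneg (by
        have : (k:ℝ) ≤ j := Nat.cast_le.mpr (by omega)
        linarith)]
    rw [Finset.prod_congr rfl this, ← Nat.cast_prod]
    congr 1
    rw [Finset.prod_Ico_eq_prod_range]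
    have : ∀ j ∈ Finset.range (d + 1 - (k+1)), (k + 1 + j) - k = j + 1 := by intro j _; omega
    rw [Finset.prod_congr rfl this]
    have : d + 1 - (k + 1) = d - k := by omega
    rw [this]
    exact Finset.prod_range_add_one_eq_factorial (d - k)
  rw [h1, h2]

lemma pow_self_le_factorial_mul_exp (d : ℕ) :
    (d:ℝ) ^ d ≤ (Nat.factorial d : ℝ) * Real.exp 1 ^ d := by
  induction d with
  | zero => simp
  | succ n ih =>
    rcases Nat.eq_zero_or_pos n with rfl | hn
    · simp [Nat.factorial]
    · have hn' : (0:ℝ) < n := by exact_mod_cast hn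
      have key : ((n:ℝ) + 1) ^ n ≤ (n:ℝ) ^ n * Real.exp 1 := by
        have h1 : (1 + 1/(n:ℝ)) ≤ Real.exp (1/(n:ℝ)) := by
          have := Real.add_one_le_exp (1/(n:ℝ)); linarith
        have h2 : (1 + 1/(n:ℝ)) ^ n ≤ Real.exp (1/(n:ℝ)) ^ n :=
          pow_le_pow_left₀ (by positivity) h1 n
        rw [← Real.exp_nat_mul] at h2
        have h3 : (n:ℝ) * (1/(n:ℝ)) = 1 := by field_simp
        rw [h3] at h2
        have h4 : ((n:ℝ) + 1) ^ n = (n:ℝ) ^ n * (1 + 1/(n:ℝ)) ^ n := by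
          rw [← mul_pow]; congr 1; field_simp
        rw [h4]
        exact mul_le_mul_of_nonneg_left h2 (by positivity)
      have : ((n:ℝ) + 1) ^ (n + 1) = ((n:ℝ) + 1) * ((n:ℝ)+1) ^ n := by ring
      rw [Nat.cast_succ, this, Nat.factorial_succ]
      push_cast
      calc ((n:ℝ) + 1) * ((n:ℝ)+1) ^ n ≤ ((n:ℝ) + 1) * ((n:ℝ) ^ n * Real.exp 1) :=
            mul_le_mul_of_nonneg_left key (by positivity)
        _ ≤ ((n:ℝ) + 1) * ((Nat.factorial n : ℝ) * Real.exp 1 ^ n * Real.exp 1) := by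
            refine mul_le_mul_of_nonneg_left ?_ (by positivity)
            exact mul_le_mul_of_nonneg_right ih (Real.exp_pos 1).le
        _ = ((n:ℝ) + 1) * (Nat.factorial n : ℝ) * (Real.exp 1 ^ n * Real.exp 1) := by ring
        _ = ((n:ℝ) + 1) * (Nat.factorial n : ℝ) * Real.exp 1 ^ (n+1) := by rw [pow_succ]

lemma lagrange_coeff_id {d : ℕ} (y : ℕ → ℝ) (hy : Set.InjOn y (Finset.range (d+1)))
    (Q : Polynomial ℝ) (hQ : Q.Monic) (hdeg : Q.natDegree = d) :
    ∑ k ∈ Finset.range (d+1), Q.eval (y k) * ∏ j ∈ (Finset.range (d+1)).erase k, (y k - y j)⁻¹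
      = 1 := by
  have hcard : #(Finset.range (d+1)) = d + 1 := Finset.card_range _
  have hdlt : Q.degree < #(Finset.range (d+1)) := by
    rw [hcard, degree_eq_natDegree hQ.ne_zero, hdeg]
    exact_mod_cast Nat.lt_succ_self d
  have h := Lagrange.eq_interpolate hy hdlt
  have h2 := congrArg (fun p => Polynomial.coeff p d) h
  simp only [Lagrange.interpolate_apply] at h2
  rw [Polynomial.finset_sum_coeff] at h2
  have hco : Q.coeff d = 1 := by rw [← hdeg]; exact hQ.coeff_natDegree
  rw [hco] at h2
  rw [h2]
  refine Finset.sum_congr rfl fun k hk => ?_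
  rw [Polynomial.coeff_C_mul]
  congr 1
  have hnd : (Lagrange.basis (Finset.range (d+1)) y k).natDegree = d := by
    rw [Lagrange.natDegree_basis hy hk, hcard]; omega
  have hlc : (Lagrange.basis (Finset.range (d+1)) y k).coeff d
      = (Lagrange.basis (Finset.range (d+1)) y k).leadingCoeff := by
    rw [Polynomial.leadingCoeff, hnd]
  rw [hlc]
  rw [Lagrange.basis, Polynomial.leadingCoeff_prod]
  refine Finset.prod_congr rfl fun j hj => ?_
  have hne : y k ≠ y j := by
    rcases Finset.mem_erase.mp hj with ⟨hjk, hjs⟩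
    exact fun hE => hjk.symm (hy hk hjs hE)
  rw [Lagrange.basisDivisor, Polynomial.leadingCoeff_mul, Polynomial.leadingCoeff_C,
    (Polynomial.monic_X_sub_C (y j)).leadingCoeff, mul_one]

lemma sublevel_measure_le (Q : Polynomial ℝ) (hQ : Q.Monic) {d : ℕ} (hdeg : Q.natDegree = d)
    (hd : 1 ≤ d) {ε : ℝ} (hε : 0 < ε) {E : Set ℝ} (hEm : MeasurableSet E)
    (hE : E ⊆ Set.Icc (0:ℝ) 1) (hsub : ∀ x ∈ E, |Q.eval x| ≤ ε ^ d) :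
    (volume E).toReal ≤ 6 * Real.exp 1 * ε := by
  set μ := (volume E).toReal with hμdef
  have hμ0 : 0 ≤ μ := ENNReal.toReal_nonneg
  rcases eq_or_lt_of_le hμ0 with hμ | hμ
  · rw [← hμ]; positivity
  set g : ℝ → ℝ := fun y => (volume (E ∩ Set.Iic y)).toReal with hgdef
  set θ : ℝ := μ / (2*d+1) with hθdef
  have hθ : 0 < θ := by
    apply div_pos hμ
    positivity
  -- select points
  have hsel : ∀ k : ℕ, ∃ x, x ∈ E ∧ 2*(min k d : ℝ)*θ ≤ g x ∧ g x ≤ (2*(min k d : ℝ)+1)*θ := by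
    intro k
    have hmkd : (min k d : ℝ) ≤ d := by exact_mod_cast Nat.cast_le.mpr (min_le_right k d)
    have hb : (2*(min k d:ℝ)+1)*θ ≤ μ := by
      have h1 : (2*(min k d:ℝ)+1) ≤ 2*(d:ℝ)+1 := by linarith
      have h2 : (2*(min k d:ℝ)+1)*θ ≤ (2*(d:ℝ)+1)*θ := mul_le_mul_of_nonneg_right h1 hθ.le
      rw [hθdef] at h2 ⊢
      calc (2*(min k d:ℝ)+1) * (μ / (2*d+1)) ≤ (2*(d:ℝ)+1) * (μ / (2*d+1)) := h2
        _ = μ := by field_simp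
    have ha : (0:ℝ) ≤ 2*(min k d : ℝ)*θ := by positivity
    have hab : 2*(min k d : ℝ)*θ < (2*(min k d:ℝ)+1)*θ := by nlinarith
    obtain ⟨x, hx, h1, h2⟩ := quantile_select hEm hE ha hab hb
    exact ⟨x, hx, h1, h2⟩
  choose y hyE hy1 hy2 using hsel
  -- separation
  have hsep : ∀ j k : ℕ, j ≤ d → k ≤ d → j < k → ((k:ℝ) - j)*θ ≤ y k - y j := by
    intro j k hjd hkd hjk
    have hj : min (j:ℝ) (d:ℝ) = j := min_eq_left (by exact_mod_cast hjd)
    have hk : min (k:ℝ) (d:ℝ) = k := min_eq_left (by exact_mod_cast hkd)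
    have h1 := hy1 k; have h2 := hy2 j
    rw [hk] at h1; rw [hj] at h2
    have hcast : (j:ℝ) + 1 ≤ (k:ℝ) := by exact_mod_cast Nat.cast_le.mpr hjk
    have hgap : ((k:ℝ) - j)*θ ≤ g (y k) - g (y j) := by nlinarith
    have hyjk : y j ≤ y k := by
      by_contra hcon
      push_neg at hcon
      have := g_mono hE hcon.le
      have : g (y k) ≤ g (y j) := this
      nlinarith
    have hlip := g_lip hEm hE hyjk
    have e1 : (volume (E ∩ Set.Iic (y k))).toReal = g (y k) := rfl
    have e2 : (volume (E ∩ Set.Iic (y j))).toReal = g (y j) := rfl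
    rw [e1, e2] at hlip
    linarith
  have hsep' : ∀ j k : ℕ, j ≤ d → k ≤ d → j ≠ k → |(k:ℝ) - (j:ℝ)| * θ ≤ |y k - y j| := by
    intro j k hjd hkd hjk
    rcases lt_or_gt_of_ne hjk with h | h
    · have := hsep j k hjd hkd h
      have hc : (j:ℝ) < k := by exact_mod_cast h
      rw [abs_of_nonneg (by linarith), abs_of_nonneg (by nlinarith)]
      exact this
    · have := hsep k j hkd hjd h
      have hc : (k:ℝ) < j := by exact_mod_cast h
      rw [abs_of_nonpos (by linarith), abs_of_nonpos (by nlinarith)]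
      linarith
  have hinj : Set.InjOn y (Finset.range (d+1)) := by
    intro a ha b hb hab
    simp only [coe_range, Set.mem_Iio] at ha hb
    by_contra hne
    have := hsep' a b (by omega) (by omega) hne
    rw [hab, sub_self, abs_zero] at this
    have habs : 0 < |(b:ℝ) - a| := by
      rw [abs_pos, sub_ne_zero]
      intro hcast
      exact hne (Nat.cast_injective hcast.symm : a = b)
    nlinarith
  have hid := lagrange_coeff_id y hinj Q hQ hdeg
  -- bound each term
  have hterm : ∀ k ∈ Finset.range (d+1),
      Q.eval (y k) * ∏ j ∈ (Finset.range (d+1)).erase k, (y k - y j)⁻¹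
        ≤ ε^d * (θ^d * ((Nat.factorial k : ℝ) * (Nat.factorial (d-k) : ℝ)))⁻¹ := by
    intro k hk
    rw [mem_range] at hk
    have hkd : k ≤ d := by omega
    calc Q.eval (y k) * ∏ j ∈ (Finset.range (d+1)).erase k, (y k - y j)⁻¹
        ≤ |Q.eval (y k) * ∏ j ∈ (Finset.range (d+1)).erase k, (y k - y j)⁻¹| := le_abs_self _
      _ = |Q.eval (y k)| * ∏ j ∈ (Finset.range (d+1)).erase k, |y k - y j|⁻¹ := by
          rw [abs_mul, Finset.abs_prod]
          congr 1
          exact Finset.prod_congr rfl fun j _ => abs_inv _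
      _ ≤ ε^d * ∏ j ∈ (Finset.range (d+1)).erase k, (|(k:ℝ) - (j:ℝ)| * θ)⁻¹ := by
          refine mul_le_mul (hsub _ (hyE k)) ?_ ?_ (by positivity)
          · refine Finset.prod_le_prod ?_ ?_
            · intro j _; positivity
            · intro j hj
              rw [mem_erase, mem_range] at hj
              have hjd : j ≤ d := by omega
              have hjk : j ≠ k := hj.1
              have h := hsep' j k hjd hkd (fun hh => hjk hh)
              have hpos : 0 < |(k:ℝ) - (j:ℝ)| * θ := by
                have : 0 < |(k:ℝ) - (j:ℝ)| := by
                  rw [abs_pos, sub_ne_zero]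
                  intro hcast
                  exact hjk (Nat.cast_injective hcast.symm : j = k)
                positivity
              exact inv_anti₀ hpos h
          · positivity
      _ = ε^d * (θ^d * ((Nat.factorial k : ℝ) * (Nat.factorial (d-k) : ℝ)))⁻¹ := by
          congr 1
          have hpi : ∏ j ∈ (Finset.range (d+1)).erase k, (|(k:ℝ) - (j:ℝ)| * θ)⁻¹
              = (∏ j ∈ (Finset.range (d+1)).erase k, (|(k:ℝ) - (j:ℝ)| * θ))⁻¹ := by
            rw [Finset.prod_inv_distrib]
          rw [hpi, Finset.prod_mul_distrib, Finset.prod_const,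
            Finset.card_erase_of_mem (by simp [mem_range]; omega), Finset.card_range,
            prod_abs_sub_factorial d k hkd]
          have : d + 1 - 1 = d := by omega
          rw [this]
          ring_nf
  -- sum the bounds
  have hsum := Finset.sum_le_sum hterm
  rw [hid] at hsum
  have hS : ∑ k ∈ Finset.range (d+1),
      ε^d * (θ^d * ((Nat.factorial k : ℝ) * (Nat.factorial (d-k) : ℝ)))⁻¹
      = ε^d * (θ^d)⁻¹ * ((2^d : ℝ) / (Nat.factorial d : ℝ)) := by
    have hterm2 : ∀ k ∈ Finset.range (d+1),
        ε^d * (θ^d * ((Nat.factorial k : ℝ) * (Nat.factorial (d-k) : ℝ)))⁻¹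
          = ε^d * (θ^d)⁻¹ * ((d.choose k : ℝ) / (Nat.factorial d : ℝ)) := by
      intro k hk
      rw [mem_range] at hk
      have hkd : k ≤ d := by omega
      have hch : ((d.choose k : ℝ)) * (Nat.factorial k : ℝ) * (Nat.factorial (d-k) : ℝ)
          = (Nat.factorial d : ℝ) := by
        exact_mod_cast Nat.choose_mul_factorial_mul_factorial hkd
      have hfk : (0:ℝ) < (Nat.factorial k : ℝ) := by exact_mod_cast Nat.factorial_pos k
      have hfdk : (0:ℝ) < (Nat.factorial (d-k) : ℝ) := by exact_mod_cast Nat.factorial_pos (d-k)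
      have hfd : (0:ℝ) < (Nat.factorial d : ℝ) := by exact_mod_cast Nat.factorial_pos d
      have hθd : (0:ℝ) < θ^d := by positivity
      have hC : (0:ℝ) < (d.choose k : ℝ) := by exact_mod_cast Nat.choose_pos hkd
      rw [← hch]
      field_simp
    rw [Finset.sum_congr rfl hterm2, ← Finset.mul_sum, ← Finset.sum_div]
    have : ∑ k ∈ Finset.range (d+1), (d.choose k : ℝ) = (2:ℝ)^d := by
      rw [← Nat.cast_sum]
      rw [Nat.sum_range_choose]
      push_cast
      ring
    rw [this]
  rw [hS] at hsum
  have hfd : (0:ℝ) < (Nat.factorial d : ℝ) := by exact_mod_cast Nat.factorial_pos d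
  have hfact : (Nat.factorial d : ℝ) * θ^d ≤ ε^d * 2^d := by
    have h2 := mul_le_mul_of_nonneg_right hsum
      (le_of_lt (by positivity : (0:ℝ) < θ^d * (Nat.factorial d : ℝ)))
    have hθd : (0:ℝ) < θ^d := by positivity
    calc (Nat.factorial d : ℝ) * θ^d = 1 * (θ^d * (Nat.factorial d : ℝ)) := by ring
      _ ≤ ε^d * (θ^d)⁻¹ * (2^d / (Nat.factorial d : ℝ)) * (θ^d * (Nat.factorial d : ℝ)) := h2
      _ = ε^d * 2^d := by field_simp
  have hpow : ((d:ℝ) * θ)^d ≤ (2 * Real.exp 1 * ε)^d := by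
    have h1 := pow_self_le_factorial_mul_exp d
    have hθd : (0:ℝ) ≤ θ^d := by positivity
    have hed : (0:ℝ) < Real.exp 1 ^ d := by positivity
    calc ((d:ℝ) * θ)^d = (d:ℝ)^d * θ^d := by rw [mul_pow]
      _ ≤ ((Nat.factorial d : ℝ) * Real.exp 1 ^ d) * θ^d := mul_le_mul_of_nonneg_right h1 hθd
      _ = ((Nat.factorial d : ℝ) * θ^d) * Real.exp 1 ^ d := by ring
      _ ≤ (ε^d * 2^d) * Real.exp 1 ^ d := mul_le_mul_of_nonneg_right hfact hed.le
      _ = (2 * Real.exp 1 * ε)^d := by rw [mul_pow, mul_pow]; ring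
  have hdθ : (d:ℝ) * θ ≤ 2 * Real.exp 1 * ε := by
    have hd1 : (0:ℝ) ≤ (d:ℝ) * θ := by positivity
    have hd2 : (0:ℝ) ≤ 2 * Real.exp 1 * ε := by positivity
    exact (pow_le_pow_iff_left₀ hd1 hd2 (by omega)).mp hpow
  have hμθ : μ = (2*(d:ℝ)+1) * θ := by
    rw [hθdef]
    field_simp
  have hd1 : (1:ℝ) ≤ (d:ℝ) := by exact_mod_cast hd
  calc μ = (2*(d:ℝ)+1) * θ := hμθ
    _ ≤ 3*(d:ℝ) * θ := by nlinarith
    _ ≤ 3 * (2 * Real.exp 1 * ε) := by nlinarith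
    _ = 6 * Real.exp 1 * ε := by ring

lemma integrable_poly_eval (σ : Measure ℝ) [IsProbabilityMeasure σ]
    (hae : ∀ᵐ t ∂σ, t ∈ Set.Icc (0:ℝ) 1) (R : Polynomial ℝ) :
    Integrable (fun t => R.eval t) σ := by
  obtain ⟨C, hC⟩ := (isCompact_Icc (a := (0:ℝ)) (b := 1)).exists_bound_of_continuousOn
    R.continuous.continuousOn
  refine (integrable_const C).mono' (R.continuous.aestronglyMeasurable) ?_
  filter_upwards [hae] with t ht
  exact hC t ht

set_option maxHeartbeats 1000000 in
/-- For a probability measure `σ` on `[0,1]` with density essentially bounded by `M`, the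
smallest weight `λ₁` of its `m`-node Gaussian quadrature satisfies
`λ₁ ≥ 1/⌈75·e⁴·(2m−1)·M·(12eM)^(2m−2)⌉`. -/
theorem gaussian_quadrature_weight_lower_bound
    (σ : Measure ℝ) [IsProbabilityMeasure σ] (hσ : σ (Set.Icc (0 : ℝ) 1) = 1)
    (f : ℝ → ℝ≥0∞) (M : ℝ) (hd : σ = volume.withDensity f)
    (hM : ∀ᵐ x ∂volume, f x ≤ ENNReal.ofReal M)
    (m : ℕ) (hm : 1 ≤ m) (ξ lam : Fin m → ℝ)
    (hξ : StrictMono ξ) (hlam : ∀ i, 0 < lam i) (hlsum : ∑ i, lam i = 1)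
    (hgauss : ∀ j : ℕ, j ≤ 2 * m - 1 → ∑ i, lam i * ξ i ^ j = ∫ t, t ^ j ∂σ) :
    1 / (⌈75 * Real.exp 1 ^ 4 * (2 * (m : ℝ) - 1) * M *
        (12 * Real.exp 1 * M) ^ (2 * m - 2)⌉₊ : ℝ) ≤ lam ⟨0, by omega⟩ := by
  have he1 : (2:ℝ) ≤ Real.exp 1 := by
    have := Real.add_one_le_exp 1; linarith
  -- M ≥ 1
  have hM1 : (1:ℝ) ≤ M := by
    have h1 : σ (Set.Icc (0:ℝ) 1) ≤ ENNReal.ofReal M * volume (Set.Icc (0:ℝ) 1) := by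
      rw [hd, withDensity_apply f measurableSet_Icc]
      calc ∫⁻ x in Set.Icc (0:ℝ) 1, f x ∂volume
          ≤ ∫⁻ _ in Set.Icc (0:ℝ) 1, ENNReal.ofReal M ∂volume :=
            lintegral_mono_ae (ae_restrict_of_ae hM)
        _ = ENNReal.ofReal M * volume (Set.Icc (0:ℝ) 1) := by
            rw [setLIntegral_const]
    rw [hσ] at h1
    rw [Real.volume_Icc] at h1
    simp only [sub_zero, ENNReal.ofReal_one, mul_one] at h1
    rwa [ENNReal.one_le_ofReal] at h1
  have hMpos : (0:ℝ) < M := by linarith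
  -- sigma is supported on Icc 0 1
  have hcompl : σ (Set.Icc (0:ℝ) 1)ᶜ = 0 := by
    rw [measure_compl measurableSet_Icc (measure_ne_top σ _), hσ, measure_univ, tsub_self]
  have hae : ∀ᵐ t ∂σ, t ∈ Set.Icc (0:ℝ) 1 := by
    rw [ae_iff]
    convert hcompl using 2
    rfl
  -- quadrature for polynomials
  have hquad : ∀ R : Polynomial ℝ, R.natDegree ≤ 2*m-1 →
      ∑ i, lam i * R.eval (ξ i) = ∫ t, R.eval t ∂σ := by
    intro R hR
    have hRlt : R.natDegree < 2*m := by omega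
    have hev : ∀ x : ℝ, R.eval x = ∑ j ∈ Finset.range (2*m), R.coeff j * x ^ j :=
      fun x => Polynomial.eval_eq_sum_range' hRlt x
    have hint : ∀ j : ℕ, Integrable (fun t => R.coeff j * t ^ j) σ := by
      intro j
      have := integrable_poly_eval σ hae (Polynomial.C (R.coeff j) * Polynomial.X ^ j)
      simpa using this
    calc ∑ i, lam i * R.eval (ξ i)
        = ∑ i, ∑ j ∈ Finset.range (2*m), R.coeff j * (lam i * ξ i ^ j) := by
          refine Finset.sum_congr rfl fun i _ => ?_
          rw [hev (ξ i), Finset.mul_sum]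
          refine Finset.sum_congr rfl fun j _ => by ring
      _ = ∑ j ∈ Finset.range (2*m), R.coeff j * ∑ i, lam i * ξ i ^ j := by
          rw [Finset.sum_comm]
          exact Finset.sum_congr rfl fun j _ => by rw [Finset.mul_sum]
      _ = ∑ j ∈ Finset.range (2*m), R.coeff j * ∫ t, t ^ j ∂σ := by
          refine Finset.sum_congr rfl fun j hj => ?_
          rw [Finset.mem_range] at hj
          rw [hgauss j (by omega)]
      _ = ∑ j ∈ Finset.range (2*m), ∫ t, R.coeff j * t ^ j ∂σ := by
          refine Finset.sum_congr rfl fun j _ => ?_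
          rw [integral_const_mul]
      _ = ∫ t, ∑ j ∈ Finset.range (2*m), R.coeff j * t ^ j ∂σ := by
          rw [integral_finset_sum _ (fun j _ => hint j)]
      _ = ∫ t, R.eval t ∂σ := by
          refine integral_congr_ae (Filter.Eventually.of_forall fun t => ?_)
          simpa using (hev t).symm
  -- node bounds
  have hnode : ∀ k : Fin m, ξ k ∈ Set.Icc (0:ℝ) 1 := by
    intro k
    set Pk : Polynomial ℝ :=
      ∏ i ∈ Finset.univ.erase k, (Polynomial.X - Polynomial.C (ξ i))^2 with hPk
    have hPkdeg : Pk.natDegree ≤ 2*(m-1) := by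
      refine le_trans (Polynomial.natDegree_prod_le _ _) ?_
      have : ∀ i ∈ Finset.univ.erase k,
          ((Polynomial.X - Polynomial.C (ξ i))^2).natDegree = 2 := by
        intro i _
        rw [Polynomial.natDegree_pow, Polynomial.natDegree_X_sub_C]
      rw [Finset.sum_congr rfl this, Finset.sum_const, Finset.card_erase_of_mem
        (Finset.mem_univ k), Finset.card_univ, Fintype.card_fin, smul_eq_mul]
      omega
    have hPkeval : ∀ t : ℝ, Pk.eval t = ∏ i ∈ Finset.univ.erase k, (t - ξ i)^2 := by
      intro t
      rw [hPk, Polynomial.eval_prod]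
      exact Finset.prod_congr rfl fun i _ => by simp
    have hPknonneg : ∀ t : ℝ, 0 ≤ Pk.eval t := by
      intro t
      rw [hPkeval]
      exact Finset.prod_nonneg fun i _ => sq_nonneg _
    have hPkpos : 0 < Pk.eval (ξ k) := by
      rw [hPkeval]
      refine Finset.prod_pos fun i hi => ?_
      have : ξ i ≠ ξ k := fun h => (Finset.mem_erase.mp hi).1 (hξ.injective h)
      have : ξ k - ξ i ≠ 0 := sub_ne_zero.mpr (Ne.symm this)
      positivity
    have hPkzero : ∀ i : Fin m, i ≠ k → Pk.eval (ξ i) = 0 := by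
      intro i hi
      rw [hPkeval]
      refine Finset.prod_eq_zero (Finset.mem_erase.mpr ⟨hi, Finset.mem_univ i⟩) ?_
      simp
    have key : ∀ L : Polynomial ℝ, L.natDegree ≤ 1 →
        (∀ t ∈ Set.Icc (0:ℝ) 1, 0 ≤ L.eval t) → 0 ≤ L.eval (ξ k) := by
      intro L hL hLnn
      have hdeg : (L * Pk).natDegree ≤ 2*m-1 := by
        refine le_trans (Polynomial.natDegree_mul_le) ?_
        omega
      have hq := hquad (L * Pk) hdeg
      have hsum : ∑ i, lam i * (L * Pk).eval (ξ i) = lam k * (L.eval (ξ k) * Pk.eval (ξ k)) := by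
        rw [← Finset.sum_subset (Finset.subset_univ {k})]
        · rw [Finset.sum_singleton, Polynomial.eval_mul]
        · intro i _ hik
          rw [Finset.mem_singleton] at hik
          rw [Polynomial.eval_mul, hPkzero i hik, mul_zero, mul_zero]
      have hintnn : 0 ≤ ∫ t, (L * Pk).eval t ∂σ := by
        refine integral_nonneg_of_ae ?_
        filter_upwards [hae] with t ht
        rw [Polynomial.eval_mul]
        exact mul_nonneg (hLnn t ht) (hPknonneg t)
      rw [hsum] at hq
      have : 0 ≤ lam k * (L.eval (ξ k) * Pk.eval (ξ k)) := hq ▸ hintnn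
      nlinarith [this, mul_pos (hlam k) hPkpos]
    constructor
    · have := key Polynomial.X (by simp) (fun t ht => by simpa using ht.1)
      simpa using this
    · have := key (1 - Polynomial.X) (le_trans (Polynomial.natDegree_sub_le _ _) (by simp))
        (fun t ht => by simp [ht.2])
      have h2 : (1 - Polynomial.X : Polynomial ℝ).eval (ξ k) = 1 - ξ k := by simp
      rw [h2] at this
      linarith
  -- main argument
  set i0 : Fin m := ⟨0, by omega⟩ with hi0def
  set N : ℝ := 75 * Real.exp 1 ^ 4 * (2 * (m : ℝ) - 1) * M *
      (12 * Real.exp 1 * M) ^ (2 * m - 2) with hNdef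
  show 1 / (⌈N⌉₊ : ℝ) ≤ lam i0
  have hm1R : (1:ℝ) ≤ (m:ℝ) := by exact_mod_cast hm
  rcases eq_or_lt_of_le hm with hm1 | hm2
  · -- m = 1
    have hm1' : m = 1 := hm1.symm
    subst hm1'
    have hl1 : lam i0 = 1 := by
      rw [← hlsum, Fin.sum_univ_one]
      congr
    rw [hl1]
    rcases Nat.eq_zero_or_pos ⌈N⌉₊ with h0 | h1
    · rw [h0]; norm_num
    · have h1' : (1:ℝ) ≤ (⌈N⌉₊:ℝ) := by exact_mod_cast h1
      rw [div_le_one (by linarith)]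
      linarith
  · -- 2 ≤ m
    have hm2R : (2:ℝ) ≤ (m:ℝ) := by exact_mod_cast hm2
    set d : ℕ := m - 1 with hddef
    have hd1 : 1 ≤ d := by omega
    set Q : Polynomial ℝ := ∏ i ∈ Finset.univ.erase i0, (Polynomial.X - Polynomial.C (ξ i))
      with hQdef
    have hQm : Q.Monic :=
      Polynomial.monic_prod_of_monic _ _ fun i _ => Polynomial.monic_X_sub_C _
    have hQd : Q.natDegree = d := by
      rw [hQdef, Polynomial.natDegree_prod _ _ (fun i _ => Polynomial.X_sub_C_ne_zero _)]
      have : ∀ i ∈ Finset.univ.erase i0,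
          (Polynomial.X - Polynomial.C (ξ i)).natDegree = 1 :=
        fun i _ => Polynomial.natDegree_X_sub_C _
      rw [Finset.sum_congr rfl this, Finset.sum_const, Finset.card_erase_of_mem
        (Finset.mem_univ i0), Finset.card_univ, Fintype.card_fin, smul_eq_mul, mul_one]
    have hQeval : ∀ t : ℝ, Q.eval t = ∏ i ∈ Finset.univ.erase i0, (t - ξ i) := by
      intro t
      rw [hQdef, Polynomial.eval_prod]
      exact Finset.prod_congr rfl fun i _ => by simp
    have hQ2deg : (Q^2).natDegree ≤ 2*m-1 := by
      rw [Polynomial.natDegree_pow, hQd]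
      omega
    have hq := hquad (Q^2) hQ2deg
    set c : ℝ := (Q.eval (ξ i0))^2 with hcdef
    have hQeval0 : ∀ i : Fin m, i ≠ i0 → Q.eval (ξ i) = 0 := by
      intro i hi
      rw [hQeval]
      refine Finset.prod_eq_zero (Finset.mem_erase.mpr ⟨hi, Finset.mem_univ i⟩) ?_
      ring
    have hsum : ∑ i, lam i * (Q^2).eval (ξ i) = lam i0 * c := by
      rw [← Finset.sum_subset (Finset.subset_univ {i0})]
      · rw [Finset.sum_singleton, Polynomial.eval_pow, hcdef]
      · intro i _ hik
        rw [Finset.mem_singleton] at hik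
        rw [Polynomial.eval_pow, hQeval0 i hik]
        ring
    have hcpos : 0 < c := by
      have hne : Q.eval (ξ i0) ≠ 0 := by
        rw [hQeval]
        refine Finset.prod_ne_zero_iff.mpr fun i hi => ?_
        have : ξ i ≠ ξ i0 := fun h => (Finset.mem_erase.mp hi).1 (hξ.injective h)
        exact sub_ne_zero.mpr (Ne.symm this)
      rw [hcdef]
      positivity
    have hc1 : c ≤ 1 := by
      have habs : |Q.eval (ξ i0)| ≤ 1 := by
        rw [hQeval, Finset.abs_prod]
        refine Finset.prod_le_one (fun i _ => abs_nonneg _) fun i _ => ?_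
        have h1 := hnode i0
        have h2 := hnode i
        rw [abs_le]
        constructor <;> [linarith [h1.1, h2.2]; linarith [h1.2, h2.1]]
      calc c = |Q.eval (ξ i0)|^2 := by rw [hcdef, sq_abs]
        _ ≤ 1^2 := by nlinarith [abs_nonneg (Q.eval (ξ i0))]
        _ = 1 := one_pow 2
    set I : ℝ := ∫ t, (Q.eval t)^2 ∂σ with hIdef
    have hqI : lam i0 * c = I := by
      rw [← hsum, hq, hIdef]
      refine integral_congr_ae (Filter.Eventually.of_forall fun t => ?_)
      simp [Polynomial.eval_pow]
    -- sublevel set bound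
    set ε : ℝ := (12 * Real.exp 1 * M)⁻¹ with hεdef
    have hepos : 0 < Real.exp 1 := Real.exp_pos 1
    have hε : 0 < ε := by rw [hεdef]; positivity
    set E : Set ℝ := Set.Icc (0:ℝ) 1 ∩ {x | |Q.eval x| ≤ ε^d} with hEdef
    have hEm : MeasurableSet E :=
      measurableSet_Icc.inter ((isClosed_le Q.continuous.abs continuous_const).measurableSet)
    have hEsub : E ⊆ Set.Icc (0:ℝ) 1 := Set.inter_subset_left
    have hvol := sublevel_measure_le Q hQm hQd hd1 hε hEm hEsub (fun x hx => hx.2)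
    have hvol' : volume E ≤ ENNReal.ofReal (6 * Real.exp 1 * ε) := by
      rw [← ENNReal.ofReal_toReal (vol_E_fin hEsub)]
      exact ENNReal.ofReal_le_ofReal hvol
    have hσE : σ E ≤ ENNReal.ofReal (1/2) := by
      have h1 : σ E = ∫⁻ x in E, f x ∂volume := by rw [hd, withDensity_apply f hEm]
      have h2 : ∫⁻ x in E, f x ∂volume ≤ ENNReal.ofReal M * volume E := by
        calc ∫⁻ x in E, f x ∂volume ≤ ∫⁻ _ in E, ENNReal.ofReal M ∂volume :=
              lintegral_mono_ae (ae_restrict_of_ae hM)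
          _ = ENNReal.ofReal M * volume E := by rw [setLIntegral_const]
      have h3 : ENNReal.ofReal M * volume E ≤ ENNReal.ofReal M * ENNReal.ofReal (6 * Real.exp 1 * ε) :=
        mul_le_mul_right hvol' _
      have h4 : ENNReal.ofReal M * ENNReal.ofReal (6 * Real.exp 1 * ε) = ENNReal.ofReal (1/2) := by
        rw [← ENNReal.ofReal_mul (by linarith)]
        congr 1
        rw [hεdef]
        field_simp
        ring
      rw [h1]
      rw [h4] at h3
      exact le_trans h2 h3
    set S : Set ℝ := Set.Icc (0:ℝ) 1 \ E with hSdef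
    have hSm : MeasurableSet S := measurableSet_Icc.diff hEm
    have hσS : ENNReal.ofReal (1/2) ≤ σ S := by
      have hsub2 : Set.Icc (0:ℝ) 1 ⊆ E ∪ S := by
        intro x hx
        by_cases hxE : x ∈ E
        · exact Or.inl hxE
        · exact Or.inr ⟨hx, hxE⟩
      have h5 : σ (Set.Icc (0:ℝ) 1) ≤ σ E + σ S :=
        le_trans (measure_mono hsub2) (measure_union_le E S)
      rw [hσ] at h5
      have h6 : (1:ℝ≥0∞) - ENNReal.ofReal (1/2) ≤ σ S := by
        rw [tsub_le_iff_left]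
        exact le_trans h5 (add_le_add_left hσE _)
      have h7 : (1:ℝ≥0∞) - ENNReal.ofReal (1/2) = ENNReal.ofReal (1/2) := by
        rw [← ENNReal.ofReal_one, ← ENNReal.ofReal_sub _ (by norm_num)]
        norm_num
      rwa [h7] at h6
    have hσStoReal : (1/2:ℝ) ≤ (σ S).toReal := by
      have := ENNReal.toReal_mono (measure_ne_top σ S) hσS
      rwa [ENNReal.toReal_ofReal (by norm_num)] at this
    have hint2 : Integrable (fun t => (Q.eval t)^2) σ := by
      have := integrable_poly_eval σ hae (Q^2)
      simpa [Polynomial.eval_pow] using this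
    have hIlow : (ε^d)^2 * (1/2) ≤ I := by
      have hstep1 : ∫ t in S, (Q.eval t)^2 ∂σ ≤ I :=
        setIntegral_le_integral hint2 (Filter.Eventually.of_forall fun t => sq_nonneg _)
      have hstep2 : ∫ t in S, (ε^d)^2 ∂σ ≤ ∫ t in S, (Q.eval t)^2 ∂σ := by
        refine setIntegral_mono_on ((integrableOn_const_iff).mpr (Or.inr ?_))
          hint2.integrableOn hSm ?_
        · exact lt_of_le_of_lt (measure_mono Set.diff_subset) (by rw [hσ]; exact ENNReal.one_lt_top)
        · intro x hx
          have hxIcc := hx.1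
          have hxnE := hx.2
          have : ¬ |Q.eval x| ≤ ε^d := by
            intro hcon
            exact hxnE ⟨hxIcc, hcon⟩
          push_neg at this
          calc (ε^d)^2 ≤ |Q.eval x|^2 := by nlinarith [abs_nonneg (Q.eval x), pow_pos hε d]
            _ = (Q.eval x)^2 := sq_abs _
      have hstep3 : (ε^d)^2 * (1/2) ≤ ∫ t in S, (ε^d)^2 ∂σ := by
        rw [setIntegral_const, smul_eq_mul, measureReal_def]
        have := mul_le_mul_of_nonneg_left hσStoReal (le_of_lt (by positivity : (0:ℝ) < (ε^d)^2))
        linarith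
      linarith
    -- conclude
    have hlami0 : (ε^d)^2 * (1/2) ≤ lam i0 := by
      have h8 : lam i0 * c ≤ lam i0 * 1 :=
        mul_le_mul_of_nonneg_left hc1 (hlam i0).le
      rw [mul_one] at h8
      calc (ε^d)^2 * (1/2) ≤ I := hIlow
        _ = lam i0 * c := hqI.symm
        _ ≤ lam i0 := h8
    -- arithmetic
    set K : ℝ := (12 * Real.exp 1 * M) ^ (2 * m - 2) with hKdef
    have hKpos : 0 < K := by rw [hKdef]; positivity
    have hεK : (ε^d)^2 = K⁻¹ := by
      have hd2 : d*2 = 2*m-2 := by omega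
      rw [hεdef, ← pow_mul, inv_pow, hd2, hKdef]
    have h16 : (16:ℝ) ≤ Real.exp 1 ^ 4 := by
      calc (16:ℝ) = 2^4 := by norm_num
        _ ≤ Real.exp 1^4 := pow_le_pow_left₀ (by norm_num) he1 4
    have hcoef : (2:ℝ) ≤ 75 * Real.exp 1 ^ 4 * (2*(m:ℝ)-1) * M := by
      have hB : (3:ℝ) ≤ 2*(m:ℝ)-1 := by linarith
      have s1 : (75*16:ℝ) ≤ 75*Real.exp 1^4 := by linarith
      have s2 : ((75*16)*3 : ℝ) ≤ (75*Real.exp 1^4)*(2*(m:ℝ)-1) :=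
        mul_le_mul s1 hB (by norm_num) (by positivity)
      have s2nn : (0:ℝ) ≤ (75*Real.exp 1^4)*(2*(m:ℝ)-1) := le_trans (by norm_num) s2
      have s3 : (((75*16)*3)*1 : ℝ) ≤ ((75*Real.exp 1^4)*(2*(m:ℝ)-1))*M :=
        mul_le_mul s2 hM1 (by norm_num) s2nn
      nlinarith [s3]
    have h2K : 2 * K ≤ N := by
      rw [hNdef]
      nlinarith [hKpos, hcoef]
    have hNpos : 0 < N := by
      rw [hNdef]
      nlinarith [hKpos, hcoef]
    have hceil : N ≤ (⌈N⌉₊:ℝ) := Nat.le_ceil N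
    calc 1 / (⌈N⌉₊ : ℝ) ≤ 1 / N := one_div_le_one_div_of_le hNpos hceil
      _ ≤ 1 / (2*K) := one_div_le_one_div_of_le (by linarith [hKpos]) h2K
      _ = (ε^d)^2 * (1/2) := by rw [hεK]; field_simp
      _ ≤ lam i0 := hlami0
end

section
/- Let σ be a probability measure on ℝ with σ({0}) < 1, and let k ≥ 3 be an odd integer such that ∫|x|^k dσ(x) < ∞. Then every Chebyshev-type quadrature for σ of degree at least k with n nodes satisfies n ≥ (∫ x^k dσ(x))^{k−1} / (∫ x^{k−1} dσ(x))^{k}. In particular n⁰_σ(k) ≥ (∫ x^k dσ)^{k−1} / (∫ x^{k−1} dσ)^{k}. -/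
open MeasureTheory

lemma sum_pow_le_aux (n : ℕ) (hn : n ≠ 0) (a : Fin n → ℝ) (ha : ∀ i, 0 ≤ a i)
    (k : ℕ) (hk : 1 ≤ k) :
    (∑ i, a i ^ k) ^ (k - 1) ≤ (∑ i, a i ^ (k - 1)) ^ k := by
  have hne : (Finset.univ : Finset (Fin n)).Nonempty := by
    have : 0 < n := Nat.pos_of_ne_zero hn
    exact ⟨⟨0, this⟩, Finset.mem_univ _⟩
  obtain ⟨i0, -, hi0⟩ := Finset.exists_max_image Finset.univ a hne
  set B := ∑ i, a i ^ (k - 1) with hB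
  have hB0 : 0 ≤ B := Finset.sum_nonneg fun i _ => pow_nonneg (ha i) _
  have h1 : ∑ i, a i ^ k ≤ a i0 * B := by
    rw [hB, Finset.mul_sum]
    apply Finset.sum_le_sum
    intro i _
    have hpow : a i ^ k = a i * a i ^ (k - 1) := by
      conv_lhs => rw [show k = (k - 1) + 1 by omega]
      ring
    rw [hpow]
    exact mul_le_mul_of_nonneg_right (hi0 i (Finset.mem_univ i)) (pow_nonneg (ha i) _)
  have h2 : a i0 ^ (k - 1) ≤ B :=
    Finset.single_le_sum (fun i _ => pow_nonneg (ha i) _) (Finset.mem_univ i0)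
  have hS0 : 0 ≤ ∑ i, a i ^ k := Finset.sum_nonneg fun i _ => pow_nonneg (ha i) _
  calc (∑ i, a i ^ k) ^ (k - 1) ≤ (a i0 * B) ^ (k - 1) := pow_le_pow_left₀ hS0 h1 _
    _ = a i0 ^ (k - 1) * B ^ (k - 1) := mul_pow _ _ _
    _ ≤ B * B ^ (k - 1) := mul_le_mul_of_nonneg_right h2 (pow_nonneg hB0 _)
    _ = B ^ k := by rw [← pow_succ']; congr 1; omega

/-- Moment-based lower bound: if `σ` is a probability measure on `ℝ` with `σ({0}) < 1` and
`k ≥ 3` is odd with finite `k`-th absolute moment, then every Chebyshev-type quadrature for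
`σ` of degree at least `k` with `n` nodes satisfies
`n ≥ (∫x^k dσ)^(k−1) / (∫x^(k−1) dσ)^k`. -/
theorem moment_lower_bound
    (σ : Measure ℝ) [IsProbabilityMeasure σ] (h0 : σ {(0 : ℝ)} < 1)
    (k : ℕ) (hk : 3 ≤ k) (hodd : Odd k)
    (hint : Integrable (fun x => |x| ^ k) σ)
    (n : ℕ) (x : Fin n → ℝ)
    (hquad : ∀ j : ℕ, 1 ≤ j → j ≤ k → (n : ℝ)⁻¹ * ∑ i, x i ^ j = ∫ t, t ^ j ∂σ) :
    (∫ t, t ^ k ∂σ) ^ (k - 1) / (∫ t, t ^ (k - 1) ∂σ) ^ k ≤ (n : ℝ) := by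
  have hkm : Even (k - 1) := Nat.Odd.sub_odd hodd odd_one
  have h1 := hquad (k - 1) (by omega) (by omega)
  have h2 := hquad k (by omega) le_rfl
  rcases Nat.eq_zero_or_pos n with hn | hn
  · subst hn
    simp only [Nat.cast_zero, inv_zero, zero_mul] at h1
    rw [← h1, zero_pow (by omega : k ≠ 0), div_zero]
    simp
  · have hnR : (0 : ℝ) < n := by exact_mod_cast hn
    set a : Fin n → ℝ := fun i => |x i| with haa
    have ha : ∀ i, 0 ≤ a i := fun i => abs_nonneg _
    have hsum1 : ∑ i, x i ^ (k - 1) = ∑ i, a i ^ (k - 1) := by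
      apply Finset.sum_congr rfl
      intro i _
      exact (hkm.pow_abs _).symm
    have hM1 : 0 ≤ ∫ t, t ^ (k - 1) ∂σ := by
      rw [← h1, hsum1]
      have : 0 ≤ ∑ i, a i ^ (k - 1) := Finset.sum_nonneg fun i _ => pow_nonneg (ha i) _
      positivity
    rcases hM1.eq_or_lt with heq | hpos
    · rw [← heq, zero_pow (by omega : k ≠ 0), div_zero]
      exact hnR.le
    · rw [div_le_iff₀ (pow_pos hpos k)]
      have habs : |∫ t, t ^ k ∂σ| ≤ (n : ℝ)⁻¹ * ∑ i, a i ^ k := by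
        rw [← h2, abs_mul, abs_inv, abs_of_nonneg hnR.le]
        refine mul_le_mul_of_nonneg_left ?_ (by positivity)
        calc |∑ i, x i ^ k| ≤ ∑ i, |x i ^ k| := Finset.abs_sum_le_sum_abs _ _
          _ = ∑ i, a i ^ k := by
              apply Finset.sum_congr rfl
              intro i _
              rw [abs_pow]
      have hninv : (n : ℝ) * ((n : ℝ)⁻¹) ^ k = ((n : ℝ)⁻¹) ^ (k - 1) := by
        rw [show k = (k - 1) + 1 by omega, pow_succ]
        field_simp
        ring_nf
        congr 1
        omega
      calc (∫ t, t ^ k ∂σ) ^ (k - 1) = |∫ t, t ^ k ∂σ| ^ (k - 1) := (hkm.pow_abs _).symm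
        _ ≤ ((n : ℝ)⁻¹ * ∑ i, a i ^ k) ^ (k - 1) :=
            pow_le_pow_left₀ (abs_nonneg _) habs _
        _ = ((n : ℝ)⁻¹) ^ (k - 1) * (∑ i, a i ^ k) ^ (k - 1) := mul_pow _ _ _
        _ ≤ ((n : ℝ)⁻¹) ^ (k - 1) * (∑ i, a i ^ (k - 1)) ^ k := by
            refine mul_le_mul_of_nonneg_left ?_ (by positivity)
            exact sum_pow_le_aux n (by omega) a ha k (by omega)
        _ = (n : ℝ) * ((n : ℝ)⁻¹ * ∑ i, a i ^ (k - 1)) ^ k := by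
            rw [mul_pow, ← mul_assoc, hninv]
        _ = (n : ℝ) * (∫ t, t ^ (k - 1) ∂σ) ^ k := by rw [← hsum1, h1]
end

section
/- There exists a constant C > 0 such that for every odd integer k > C there exists a probability measure σ_k on ℝ with σ_k([0,1]) = 1, absolutely continuous with respect to Lebesgue measure with density essentially bounded above by C·k, such that every Chebyshev-type quadrature for σ_k of degree at least k with n nodes satisfies n ≥ (1/(2√k))·(e/2)^k; that is, n⁰_{σ_k}(k) ≥ (1/(2√k))·(e/2)^k. -/
open MeasureTheory
open scoped ENNReal NNReal

noncomputable section

namespace ELB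

def ww (k : ℕ) : ℝ := Real.sqrt k * (2 / Real.exp 1) ^ k
def eta (k : ℕ) : ℝ := ww k / k
def gam (k : ℕ) : ℝ := 1 / (k : ℝ) ^ 2

def fnn (k : ℕ) : ℝ → ℝ≥0 := fun t =>
  (Set.Ioc (0:ℝ) (eta k)).indicator (fun _ => (k : ℝ≥0)) t
  + (Set.Ioc (1/2:ℝ) 1).indicator (fun _ => Real.toNNReal (2 * (1 - ww k))) t

def sig (k : ℕ) : Measure ℝ := volume.withDensity (fun t => (fnn k t : ℝ≥0∞))

lemma measurable_fnn (k : ℕ) : Measurable (fnn k) :=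
  (measurable_const.indicator measurableSet_Ioc).add
    (measurable_const.indicator measurableSet_Ioc)

lemma exp_one_lt : Real.exp 1 < 2.72 :=
  lt_trans Real.exp_one_lt_d9 (by norm_num)

lemma exp_one_gt : (2.7 : ℝ) < Real.exp 1 :=
  lt_trans (by norm_num) Real.exp_one_gt_d9

lemma exp_one_pos : (0:ℝ) < Real.exp 1 := Real.exp_pos 1

lemma helper : ∀ k : ℕ, 200 ≤ k → 8 * (k:ℝ)^2 ≤ (27/20) ^ k := by
  intro k hk
  induction k, hk using Nat.le_induction with
  | base =>
      have h10 : (20:ℝ) ≤ (27/20)^10 := by norm_num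
      calc (8:ℝ) * (200:ℕ)^2 = 320000 := by norm_num
        _ ≤ (20:ℝ)^20 := by norm_num
        _ ≤ ((27/20:ℝ)^10)^20 := pow_le_pow_left₀ (by norm_num) h10 20
        _ = (27/20:ℝ)^200 := by rw [← pow_mul]
  | succ m hm ih =>
      have hm' : (200:ℝ) ≤ (m:ℝ) := by exact_mod_cast hm
      have h1 : 8 * ((m:ℝ)+1)^2 ≤ (27/20) * (8 * (m:ℝ)^2) := by nlinarith
      calc 8 * ((m+1:ℕ):ℝ)^2 = 8 * ((m:ℝ)+1)^2 := by push_cast; ring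
        _ ≤ (27/20) * (8 * (m:ℝ)^2) := h1
        _ ≤ (27/20) * (27/20)^m := by nlinarith
        _ = (27/20:ℝ)^(m+1) := by ring

section numeric

variable {k : ℕ} (hk : 200 ≤ k)

lemma K_pos (hk : 200 ≤ k) : (0:ℝ) < k := by
  have : (200:ℝ) ≤ k := by exact_mod_cast hk
  linarith

lemma K_ge (hk : 200 ≤ k) : (200:ℝ) ≤ k := by exact_mod_cast hk

lemma sqrtK_ge_one (hk : 200 ≤ k) : 1 ≤ Real.sqrt k :=
  Real.one_le_sqrt.2 (by linarith [K_ge hk])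

lemma sqrtK_le_K (hk : 200 ≤ k) : Real.sqrt k ≤ (k:ℝ) := by
  have h := K_ge hk
  calc Real.sqrt k ≤ Real.sqrt ((k:ℝ)^2) := Real.sqrt_le_sqrt (by nlinarith)
    _ = (k:ℝ) := Real.sqrt_sq (by linarith)

lemma w_pos (hk : 200 ≤ k) : 0 < ww k := by
  have h1 : (0:ℝ) < 2 / Real.exp 1 := by positivity
  have := sqrtK_ge_one hk
  have : (0:ℝ) < Real.sqrt k := by linarith
  exact mul_pos this (pow_pos h1 k)

/-- (E/2)^k dominates 8 K^2 -/
lemma pow_E2_big (hk : 200 ≤ k) : 8 * (k:ℝ)^2 ≤ (Real.exp 1 / 2) ^ k := by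
  refine (helper k hk).trans (pow_le_pow_left₀ (by norm_num) ?_ k)
  linarith [exp_one_gt]

lemma pow_E2_pos : (0:ℝ) < (Real.exp 1 / 2) ^ k := by positivity

lemma two_div_E_pow (k : ℕ) : (2 / Real.exp 1) ^ k = ((Real.exp 1 / 2) ^ k)⁻¹ := by
  rw [← inv_pow]
  congr 1
  rw [inv_div]

lemma w_le (hk : 200 ≤ k) : ww k ≤ 1 / (2 * k) := by
  have hK := K_ge hk
  have hKpos := K_pos hk
  have hs1 := sqrtK_ge_one hk
  have hsK := sqrtK_le_K hk
  have hpow := pow_E2_big hk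
  have hppos : (0:ℝ) < (Real.exp 1 / 2) ^ k := pow_E2_pos
  rw [ww, two_div_E_pow, ← div_eq_mul_inv,
    div_le_div_iff₀ hppos (by positivity)]
  nlinarith

end numeric

end ELB

namespace ELB
section numeric2

variable {k : ℕ}

lemma w_le_half (hk : 200 ≤ k) : ww k ≤ 1/2 := by
  have := w_le hk
  have hK := K_ge hk
  have h2 : 1/(2*(k:ℝ)) ≤ 1/2 := by
    rw [div_le_div_iff₀ (by linarith) (by norm_num)]
    linarith
  linarith

lemma eta_pos (hk : 200 ≤ k) : 0 < eta k := div_pos (w_pos hk) (K_pos hk)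

lemma gam_pos (hk : 200 ≤ k) : 0 < gam k := by
  have := K_pos hk; rw [gam]; positivity

lemma gam_le (hk : 200 ≤ k) : gam k ≤ 1/40000 := by
  have hK := K_ge hk
  rw [gam, div_le_div_iff₀ (by nlinarith) (by norm_num)]
  nlinarith

lemma k_mul_eta (hk : 200 ≤ k) : (k:ℝ) * eta k = ww k := by
  rw [eta, mul_div_cancel₀]
  exact ne_of_gt (K_pos hk)

lemma eta_le_half_gam (hk : 200 ≤ k) : eta k ≤ gam k / 2 := by
  have hw := w_le hk
  have hK := K_pos hk
  rw [eta, gam, div_le_div_iff₀ hK (by norm_num : (0:ℝ) < 2)]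
  have h1 : ww k * 2 ≤ 1/(2*(k:ℝ)) * 2 := by linarith [w_le hk]
  have h2 : 1/(2*(k:ℝ)) * 2 = 1/(k:ℝ)^2 * k := by field_simp
  linarith

lemma eta_le_gam (hk : 200 ≤ k) : eta k ≤ gam k := by
  have := eta_le_half_gam hk
  have := gam_pos hk
  linarith

lemma eta_le_one (hk : 200 ≤ k) : eta k ≤ 1 := by
  have := eta_le_gam hk
  have := gam_le hk
  linarith

lemma one_sub_eta_pow (hk : 200 ≤ k) : (1:ℝ)/2 ≤ (1 - eta k)^(k-1) := by
  have h1 : (1:ℝ) + (k-1:ℕ) * (-(eta k)) ≤ (1 + (-(eta k)))^(k-1) :=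
    one_add_mul_le_pow (by
      have := eta_le_one hk
      have := eta_pos hk
      linarith) (k-1)
  have h2 : ((k-1:ℕ):ℝ) * eta k ≤ (k:ℝ) * eta k := by
    have : ((k-1:ℕ):ℝ) ≤ (k:ℝ) := by exact_mod_cast Nat.sub_le k 1
    have := eta_pos hk
    nlinarith
  have h3 : (k:ℝ) * eta k = ww k := k_mul_eta hk
  have h4 : ww k ≤ 1/2 := w_le_half hk
  have : (1:ℝ) - ((k-1:ℕ):ℝ) * eta k ≤ (1 - eta k)^(k-1) := by
    simpa [sub_eq_add_neg] using h1
  linarith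

lemma F5 (hk : 200 ≤ k) : 2*(1/2:ℝ)^k < ww k * (gam k / 2) * (1/2) := by
  have hK := K_ge hk
  have hs1 := sqrtK_ge_one hk
  have h4E : 8*(k:ℝ)^2 < (4/Real.exp 1)^k := by
    refine lt_of_le_of_lt (helper k hk) (pow_lt_pow_left₀ ?_ (by norm_num) ?_)
    · rw [div_lt_div_iff₀ (by norm_num) exp_one_pos]
      nlinarith [exp_one_lt]
    · omega
  have hsplit : (4/Real.exp 1)^k * (1/2:ℝ)^k = (2/Real.exp 1)^k := by
    rw [← mul_pow]; congr 1
    have := exp_one_pos; field_simp; ring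
  have key : 8*(k:ℝ)^2 * (1/2:ℝ)^k < Real.sqrt k * (2/Real.exp 1)^k := by
    have hp : (0:ℝ) < (1/2:ℝ)^k := by positivity
    calc 8*(k:ℝ)^2 * (1/2:ℝ)^k < (4/Real.exp 1)^k * (1/2:ℝ)^k :=
          mul_lt_mul_of_pos_right h4E hp
      _ = (2/Real.exp 1)^k := hsplit
      _ ≤ Real.sqrt k * (2/Real.exp 1)^k := by nlinarith [pow_pos (div_pos (by norm_num : (0:ℝ)<2) exp_one_pos) k]
  have hgam : ww k * (gam k / 2) * (1/2) = Real.sqrt k * (2/Real.exp 1)^k / (4*(k:ℝ)^2) := by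
    rw [ww, gam]; field_simp; ring
  have hK2 : (0:ℝ) < 4*(k:ℝ)^2 := by nlinarith [K_pos hk]
  rw [hgam, lt_div_iff₀ hK2]
  nlinarith [key]

end numeric2
end ELB

namespace ELB
section numeric3
variable {k : ℕ}

lemma sqrtK_pos (hk : 200 ≤ k) : 0 < Real.sqrt k :=
  lt_of_lt_of_le one_pos (sqrtK_ge_one hk)

/-- definition of the target bound -/
def NN (k : ℕ) : ℝ := 1/(2*Real.sqrt k) * (Real.exp 1 / 2)^k

lemma wN (hk : 200 ≤ k) : ww k * NN k = 1/2 := by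
  have hs : Real.sqrt k ≠ 0 := ne_of_gt (sqrtK_pos hk)
  have hp : ((Real.exp 1 / 2)^k : ℝ) ≠ 0 := ne_of_gt pow_E2_pos
  rw [ww, NN, two_div_E_pow]
  field_simp

lemma F6 (hk : 200 ≤ k) :
    (ww k + 2*(1/2:ℝ)^k) * NN k ≤ (1 - gam k)^(k-1) := by
  have hs1 := sqrtK_ge_one hk
  have hK := K_ge hk
  -- second term bound
  have h2N : 2*(1/2:ℝ)^k * NN k ≤ (7/10:ℝ)^k := by
    have heq : 2*(1/2:ℝ)^k * NN k = (1/2:ℝ)^k * (Real.exp 1/2)^k / Real.sqrt k := by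
      rw [NN]; field_simp
    have hE4 : (1/2:ℝ)^k * (Real.exp 1/2)^k = (Real.exp 1/4)^k := by
      rw [← mul_pow]; congr 1; ring
    have hle : (Real.exp 1/4 : ℝ) ≤ 7/10 := by nlinarith [exp_one_lt]
    have h1 : (Real.exp 1/4:ℝ)^k ≤ (7/10:ℝ)^k :=
      pow_le_pow_left₀ (by positivity) hle k
    rw [heq, hE4]
    calc (Real.exp 1/4:ℝ)^k / Real.sqrt k ≤ (Real.exp 1/4:ℝ)^k / 1 := by
          apply div_le_div_of_nonneg_left (by positivity) one_pos hs1
      _ = (Real.exp 1/4:ℝ)^k := by rw [div_one]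
      _ ≤ (7/10:ℝ)^k := h1
  have h7 : (7/10:ℝ)^k ≤ (7/10:ℝ)^3 :=
    pow_le_pow_of_le_one (by norm_num) (by norm_num) (by omega)
  -- RHS bound
  have hRHS : (0.99:ℝ) ≤ (1 - gam k)^(k-1) := by
    have hg := gam_pos hk
    have hgle := gam_le hk
    have h1 : (1:ℝ) + (k-1:ℕ) * (-(gam k)) ≤ (1 + (-(gam k)))^(k-1) :=
      one_add_mul_le_pow (by linarith) (k-1)
    have h2 : ((k-1:ℕ):ℝ) * gam k ≤ (k:ℝ) * gam k := by
      have : ((k-1:ℕ):ℝ) ≤ (k:ℝ) := by exact_mod_cast Nat.sub_le k 1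
      nlinarith
    have h3 : (k:ℝ) * gam k = 1/(k:ℝ) := by
      rw [gam]; field_simp
    have h4 : (1:ℝ)/(k:ℝ) ≤ 1/200 := by
      rw [div_le_div_iff₀ (K_pos hk) (by norm_num)]; linarith
    have h5 : (1:ℝ) - ((k-1:ℕ):ℝ) * gam k ≤ (1 - gam k)^(k-1) := by
      simpa [sub_eq_add_neg] using h1
    nlinarith
  have hw := wN hk
  have h343 : ((7:ℝ)/10)^3 ≤ 0.343 := by norm_num
  nlinarith [h2N, h7]

end numeric3
end ELB

namespace ELB
section measure
variable {k : ℕ}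

lemma coe_fnn (k : ℕ) : (fun t => ((fnn k t : ℝ≥0) : ℝ≥0∞)) = fun t =>
    (Set.Ioc (0:ℝ) (eta k)).indicator (fun _ => ((k:ℝ≥0) : ℝ≥0∞)) t
    + (Set.Ioc (1/2:ℝ) 1).indicator (fun _ => ENNReal.ofReal (2 * (1 - ww k))) t := by
  funext t
  simp only [fnn, Set.indicator_apply]
  split_ifs <;> simp [ENNReal.ofReal]

lemma lint_fnn (hk : 200 ≤ k) :
    ∫⁻ t, ((fnn k t : ℝ≥0) : ℝ≥0∞) ∂volume = 1 := by
  rw [coe_fnn]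
  rw [lintegral_add_left ((measurable_const.indicator measurableSet_Ioc))]
  rw [lintegral_indicator measurableSet_Ioc, lintegral_indicator measurableSet_Ioc]
  rw [setLIntegral_const, setLIntegral_const]
  rw [Real.volume_Ioc, Real.volume_Ioc]
  have he : 0 ≤ eta k := le_of_lt (eta_pos hk)
  have hw : ww k ≤ 1/2 := w_le_half hk
  have h1 : ((k:ℝ≥0) : ℝ≥0∞) = ENNReal.ofReal (k:ℝ) := by
    simp [ENNReal.ofReal_natCast]
  rw [h1, ← ENNReal.ofReal_mul (by positivity), ← ENNReal.ofReal_mul (by linarith)]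
  rw [← ENNReal.ofReal_add (by nlinarith [K_pos hk]) (by nlinarith)]
  have : (k:ℝ) * (eta k - 0) + 2 * (1 - ww k) * (1 - 1/2) = 1 := by
    have := k_mul_eta hk
    nlinarith
  rw [this, ENNReal.ofReal_one]

lemma sig_univ (hk : 200 ≤ k) : sig k Set.univ = 1 := by
  rw [sig, withDensity_apply _ MeasurableSet.univ, Measure.restrict_univ, lint_fnn hk]

lemma sig_prob (hk : 200 ≤ k) : IsProbabilityMeasure (sig k) := ⟨sig_univ hk⟩

lemma fnn_zero_outside (hk : 200 ≤ k) {t : ℝ} (ht : t ∉ Set.Icc (0:ℝ) 1) : fnn k t = 0 := by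
  have he1 : eta k ≤ 1 := eta_le_one hk
  simp only [Set.mem_Icc, not_and_or, not_le] at ht
  simp only [fnn, Set.indicator_apply, Set.mem_Ioc]
  rcases ht with h | h
  · rw [if_neg (by intro hc; linarith [hc.1]), if_neg (by intro hc; linarith [hc.1])]
    simp
  · rw [if_neg (by intro hc; linarith [hc.2]), if_neg (by intro hc; linarith [hc.2])]
    simp

lemma sig_Icc (hk : 200 ≤ k) : sig k (Set.Icc (0:ℝ) 1) = 1 := by
  have hc : sig k (Set.Icc (0:ℝ) 1)ᶜ = 0 := by
    rw [sig, withDensity_apply _ measurableSet_Icc.compl]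
    rw [show (∫⁻ t in (Set.Icc (0:ℝ) 1)ᶜ, ((fnn k t : ℝ≥0) : ℝ≥0∞) ∂volume)
        = ∫⁻ _ in (Set.Icc (0:ℝ) 1)ᶜ, (0:ℝ≥0∞) ∂volume from
      setLIntegral_congr_fun measurableSet_Icc.compl
        (fun t ht => by
          rw [fnn_zero_outside hk ht]; simp)]
    simp
  have := measure_add_measure_compl (μ := sig k) (measurableSet_Icc (a := (0:ℝ)) (b := 1))
  rw [hc, sig_univ hk] at this
  simpa using this

lemma sig_density_bound (hk : 200 ≤ k) (t : ℝ) :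
    ((fnn k t : ℝ≥0) : ℝ≥0∞) ≤ ENNReal.ofReal (200 * k) := by
  have hw : 0 ≤ ww k := le_of_lt (w_pos hk)
  have h2 : Real.toNNReal (2 * (1 - ww k)) ≤ 2 := by
    rw [show (2:ℝ≥0) = Real.toNNReal 2 by simp]
    exact Real.toNNReal_le_toNNReal (by nlinarith)
  have ha : (Set.Ioc (0:ℝ) (eta k)).indicator (fun _ => (k:ℝ≥0)) t ≤ (k:ℝ≥0) :=
    Set.indicator_le_self' (fun _ _ => zero_le) t
  have hb : (Set.Ioc (1/2:ℝ) 1).indicator (fun _ => Real.toNNReal (2 * (1 - ww k))) t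
      ≤ Real.toNNReal (2 * (1 - ww k)) :=
    Set.indicator_le_self' (fun _ _ => zero_le) t
  have hfnn : fnn k t ≤ (k:ℝ≥0) + 2 := add_le_add ha (hb.trans h2)
  calc ((fnn k t : ℝ≥0) : ℝ≥0∞) ≤ (((k:ℝ≥0) + 2 : ℝ≥0) : ℝ≥0∞) := ENNReal.coe_le_coe.2 hfnn
    _ = (((k + 2 : ℕ)) : ℝ≥0∞) := by push_cast; ring
    _ ≤ (((200 * k : ℕ)) : ℝ≥0∞) := by
        have hnat : (k + 2 : ℕ) ≤ 200 * k := by omega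
        exact_mod_cast hnat
    _ = ENNReal.ofReal (200 * k) := by
        rw [show (200 * (k:ℝ)) = ((200 * k : ℕ) : ℝ) by push_cast; ring, ENNReal.ofReal_natCast]

end measure
end ELB

namespace ELB
section integrals
variable {k : ℕ}

lemma integral_sig (hk : 200 ≤ k) (h : ℝ → ℝ) (hc : Continuous h) :
    ∫ t, h t ∂(sig k) = (k:ℝ) * (∫ t in Set.Ioc (0:ℝ) (eta k), h t)
      + (2*(1 - ww k)) * ∫ t in Set.Ioc (1/2:ℝ) 1, h t := by
  have hw : 0 ≤ 2*(1 - ww k) := by nlinarith [w_le_half hk]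
  rw [sig, integral_withDensity_eq_integral_smul (measurable_fnn k)]
  have hrw : (fun t => fnn k t • h t) = fun t =>
      (Set.Ioc (0:ℝ) (eta k)).indicator (fun s => (k:ℝ) * h s) t
      + (Set.Ioc (1/2:ℝ) 1).indicator (fun s => (2*(1 - ww k)) * h s) t := by
    funext t
    simp only [fnn, Set.indicator_apply]
    split_ifs <;>
      simp [NNReal.smul_def, Real.coe_toNNReal _ hw, add_mul, NNReal.coe_add]
  rw [hrw]
  have hint1 : Integrable ((Set.Ioc (0:ℝ) (eta k)).indicator (fun s => (k:ℝ) * h s)) volume := by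
    rw [integrable_indicator_iff measurableSet_Ioc]
    exact (continuous_const.mul hc).integrableOn_Ioc
  have hint2 : Integrable ((Set.Ioc (1/2:ℝ) 1).indicator (fun s => (2*(1 - ww k)) * h s)) volume := by
    rw [integrable_indicator_iff measurableSet_Ioc]
    exact (continuous_const.mul hc).integrableOn_Ioc
  rw [integral_add hint1 hint2, integral_indicator measurableSet_Ioc,
    integral_indicator measurableSet_Ioc, integral_const_mul, integral_const_mul]

lemma ae_Icc (hk : 200 ≤ k) : ∀ᵐ t ∂(sig k), t ∈ Set.Icc (0:ℝ) 1 := by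
  have : IsProbabilityMeasure (sig k) := sig_prob hk
  have hc : sig k (Set.Icc (0:ℝ) 1)ᶜ = 0 :=
    (prob_compl_eq_zero_iff measurableSet_Icc).2 (sig_Icc hk)
  rw [ae_iff]
  exact hc

lemma integrable_pow (hk : 200 ≤ k) (j : ℕ) :
    Integrable (fun t : ℝ => t^j) (sig k) := by
  have : IsProbabilityMeasure (sig k) := sig_prob hk
  refine Integrable.mono' (integrable_const (1:ℝ))
    ((continuous_pow j).aestronglyMeasurable) ?_
  filter_upwards [ae_Icc hk] with t ht
  rw [Real.norm_eq_abs, abs_pow]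
  exact pow_le_one₀ (abs_nonneg t) (abs_le.2 ⟨by linarith [ht.1], ht.2⟩)

lemma key_swap (hk : 200 ≤ k) {n : ℕ} (hn : 1 ≤ n) (x : Fin n → ℝ)
    (hyp : ∀ j : ℕ, 1 ≤ j → j ≤ k → (n:ℝ)⁻¹ * ∑ i, x i ^ j = ∫ t, t^j ∂(sig k))
    (p : Polynomial ℝ) (hdeg : p.natDegree ≤ k) :
    (n:ℝ)⁻¹ * ∑ i, p.eval (x i) = ∫ t, p.eval t ∂(sig k) := by
  have : IsProbabilityMeasure (sig k) := sig_prob hk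
  have hdeg' : p.natDegree < k+1 := Nat.lt_succ_of_le hdeg
  have hnne : ((n:ℝ)) ≠ 0 := Nat.cast_ne_zero.2 (by omega)
  have hmom : ∀ j ∈ Finset.range (k+1),
      (n:ℝ)⁻¹ * ∑ i, x i ^ j = ∫ t, t^j ∂(sig k) := by
    intro j hj
    rcases Nat.eq_zero_or_pos j with h0 | h1
    · subst h0
      simp only [pow_zero]
      rw [Finset.sum_const, Finset.card_univ, Fintype.card_fin, nsmul_eq_mul, mul_one,
        inv_mul_cancel₀ hnne, integral_const]
      simp
    · exact hyp j h1 (Nat.lt_succ_iff.mp (Finset.mem_range.mp hj))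
  calc (n:ℝ)⁻¹ * ∑ i, p.eval (x i)
      = (n:ℝ)⁻¹ * ∑ i, ∑ j ∈ Finset.range (k+1), p.coeff j * x i ^ j := by
        congr 1
        exact Finset.sum_congr rfl fun i _ => Polynomial.eval_eq_sum_range' hdeg' (x i)
    _ = ∑ j ∈ Finset.range (k+1), p.coeff j * ((n:ℝ)⁻¹ * ∑ i, x i ^ j) := by
        rw [Finset.sum_comm, Finset.mul_sum]
        refine Finset.sum_congr rfl fun j _ => ?_
        rw [← Finset.mul_sum]
        ring
    _ = ∑ j ∈ Finset.range (k+1), p.coeff j * ∫ t, t^j ∂(sig k) :=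
        Finset.sum_congr rfl fun j hj => by rw [hmom j hj]
    _ = ∑ j ∈ Finset.range (k+1), ∫ t, p.coeff j * t^j ∂(sig k) :=
        Finset.sum_congr rfl fun j _ => (integral_const_mul _ _).symm
    _ = ∫ t, ∑ j ∈ Finset.range (k+1), p.coeff j * t^j ∂(sig k) :=
        (integral_finset_sum _ fun j _ => (integrable_pow hk j).const_mul _).symm
    _ = ∫ t, p.eval t ∂(sig k) := by
        refine integral_congr_ae (Filter.Eventually.of_forall fun t => ?_)
        exact (Polynomial.eval_eq_sum_range' hdeg' t).symm

end integrals
end ELB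

namespace ELB
section bounds
variable {k : ℕ}

lemma volIoc_toReal {a b : ℝ} (hab : a ≤ b) : (volume (Set.Ioc a b)).toReal = b - a := by
  rw [Real.volume_Ioc, ENNReal.toReal_ofReal (by linarith)]

lemma intD_pos (hk : 200 ≤ k) (hev : Even (k-1)) :
    0 < ∫ t, (gam k - t)*(1-t)^(k-1) ∂(sig k) := by
  have hcont : Continuous (fun t : ℝ => (gam k - t)*(1-t)^(k-1)) := by fun_prop
  have heta := eta_pos hk
  have hetag := eta_le_half_gam hk
  have hgam := gam_pos hk
  have hgle := gam_le hk
  have heta1 := eta_le_one hk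
  have hps : ((1/2:ℝ))^(k-1)*(1/2) = (1/2)^k := by
    rw [← pow_succ]; congr 1; omega
  rw [integral_sig hk _ hcont]
  -- blob lower bound
  have h1 : (gam k - eta k)*(1 - eta k)^(k-1) * eta k
      ≤ ∫ t in Set.Ioc (0:ℝ) (eta k), (gam k - t)*(1-t)^(k-1) := by
    have hmono : ∫ _t in Set.Ioc (0:ℝ) (eta k), ((gam k - eta k)*(1 - eta k)^(k-1))
        ≤ ∫ t in Set.Ioc (0:ℝ) (eta k), (gam k - t)*(1-t)^(k-1) := by
      refine setIntegral_mono_on ?_ (hcont.integrableOn_Ioc) measurableSet_Ioc ?_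
      · exact integrableOn_const (by
          rw [Real.volume_Ioc]; exact ENNReal.ofReal_ne_top)
      · intro t ht
        obtain ⟨ht1, ht2⟩ := ht
        have ha : gam k - eta k ≤ gam k - t := by linarith
        have hb : (1 - eta k)^(k-1) ≤ (1-t)^(k-1) :=
          pow_le_pow_left₀ (by linarith) (by linarith) _
        have hc : (0:ℝ) ≤ (1 - eta k)^(k-1) := pow_nonneg (by linarith) _
        have hd : (0:ℝ) ≤ gam k - t := by linarith
        nlinarith
    rw [setIntegral_const, measureReal_def, volIoc_toReal (by linarith), smul_eq_mul, sub_zero] at hmono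
    nlinarith [hmono]
  -- bulk lower bound
  have h2 : (1/2:ℝ) * (-((1/2:ℝ)^(k-1)))
      ≤ ∫ t in Set.Ioc (1/2:ℝ) 1, (gam k - t)*(1-t)^(k-1) := by
    have hmono : ∫ _t in Set.Ioc (1/2:ℝ) 1, (-((1/2:ℝ)^(k-1)))
        ≤ ∫ t in Set.Ioc (1/2:ℝ) 1, (gam k - t)*(1-t)^(k-1) := by
      refine setIntegral_mono_on ?_ (hcont.integrableOn_Ioc) measurableSet_Ioc ?_
      · exact integrableOn_const (by
          rw [Real.volume_Ioc]; exact ENNReal.ofReal_ne_top)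
      · intro t ht
        obtain ⟨ht1, ht2⟩ := ht
        have hb0 : (0:ℝ) ≤ (1-t)^(k-1) := hev.pow_nonneg _
        have hbM : (1-t)^(k-1) ≤ (1/2:ℝ)^(k-1) :=
          pow_le_pow_left₀ (by linarith) (by linarith) _
        have ha : -1 ≤ gam k - t := by linarith
        nlinarith
    rw [setIntegral_const, measureReal_def, volIoc_toReal (by norm_num), smul_eq_mul] at hmono
    nlinarith [hmono]
  -- combine
  have hK0 : (0:ℝ) ≤ k := by positivity
  have hw := w_pos hk
  have hwh := w_le_half hk
  have hco1 : (1:ℝ) ≤ 2*(1 - ww k) := by linarith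
  have hco2 : 2*(1 - ww k) ≤ 2 := by linarith
  have t1 : (k:ℝ) * ((gam k - eta k)*(1 - eta k)^(k-1) * eta k)
      ≤ (k:ℝ) * ∫ t in Set.Ioc (0:ℝ) (eta k), (gam k - t)*(1-t)^(k-1) :=
    mul_le_mul_of_nonneg_left h1 hK0
  have e1 : (k:ℝ) * ((gam k - eta k)*(1 - eta k)^(k-1) * eta k)
      = ww k * ((gam k - eta k)*(1 - eta k)^(k-1)) := by
    rw [← k_mul_eta hk]; ring
  have hc1 : (gam k / 2) * (1/2) ≤ (gam k - eta k)*(1 - eta k)^(k-1) := by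
    have h3 := one_sub_eta_pow hk
    nlinarith
  have t1' : ww k * ((gam k / 2) * (1/2))
      ≤ (k:ℝ) * ∫ t in Set.Ioc (0:ℝ) (eta k), (gam k - t)*(1-t)^(k-1) := by
    rw [e1] at t1
    nlinarith
  have hb2 : (1/2:ℝ) * (-((1/2:ℝ)^(k-1))) ≤ 0 := by
    have : (0:ℝ) ≤ (1/2:ℝ)^(k-1) := by positivity
    nlinarith
  have t2 : 2*(1 - ww k) * ((1/2:ℝ) * (-((1/2:ℝ)^(k-1))))
      ≤ 2*(1 - ww k) * ∫ t in Set.Ioc (1/2:ℝ) 1, (gam k - t)*(1-t)^(k-1) :=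
    mul_le_mul_of_nonneg_left h2 (by linarith)
  have t3 : 2 * ((1/2:ℝ) * (-((1/2:ℝ)^(k-1))))
      ≤ 2*(1 - ww k) * ((1/2:ℝ) * (-((1/2:ℝ)^(k-1)))) :=
    mul_le_mul_of_nonpos_right hco2 hb2
  have hF5 := F5 hk
  have e2 : 2 * ((1/2:ℝ) * (-((1/2:ℝ)^(k-1)))) = -(2 * (1/2:ℝ)^k) := by
    rw [← hps]; ring
  rw [e2] at t3
  nlinarith

end bounds
end ELB

namespace ELB
section bounds2
variable {k : ℕ}

lemma intS_le (hk : 200 ≤ k) (hev : Even (k-1)) :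
    ∫ t, (1-t)^(k-1) ∂(sig k) ≤ ww k + 2*(1/2:ℝ)^k := by
  have hcont : Continuous (fun t : ℝ => (1-t)^(k-1)) := by fun_prop
  have heta := eta_pos hk
  have heta1 := eta_le_one hk
  have hw := w_pos hk
  have hwh := w_le_half hk
  have hps : ((1/2:ℝ))^(k-1)*(1/2) = (1/2)^k := by
    rw [← pow_succ]; congr 1; omega
  rw [integral_sig hk _ hcont]
  -- blob upper bound
  have h1 : ∫ t in Set.Ioc (0:ℝ) (eta k), (1-t)^(k-1) ≤ eta k := by
    have hmono : ∫ t in Set.Ioc (0:ℝ) (eta k), (1-t)^(k-1)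
        ≤ ∫ _t in Set.Ioc (0:ℝ) (eta k), (1:ℝ) := by
      refine setIntegral_mono_on (hcont.integrableOn_Ioc) ?_ measurableSet_Ioc ?_
      · exact integrableOn_const (by
          rw [Real.volume_Ioc]; exact ENNReal.ofReal_ne_top)
      · intro t ht
        obtain ⟨ht1, ht2⟩ := ht
        exact pow_le_one₀ (by linarith) (by linarith)
    rw [setIntegral_const, measureReal_def, volIoc_toReal (by linarith), smul_eq_mul, sub_zero, mul_one] at hmono
    exact hmono
  -- bulk upper bound
  have h2 : ∫ t in Set.Ioc (1/2:ℝ) 1, (1-t)^(k-1) ≤ (1/2:ℝ)^k := by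
    have hmono : ∫ t in Set.Ioc (1/2:ℝ) 1, (1-t)^(k-1)
        ≤ ∫ _t in Set.Ioc (1/2:ℝ) 1, ((1/2:ℝ)^(k-1)) := by
      refine setIntegral_mono_on (hcont.integrableOn_Ioc) ?_ measurableSet_Ioc ?_
      · exact integrableOn_const (by
          rw [Real.volume_Ioc]; exact ENNReal.ofReal_ne_top)
      · intro t ht
        obtain ⟨ht1, ht2⟩ := ht
        exact pow_le_pow_left₀ (by linarith) (by linarith) _
    rw [setIntegral_const, measureReal_def, volIoc_toReal (by norm_num), smul_eq_mul] at hmono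
    calc ∫ t in Set.Ioc (1/2:ℝ) 1, (1-t)^(k-1) ≤ (1 - 1/2) * (1/2:ℝ)^(k-1) := hmono
      _ = (1/2:ℝ)^k := by rw [← hps]; ring
  have h2' : 0 ≤ ∫ t in Set.Ioc (1/2:ℝ) 1, (1-t)^(k-1) :=
    setIntegral_nonneg measurableSet_Ioc (fun t _ => hev.pow_nonneg _)
  have hK0 : (0:ℝ) ≤ k := by positivity
  have hco2 : 2*(1 - ww k) ≤ 2 := by linarith
  have t1 : (k:ℝ) * ∫ t in Set.Ioc (0:ℝ) (eta k), (1-t)^(k-1) ≤ (k:ℝ) * eta k :=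
    mul_le_mul_of_nonneg_left h1 hK0
  rw [k_mul_eta hk] at t1
  have t2 : 2*(1 - ww k) * ∫ t in Set.Ioc (1/2:ℝ) 1, (1-t)^(k-1) ≤ 2 * (1/2:ℝ)^k := by
    calc 2*(1 - ww k) * ∫ t in Set.Ioc (1/2:ℝ) 1, (1-t)^(k-1)
        ≤ 2 * ∫ t in Set.Ioc (1/2:ℝ) 1, (1-t)^(k-1) :=
          mul_le_mul_of_nonneg_right hco2 h2'
      _ ≤ 2 * (1/2:ℝ)^k := by linarith
  linarith

lemma intsq_pos (hk : 200 ≤ k) : 0 < ∫ t, t^2 ∂(sig k) := by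
  have hcont : Continuous (fun t : ℝ => t^2) := by fun_prop
  rw [integral_sig hk _ hcont]
  have h1 : 0 ≤ ∫ t in Set.Ioc (0:ℝ) (eta k), t^2 :=
    setIntegral_nonneg measurableSet_Ioc (fun t _ => sq_nonneg t)
  have h2 : (1/2:ℝ) * (1/4) ≤ ∫ t in Set.Ioc (1/2:ℝ) 1, t^2 := by
    have hmono : ∫ _t in Set.Ioc (1/2:ℝ) 1, ((1/4:ℝ))
        ≤ ∫ t in Set.Ioc (1/2:ℝ) 1, t^2 := by
      refine setIntegral_mono_on ?_ (hcont.integrableOn_Ioc) measurableSet_Ioc ?_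
      · exact integrableOn_const (by
          rw [Real.volume_Ioc]; exact ENNReal.ofReal_ne_top)
      · intro t ht
        obtain ⟨ht1, ht2⟩ := ht
        nlinarith
    rw [setIntegral_const, measureReal_def, volIoc_toReal (by norm_num), smul_eq_mul] at hmono
    linarith
  have hK0 : (0:ℝ) ≤ k := by positivity
  have hwh := w_le_half hk
  have hco1 : (1:ℝ) ≤ 2*(1 - ww k) := by linarith
  have t1 : (0:ℝ) ≤ (k:ℝ) * ∫ t in Set.Ioc (0:ℝ) (eta k), t^2 := mul_nonneg hK0 h1
  have t2 : (1:ℝ) * ((1/2)*(1/4)) ≤ 2*(1 - ww k) * ∫ t in Set.Ioc (1/2:ℝ) 1, t^2 := by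
    apply mul_le_mul hco1 h2 (by norm_num) (by linarith)
  nlinarith

end bounds2
end ELB

namespace ELB
section poly
variable {k : ℕ}

lemma natDegree_oneSubX_pow : ((1 - Polynomial.X : Polynomial ℝ)^(k-1)).natDegree ≤ k-1 := by
  refine le_trans Polynomial.natDegree_pow_le ?_
  have h : (1 - Polynomial.X : Polynomial ℝ).natDegree ≤ 1 :=
    le_trans (Polynomial.natDegree_sub_le _ _) (by simp)
  calc (k-1) * (1 - Polynomial.X : Polynomial ℝ).natDegree ≤ (k-1) * 1 :=
        Nat.mul_le_mul_left _ h
    _ = k-1 := by omega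

lemma pD_natDegree (hk : 200 ≤ k) :
    (((Polynomial.C (gam k) - Polynomial.X) * (1 - Polynomial.X)^(k-1)) : Polynomial ℝ).natDegree ≤ k := by
  refine le_trans (Polynomial.natDegree_mul_le) ?_
  have h1 : (Polynomial.C (gam k) - Polynomial.X).natDegree ≤ 1 :=
    le_trans (Polynomial.natDegree_sub_le _ _) (by simp)
  have h2 := natDegree_oneSubX_pow (k := k)
  omega

lemma pD_eval (t : ℝ) :
    (((Polynomial.C (gam k) - Polynomial.X) * (1 - Polynomial.X)^(k-1)) : Polynomial ℝ).eval t
      = (gam k - t)*(1-t)^(k-1) := by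
  simp

lemma pS_eval (t : ℝ) :
    (((1 - Polynomial.X)^(k-1)) : Polynomial ℝ).eval t = (1-t)^(k-1) := by
  simp

end poly
end ELB

open ELB

/-- There is a constant `C > 0` such that for every odd integer `k > C` there is a probability
measure `σ_k` on `[0,1]`, absolutely continuous with density essentially bounded by `C·k`,
such that every Chebyshev-type quadrature for `σ_k` of degree at least `k` with `n` nodes
satisfies `n ≥ (1/(2√k))·(e/2)^k`. -/
theorem exponential_lower_bound_example :
    ∃ C : ℝ, 0 < C ∧ ∀ k : ℕ, Odd k → C < (k : ℝ) →
      ∃ (σ : Measure ℝ) (f : ℝ → ℝ≥0∞), IsProbabilityMeasure σ ∧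
        σ (Set.Icc (0 : ℝ) 1) = 1 ∧ σ = volume.withDensity f ∧
        (∀ᵐ x ∂volume, f x ≤ ENNReal.ofReal (C * k)) ∧
        ∀ (n : ℕ) (x : Fin n → ℝ),
          (∀ j : ℕ, 1 ≤ j → j ≤ k → (n : ℝ)⁻¹ * ∑ i, x i ^ j = ∫ t, t ^ j ∂σ) →
          1 / (2 * Real.sqrt k) * (Real.exp 1 / 2) ^ k ≤ (n : ℝ) := by

  refine ⟨200, by norm_num, ?_⟩
  intro k hodd hklt
  have hk : 200 ≤ k := le_of_lt (by exact_mod_cast hklt)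
  have hev : Even (k-1) := Nat.Odd.sub_odd hodd odd_one
  have hprob := sig_prob hk
  refine ⟨sig k, fun t => (fnn k t : ℝ≥0∞), hprob, sig_Icc hk, rfl,
    Filter.Eventually.of_forall (sig_density_bound hk), ?_⟩
  intro n x hyp
  rcases Nat.eq_zero_or_pos n with hn0 | hn
  · exfalso
    have h2 := hyp 2 (by omega) (by omega)
    subst hn0
    have hL : ((0:ℕ):ℝ)⁻¹ * ∑ i : Fin 0, x i ^ 2 = 0 := by simp
    rw [hL] at h2
    have := intsq_pos hk
    rw [← h2] at this
    exact lt_irrefl _ this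
  · -- there is a node below gam k
    have hD : (n:ℝ)⁻¹ * ∑ i, (gam k - x i)*(1 - x i)^(k-1)
        = ∫ t, (gam k - t)*(1-t)^(k-1) ∂(sig k) := by
      have h := key_swap hk hn x hyp _ (pD_natDegree hk)
      simpa only [pD_eval] using h
    have hpos := intD_pos hk hev
    have hninv : (0:ℝ) < ((n:ℝ))⁻¹ := by
      have : (0:ℝ) < n := by exact_mod_cast hn
      positivity
    have hsumpos : 0 < ∑ i, (gam k - x i)*(1 - x i)^(k-1) := by
      by_contra hle
      push_neg at hle
      have : (n:ℝ)⁻¹ * ∑ i, (gam k - x i)*(1 - x i)^(k-1) ≤ 0 :=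
        mul_nonpos_of_nonneg_of_nonpos (le_of_lt hninv) hle
      rw [hD] at this
      linarith
    obtain ⟨i0, -, hi0⟩ := Finset.exists_lt_of_sum_lt (by
      simpa using hsumpos :
        ∑ _i : Fin n, (0:ℝ) < ∑ i, (gam k - x i)*(1 - x i)^(k-1))
    have hx0 : x i0 < gam k := by
      by_contra hge
      push_neg at hge
      have h1 : gam k - x i0 ≤ 0 := by linarith
      have h2 : 0 ≤ (1 - x i0)^(k-1) := hev.pow_nonneg _
      nlinarith
    -- Christoffel-type bound
    have hS : (n:ℝ)⁻¹ * ∑ i, (1 - x i)^(k-1) = ∫ t, (1-t)^(k-1) ∂(sig k) := by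
      have h := key_swap hk hn x hyp _ (le_trans (natDegree_oneSubX_pow (k := k)) (by omega))
      simpa only [pS_eval] using h
    have hSle := intS_le hk hev
    have hgam := gam_pos hk
    have hgle := gam_le hk
    have hterm : (1 - gam k)^(k-1) ≤ (1 - x i0)^(k-1) :=
      pow_le_pow_left₀ (by linarith) (by linarith) _
    have hsumge : (1 - x i0)^(k-1) ≤ ∑ i, (1 - x i)^(k-1) :=
      Finset.single_le_sum (f := fun i => (1 - x i)^(k-1)) (fun i _ => hev.pow_nonneg _) (Finset.mem_univ i0)
    have hnpos : (0:ℝ) < n := by exact_mod_cast hn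
    have hsum_eq : ∑ i, (1 - x i)^(k-1) = (n:ℝ) * ∫ t, (1-t)^(k-1) ∂(sig k) := by
      rw [← hS]
      field_simp
    have hchain : (1 - gam k)^(k-1) ≤ (n:ℝ) * (ww k + 2*(1/2:ℝ)^k) := by
      calc (1 - gam k)^(k-1) ≤ (1 - x i0)^(k-1) := hterm
        _ ≤ ∑ i, (1 - x i)^(k-1) := hsumge
        _ = (n:ℝ) * ∫ t, (1-t)^(k-1) ∂(sig k) := hsum_eq
        _ ≤ (n:ℝ) * (ww k + 2*(1/2:ℝ)^k) :=
            mul_le_mul_of_nonneg_left hSle (le_of_lt hnpos)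
    have hF6 := F6 hk
    have hBpos : 0 < ww k + 2*(1/2:ℝ)^k := by
      have := w_pos hk
      positivity
    have hfinal : NN k * (ww k + 2*(1/2:ℝ)^k) ≤ (n:ℝ) * (ww k + 2*(1/2:ℝ)^k) := by
      rw [mul_comm]
      exact le_trans hF6 hchain
    have := le_of_mul_le_mul_right hfinal hBpos
    simpa [NN] using this
end
end

section
/- Let σ be a probability measure on ℝ^d and let n ≥ 1, k ≥ 1 be integers, with ∫ |x^α| dσ(x) < ∞ for every multi-index α with 0 < |α| ≤ k. Suppose that for every ε > 0 the product measure σ^{⊗n} on (ℝ^d)^n gives positive measure to the set of tuples (x₁,…,xₙ) satisfying |(1/n)·∑_{i=1}^n x_i^α − ∫ x^α dσ(x)| ≤ ε/√n for every multi-index α with 0 < |α| ≤ k. Then there exist (not necessarily distinct) points x₁,…,xₙ ∈ ℝ^d such that (1/n)·∑_{i=1}^n x_i^α = ∫ x^α dσ(x) for every multi-index α with 0 < |α| ≤ k. -/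
open MeasureTheory

/-- A multi-index with sum 1 is an indicator. -/
lemma sum_eq_one_indicator {d : ℕ} (α : Fin d → ℕ) (hsum : ∑ i, α i = 1) :
    ∃ j, α = fun q => if q = j then 1 else 0 := by
  have hj : ∃ j, α j ≠ 0 := by
    by_contra h
    push_neg at h
    simp [h] at hsum
  obtain ⟨j, hj⟩ := hj
  have h1 : α j + ∑ q ∈ Finset.univ.erase j, α q = 1 := by
    rw [Finset.add_sum_erase _ _ (Finset.mem_univ j)]; exact hsum
  have hr : ∑ q ∈ Finset.univ.erase j, α q = 0 := by omega
  have hrest : ∀ q, q ≠ j → α q = 0 := by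
    intro q hq
    exact (Finset.sum_eq_zero_iff.mp hr) q (Finset.mem_erase.mpr ⟨hq, Finset.mem_univ q⟩)
  refine ⟨j, funext fun q => ?_⟩
  by_cases hq : q = j
  · subst hq; simp; omega
  · simp [hq, hrest q hq]

/-- If for every `ε > 0` the event that `n` i.i.d. samples from `σ` have all multi-moments of
order up to `k` within `ε/√n` of those of `σ` has positive probability, then there exists a
Chebyshev-type cubature for `σ` of degree at least `k` with exactly `n` nodes. -/
theorem small_ball_to_cubature
    (d n k : ℕ) (hd : 1 ≤ d) (hn : 1 ≤ n) (hk : 1 ≤ k)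
    (σ : Measure (Fin d → ℝ)) [IsProbabilityMeasure σ]
    (hint : ∀ α : Fin d → ℕ, 0 < ∑ i, α i → ∑ i, α i ≤ k →
      Integrable (fun x => ∏ i, x i ^ α i) σ)
    (hball : ∀ ε : ℝ, 0 < ε →
      0 < (Measure.pi fun _ : Fin n => σ)
        {ω : Fin n → Fin d → ℝ | ∀ α : Fin d → ℕ, 0 < ∑ i, α i → ∑ i, α i ≤ k →
          |(n : ℝ)⁻¹ * ∑ i, ∏ q, ω i q ^ α q - ∫ y, ∏ q, y q ^ α q ∂σ| ≤
            ε / Real.sqrt n}) :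
    ∃ x : Fin n → Fin d → ℝ, ∀ α : Fin d → ℕ, 0 < ∑ i, α i → ∑ i, α i ≤ k →
      (n : ℝ)⁻¹ * ∑ i, ∏ q, x i q ^ α q = ∫ y, ∏ q, y q ^ α q ∂σ := by
  have hn0 : (0:ℝ) < n := by exact_mod_cast hn
  have hs1 : (1:ℝ) ≤ Real.sqrt n := by
    rw [show (1:ℝ) = Real.sqrt 1 by simp]
    exact Real.sqrt_le_sqrt (by exact_mod_cast hn)
  have hs0 : (0:ℝ) < Real.sqrt n := lt_of_lt_of_le one_pos hs1
  rcases eq_or_lt_of_le hk with hk1 | hk2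
  · -- case k = 1
    refine ⟨fun _ j => ∫ y, ∏ q, y q ^ (if q = j then 1 else 0) ∂σ, ?_⟩
    intro α hα1 hα2
    have hsum : ∑ i, α i = 1 := le_antisymm (hk1 ▸ hα2) hα1
    obtain ⟨j, rfl⟩ := sum_eq_one_indicator α hsum
    simp only [pow_ite, pow_zero, pow_one, Finset.prod_ite_eq', Finset.mem_univ, if_true,
      Finset.sum_const, Finset.card_univ, Fintype.card_fin, nsmul_eq_mul]
    rw [← mul_assoc, inv_mul_cancel₀ (ne_of_gt hn0), one_mul]
  · -- case 2 ≤ k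
    have hk2' : 2 ≤ k := hk2
    set m : (Fin d → ℕ) → ℝ := fun α => ∫ y, ∏ q, y q ^ α q ∂σ with hm
    set S : ℝ → Set (Fin n → Fin d → ℝ) := fun ε =>
      {ω : Fin n → Fin d → ℝ | ∀ α : Fin d → ℕ, 0 < ∑ i, α i → ∑ i, α i ≤ k →
        |(n : ℝ)⁻¹ * ∑ i, ∏ q, ω i q ^ α q - m α| ≤ ε / Real.sqrt n} with hS
    have hne : ∀ ε : ℝ, 0 < ε → (S ε).Nonempty := fun ε hε =>
      nonempty_of_measure_ne_zero (hball ε hε).ne'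
    have hcl : ∀ ε, IsClosed (S ε) := by
      intro ε
      have heq : S ε = ⋂ (α : Fin d → ℕ) (_ : 0 < ∑ i, α i) (_ : ∑ i, α i ≤ k),
          {ω : Fin n → Fin d → ℝ |
            |(n : ℝ)⁻¹ * ∑ i, ∏ q, ω i q ^ α q - m α| ≤ ε / Real.sqrt n} := by
        ext ω
        simp only [hS, Set.mem_setOf_eq, Set.mem_iInter]
      rw [heq]
      refine isClosed_iInter fun α => isClosed_iInter fun _ => isClosed_iInter fun _ => ?_
      have hc : Continuous fun ω : Fin n → Fin d → ℝ =>
          |(n : ℝ)⁻¹ * ∑ i, ∏ q, ω i q ^ α q - m α| := by fun_prop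
      exact isClosed_le hc continuous_const
    haveI : Nonempty (Fin d) := Fin.pos_iff_nonempty.mp hd
    set α2 : Fin d → (Fin d → ℕ) := fun j q => if q = j then 2 else 0 with hα2def
    have hα2sum : ∀ j, ∑ q, α2 j q = 2 := fun j => by
      simp [hα2def, Finset.sum_ite_eq']
    set C : ℝ := Finset.univ.sup' Finset.univ_nonempty
      (fun j => Real.sqrt ((n:ℝ) * (m (α2 j) + 1))) with hC
    set K : Set (Fin n → Fin d → ℝ) :=
      Set.pi Set.univ fun _ : Fin n => Set.pi Set.univ fun _ : Fin d => Set.Icc (-C) C with hK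
    have hKcomp : IsCompact K :=
      isCompact_univ_pi fun _ => isCompact_univ_pi fun _ => isCompact_Icc
    have hsub : S 1 ⊆ K := by
      intro ω hω
      simp only [hK, Set.mem_pi, Set.mem_univ, true_implies, Set.mem_Icc, ← abs_le]
      intro i j
      have h2 := hω (α2 j) (by rw [hα2sum]; norm_num) (by rw [hα2sum]; exact hk2')
      have hprod : ∀ i' : Fin n, ∏ q, ω i' q ^ α2 j q = ω i' j ^ 2 := fun i' => by
        simp [hα2def, pow_ite, pow_zero, Finset.prod_ite_eq']
      simp only [hprod] at h2
      rw [abs_le] at h2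
      have hinv : 1 / Real.sqrt n ≤ 1 := by
        rw [div_le_one hs0]; exact hs1
      have hsq : ω i j ^ 2 ≤ ∑ i', ω i' j ^ 2 :=
        Finset.single_le_sum (fun i' _ => sq_nonneg (ω i' j)) (Finset.mem_univ i)
      have hsum2 : ∑ i', ω i' j ^ 2 ≤ (n:ℝ) * (m (α2 j) + 1) := by
        have := h2.2
        rw [sub_le_iff_le_add] at this
        have h3 : (n:ℝ)⁻¹ * ∑ i', ω i' j ^ 2 ≤ m (α2 j) + 1 := by
          calc (n:ℝ)⁻¹ * ∑ i', ω i' j ^ 2 ≤ m (α2 j) + 1 / Real.sqrt n := by linarith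
            _ ≤ m (α2 j) + 1 := by linarith
        calc ∑ i', ω i' j ^ 2 = (n:ℝ) * ((n:ℝ)⁻¹ * ∑ i', ω i' j ^ 2) := by
              rw [← mul_assoc, mul_inv_cancel₀ (ne_of_gt hn0), one_mul]
          _ ≤ (n:ℝ) * (m (α2 j) + 1) := by
              exact mul_le_mul_of_nonneg_left h3 (le_of_lt hn0)
      have habs : |ω i j| ≤ Real.sqrt ((n:ℝ) * (m (α2 j) + 1)) := by
        rw [← Real.sqrt_sq_eq_abs]
        exact Real.sqrt_le_sqrt (le_trans hsq hsum2)
      refine habs.trans ?_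
      rw [hC]
      exact Finset.le_sup' (fun j => Real.sqrt ((n:ℝ) * (m (α2 j) + 1))) (Finset.mem_univ j)
    have hcomp : IsCompact (S 1) := hKcomp.of_isClosed_subset (hcl 1) hsub
    set t : ℕ → Set (Fin n → Fin d → ℝ) := fun p => S (1 / ((p:ℝ) + 1)) with ht
    have ht0 : IsCompact (t 0) := by
      have : t 0 = S 1 := by norm_num [ht]
      rw [this]; exact hcomp
    have hdec : ∀ p, t (p + 1) ⊆ t p := by
      intro p ω hω α h1 h2
      refine (hω α h1 h2).trans ?_
      have : (1:ℝ) / ((↑(p+1):ℝ) + 1) ≤ 1 / ((p:ℝ) + 1) := by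
        apply one_div_le_one_div_of_le (by positivity)
        push_cast; linarith
      exact div_le_div_of_nonneg_right this hs0.le
    have hnon : ∀ p, (t p).Nonempty := fun p => hne _ (by positivity)
    obtain ⟨ω, hω⟩ := IsCompact.nonempty_iInter_of_sequence_nonempty_isCompact_isClosed t
      hdec hnon ht0 (fun p => hcl _)
    refine ⟨ω, fun α h1 h2 => ?_⟩
    have hωall := Set.mem_iInter.mp hω
    have hb : ∀ p : ℕ, |(n : ℝ)⁻¹ * ∑ i, ∏ q, ω i q ^ α q - m α| ≤ 1 / ((p:ℝ) + 1) := by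
      intro p
      refine (hωall p α h1 h2).trans ?_
      exact div_le_self (by positivity) hs1
    have hzero : |(n : ℝ)⁻¹ * ∑ i, ∏ q, ω i q ^ α q - m α| = 0 := by
      by_contra h
      have hpos : 0 < |(n : ℝ)⁻¹ * ∑ i, ∏ q, ω i q ^ α q - m α| :=
        lt_of_le_of_ne (abs_nonneg _) (Ne.symm h)
      obtain ⟨p, hp⟩ := exists_nat_one_div_lt hpos
      exact absurd (hb p) (not_le.mpr hp)
    exact sub_eq_zero.mp (abs_eq_zero.mp hzero)
end

section
/- Let m ≥ 1, k = 2m−1, and let σ be a probability measure on ℝ with ∫|x|^k dσ(x) < ∞. Suppose σ is NOT a purely atomic measure with fewer than m atoms. Then there exist distinct points x₁,…,x_{2m+1} ∈ ℝ and weights λ₁,…,λ_{2m+1} > 0 with ∑_{i=1}^{2m+1} λ_i = 1 such that ∑_{i=1}^{2m+1} λ_i·x_i^j = ∫ x^j dσ(x) for all integers 0 ≤ j ≤ k. -/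
open MeasureTheory Polynomial Finset
open scoped ENNReal

namespace QuadAux

/-- Divided differences of order `n` kill polynomials of degree `< n`. -/
lemma dd_sum {n : ℕ} (z : Fin (n + 1) → ℝ) (hz : Function.Injective z)
    (f : ℝ[X]) (hf : f.natDegree < n) :
    ∑ i, (∏ j ∈ univ.erase i, (z i - z j)⁻¹) * f.eval (z i) = 0 := by
  classical
  have hinj : Set.InjOn z (univ : Finset (Fin (n + 1))) := fun a _ b _ hab => hz hab
  have hdeg : f.degree < (#(univ : Finset (Fin (n + 1))) : ℕ) := by
    rw [card_univ, Fintype.card_fin]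
    calc f.degree ≤ (f.natDegree : WithBot ℕ) := degree_le_natDegree
    _ < ((n + 1 : ℕ) : WithBot ℕ) := by exact_mod_cast Nat.lt_succ_of_lt hf
  have hit := Lagrange.eq_interpolate (s := univ) (v := z) hinj hdeg
  have hco := congrArg (fun p => Polynomial.coeff p n) hit
  simp only [Lagrange.interpolate_apply] at hco
  rw [finset_sum_coeff] at hco
  have hbasis : ∀ i : Fin (n + 1),
      (Lagrange.basis univ z i).coeff n = ∏ j ∈ univ.erase i, (z i - z j)⁻¹ := by
    intro i
    have hb : Lagrange.basis univ z i
        = C (∏ j ∈ univ.erase i, (z i - z j)⁻¹) * ∏ j ∈ univ.erase i, (X - C (z j)) := by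
      rw [Lagrange.basis, map_prod, ← prod_mul_distrib]
      exact Finset.prod_congr rfl fun j _ => rfl
    have hmonic : (∏ j ∈ univ.erase i, (X - C (z j))).Monic :=
      monic_prod_of_monic _ _ fun j _ => monic_X_sub_C (z j)
    have hnd : (∏ j ∈ univ.erase i, (X - C (z j))).natDegree = n := by
      rw [natDegree_prod_of_monic _ _ fun j _ => monic_X_sub_C (z j)]
      simp [card_erase_of_mem, card_univ]
    rw [hb, coeff_C_mul]
    have h1 := hmonic.coeff_natDegree
    rw [hnd] at h1
    rw [h1, mul_one]
  have hcoeff0 : f.coeff n = 0 := coeff_eq_zero_of_natDegree_lt hf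
  simp only [coeff_C_mul, hbasis, hcoeff0] at hco
  rw [show (0:ℝ) = ∑ x : Fin (n+1), eval (z x) f * ∏ j ∈ univ.erase x, (z x - z j)⁻¹ from hco]
  exact Finset.sum_congr rfl fun i _ => mul_comm _ _


/-- A finite measure living on a finite set is a finite sum of weighted Dirac measures. -/
lemma atomic_of_null_compl (σ : Measure ℝ) (F : Finset ℝ)
    (hF : σ ((↑F : Set ℝ))ᶜ = 0) :
    ∃ m' : ℕ, m' ≤ F.card ∧ ∃ (a : Fin m' → ℝ) (w : Fin m' → ℝ≥0∞),
      Function.Injective a ∧ (∀ i, w i ≠ 0) ∧ σ = ∑ i, w i • Measure.dirac (a i) := by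
  classical
  set F' : Finset ℝ := F.filter (fun x => σ {x} ≠ 0) with hF'
  have key : σ = ∑ x ∈ F', σ {x} • Measure.dirac x := by
    ext s hs
    rw [Measure.finset_sum_apply]
    simp_rw [Measure.smul_apply, Measure.dirac_apply' _ hs, smul_eq_mul]
    have h1 : σ s = σ (s ∩ ↑F) := by
      have hd : σ (s \ ↑F) = 0 :=
        measure_mono_null (fun x hx => hx.2) hF
      rw [← measure_inter_add_diff s (F.finite_toSet.measurableSet), hd, add_zero]
    have h2 : σ (s ∩ ↑F) = ∑ x ∈ F, σ ({x} ∩ s) := by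
      rw [← measure_biUnion_finset ?hd ?hm]
      · congr 1
        ext y
        simp only [Set.mem_iUnion, Set.mem_inter_iff, Set.mem_singleton_iff, Finset.mem_coe]
        constructor
        · rintro ⟨hy, hyF⟩; exact ⟨y, hyF, rfl, hy⟩
        · rintro ⟨x, hxF, rfl, hy⟩; exact ⟨hy, hxF⟩
      case hd =>
        intro x _ y _ hxy
        simp only [Function.onFun, Set.disjoint_left]
        rintro t ⟨rfl, -⟩ ⟨h, -⟩
        exact hxy h
      case hm =>
        exact fun x _ => (measurableSet_singleton x).inter hs
    rw [h1, h2]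
    have h3 : ∀ x ∈ F, σ ({x} ∩ s) = σ {x} * (s.indicator 1 x) := by
      intro x _
      by_cases hx : x ∈ s
      · rw [Set.indicator_of_mem hx, Pi.one_apply, mul_one]
        congr 1
        exact Set.inter_eq_left.2 (Set.singleton_subset_iff.2 hx)
      · rw [Set.indicator_of_notMem hx, mul_zero, Set.singleton_inter_eq_empty.2 hx]
        exact measure_empty
    rw [Finset.sum_congr rfl h3]
    rw [Finset.sum_filter_of_ne]
    intro x _ hne
    intro h0
    rw [h0, zero_mul] at hne
    exact hne rfl
  refine ⟨F'.card, Finset.card_le_card (Finset.filter_subset _ _), ?_⟩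
  set e := F'.equivFin.symm with he
  refine ⟨fun i => (e i : ℝ), fun i => σ {(e i : ℝ)}, ?_, ?_, ?_⟩
  · intro i j hij
    exact e.injective (Subtype.ext hij)
  · intro i
    have h2 := (e i).2
    simp only [hF', Finset.mem_filter] at h2
    exact h2.2
  · calc σ = ∑ x ∈ F', σ {x} • Measure.dirac x := key
      _ = ∑ x : F', σ {(x : ℝ)} • Measure.dirac (x : ℝ) :=
          (Finset.sum_attach F' (fun x => σ {x} • Measure.dirac x)).symm
      _ = _ := (Equiv.sum_comp e (fun x : F' => σ {(x : ℝ)} • Measure.dirac (x : ℝ))).symm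


variable {m : ℕ} {σ : Measure ℝ}

lemma integrable_pow [IsProbabilityMeasure σ]
    (hint : Integrable (fun x => |x| ^ (2 * m - 1)) σ) :
    ∀ j ≤ 2 * m - 1, Integrable (fun x : ℝ => x ^ j) σ := by
  intro j hj
  refine Integrable.mono ((integrable_const (1:ℝ)).add hint)
    ((measurable_id.pow_const j).aestronglyMeasurable) (ae_of_all _ fun x => ?_)
  have h1 : |x ^ j| ≤ 1 + |x| ^ (2 * m - 1) := by
    rw [abs_pow]
    rcases le_or_gt (|x|) 1 with hx | hx
    · have : |x| ^ j ≤ 1 := pow_le_one₀ (abs_nonneg x) hx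
      have h2 : (0:ℝ) ≤ |x| ^ (2*m-1) := pow_nonneg (abs_nonneg x) _
      linarith
    · have : |x| ^ j ≤ |x| ^ (2*m-1) := pow_le_pow_right₀ hx.le hj
      linarith
  have h2 : (0:ℝ) ≤ 1 + |x| ^ (2 * m - 1) := by positivity
  simpa [Real.norm_eq_abs, abs_of_nonneg h2] using h1

lemma integrable_poly [IsProbabilityMeasure σ] (hm : 1 ≤ m)
    (hint : Integrable (fun x => |x| ^ (2 * m - 1)) σ) :
    ∀ f : ℝ[X], f.natDegree ≤ 2 * m - 1 → Integrable (fun x => f.eval x) σ := by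
  intro f hf
  have hlt : f.natDegree < 2 * m := by omega
  have : (fun x => f.eval x) = fun x => ∑ k ∈ Finset.range (2 * m), f.coeff k * x ^ k := by
    funext x
    exact eval_eq_sum_range' hlt x
  rw [this]
  exact integrable_finset_sum _ fun k hk =>
    (integrable_pow hint k (by simp only [Finset.mem_range] at hk; omega)).const_mul _

lemma sq_integral_pos [IsProbabilityMeasure σ] (hm : 1 ≤ m)
    (hint : Integrable (fun x => |x| ^ (2 * m - 1)) σ)
    (hna : ∀ F : Finset ℝ, σ ((↑F : Set ℝ))ᶜ = 0 → m ≤ F.card)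
    (q : ℝ[X]) (hq : q ≠ 0) (hdeg : q.natDegree ≤ m - 1) :
    0 < ∫ x, (q.eval x) ^ 2 ∂σ := by
  classical
  have hi2 : Integrable (fun x => (q.eval x) ^ 2) σ := by
    have := integrable_poly hm hint (q ^ 2)
      (by rw [natDegree_pow]; omega)
    simpa [eval_pow] using this
  have hnn : 0 ≤ fun x => (q.eval x) ^ 2 := fun x => sq_nonneg _
  rcases ((integral_nonneg hnn).lt_or_eq) with hpos | heq
  · exact hpos
  · exfalso
    have hae : (fun x => (q.eval x) ^ 2) =ᵐ[σ] 0 :=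
      (integral_eq_zero_iff_of_nonneg hnn hi2).mp heq.symm
    have hnull : σ {x : ℝ | ¬ (q.eval x) ^ 2 = (0 : ℝ → ℝ) x} = 0 := hae
    have hsub : ((↑q.roots.toFinset : Set ℝ))ᶜ ⊆ {x : ℝ | ¬ (q.eval x) ^ 2 = (0 : ℝ → ℝ) x} := by
      intro x hx
      simp only [Set.mem_compl_iff, Finset.mem_coe, Multiset.mem_toFinset, mem_roots', not_and,
        IsRoot.def] at hx
      have hxne : q.eval x ≠ 0 := fun h0 => hx hq h0
      simp only [Set.mem_setOf_eq, Pi.zero_apply]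
      exact pow_ne_zero 2 hxne
    have := hna q.roots.toFinset (measure_mono_null hsub hnull)
    have hcard : q.roots.toFinset.card ≤ q.natDegree :=
      le_trans (Multiset.toFinset_card_le _) (q.card_roots' )
    omega


lemma exists_orth [IsProbabilityMeasure σ] (hm : 1 ≤ m)
    (hint : Integrable (fun x => |x| ^ (2 * m - 1)) σ)
    (hna : ∀ F : Finset ℝ, σ ((↑F : Set ℝ))ᶜ = 0 → m ≤ F.card) :
    ∃ P : ℝ[X], P.Monic ∧ P.natDegree = m ∧
      ∀ q : ℝ[X], q.natDegree ≤ m - 1 → ∫ x, P.eval x * q.eval x ∂σ = 0 := by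
  classical
  set c : ℕ → ℝ := fun j => ∫ x, x ^ j ∂σ with hc
  set H : Matrix (Fin m) (Fin m) ℝ := Matrix.of (fun k i => c ((k : ℕ) + (i : ℕ))) with hH
  have hmv : ∀ (x : Fin m → ℝ) (k : Fin m),
      H.mulVec x k = ∑ i : Fin m, c ((k : ℕ) + (i : ℕ)) * x i := by
    intro x k
    simp [hH, Matrix.mulVec, dotProduct]
  -- the quadratic form identity
  have hquad : ∀ x : Fin m → ℝ,
      ∫ t, (∑ i : Fin m, x i * t ^ (i : ℕ)) ^ 2 ∂σ = ∑ k, x k * H.mulVec x k := by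
    intro x
    have hexp : ∀ t : ℝ, (∑ i : Fin m, x i * t ^ (i : ℕ)) ^ 2
        = ∑ k : Fin m, ∑ i : Fin m, x k * x i * t ^ ((k : ℕ) + (i : ℕ)) := by
      intro t
      rw [sq, Finset.sum_mul_sum]
      exact Finset.sum_congr rfl fun k _ => Finset.sum_congr rfl fun i _ => by
        rw [pow_add]; ring
    simp_rw [hexp]
    rw [integral_finset_sum]
    swap
    · intro k _
      refine integrable_finset_sum _ fun i _ => ?_
      exact (integrable_pow hint _ (by omega)).const_mul _
    have : ∀ k : Fin m, ∫ t, ∑ i : Fin m, x k * x i * t ^ ((k:ℕ)+(i:ℕ)) ∂σ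
        = ∑ i : Fin m, x k * x i * c ((k:ℕ)+(i:ℕ)) := by
      intro k
      rw [integral_finset_sum]
      · exact Finset.sum_congr rfl fun i _ => integral_const_mul _ _
      · exact fun i _ => (integrable_pow hint _ (by omega)).const_mul _
    simp_rw [this, hmv, Finset.mul_sum]
    exact Finset.sum_congr rfl fun k _ => Finset.sum_congr rfl fun i _ => by ring
  -- kernel triviality
  have hker : ∀ x : Fin m → ℝ, H.mulVec x = 0 → x = 0 := by
    intro x hx
    by_contra hx0
    set q : ℝ[X] := ∑ i : Fin m, monomial (i : ℕ) (x i) with hq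
    have hqeval : ∀ t : ℝ, q.eval t = ∑ i : Fin m, x i * t ^ (i : ℕ) := by
      intro t
      rw [hq, eval_finset_sum]
      exact Finset.sum_congr rfl fun i _ => by rw [eval_monomial]
    have hqcoeff : ∀ k : Fin m, q.coeff (k : ℕ) = x k := by
      intro k
      rw [hq, finset_sum_coeff]
      rw [Finset.sum_eq_single k]
      · rw [coeff_monomial, if_pos rfl]
      · intro i _ hik
        rw [coeff_monomial, if_neg (fun hik' => hik (Fin.ext hik'))]
      · intro hk; exact absurd (Finset.mem_univ k) hk
    have hqne : q ≠ 0 := by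
      intro h0
      apply hx0
      funext i
      have := hqcoeff i
      rw [h0, coeff_zero] at this
      exact (this.symm).trans rfl
    have hqdeg : q.natDegree ≤ m - 1 :=
      natDegree_sum_le_of_forall_le _ _ fun i _ =>
        le_trans (natDegree_monomial_le _) (by omega)
    have hpos := sq_integral_pos hm hint hna q hqne hqdeg
    have : ∫ t, (q.eval t) ^ 2 ∂σ = 0 := by
      simp_rw [hqeval]
      rw [hquad x, hx]
      simp
    rw [this] at hpos
    exact lt_irrefl 0 hpos
  -- surjectivity
  have hinj : Function.Injective H.mulVecLin := by
    intro a b hab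
    simp only [Matrix.mulVecLin_apply] at hab
    have h0 : H.mulVec (a - b) = 0 := by
      rw [Matrix.mulVec_sub, hab, sub_self]
    exact sub_eq_zero.mp (hker _ h0)
  obtain ⟨r, hr⟩ := (LinearMap.injective_iff_surjective.mp hinj) (fun k : Fin m => c (m + (k:ℕ)))
  simp only [Matrix.mulVecLin_apply] at hr
  have hrk : ∀ k : Fin m, ∑ i : Fin m, c ((k:ℕ) + (i:ℕ)) * r i = c (m + (k:ℕ)) := by
    intro k
    rw [← hmv r k, hr]
  clear hr hinj hker hquad hmv
  -- the orthogonal polynomial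
  set S : ℝ[X] := ∑ i : Fin m, monomial (i : ℕ) (r i) with hS
  have hSdeg : S.natDegree ≤ m - 1 :=
    natDegree_sum_le_of_forall_le _ _ fun i _ =>
      le_trans (natDegree_monomial_le _) (by omega)
  set P : ℝ[X] := X ^ m - S with hP
  have hPmonic : P.Monic := by
    apply monic_X_pow_sub
    calc S.degree ≤ (S.natDegree : WithBot ℕ) := degree_le_natDegree
    _ < (m : WithBot ℕ) := by exact_mod_cast (by omega : S.natDegree < m)
  have hPdeg : P.natDegree = m := by
    rw [hP]
    have hx : (X ^ m : ℝ[X]).natDegree = m := natDegree_X_pow m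
    have := natDegree_sub_eq_left_of_natDegree_lt
      (p := (X ^ m : ℝ[X])) (q := S) (by rw [hx]; omega)
    rw [this, hx]
  have hPeval : ∀ t : ℝ, P.eval t = t ^ m - ∑ i : Fin m, r i * t ^ (i : ℕ) := by
    intro t
    rw [hP, eval_sub, eval_pow, eval_X, hS, eval_finset_sum]
    congr 1
    exact Finset.sum_congr rfl fun i _ => by rw [eval_monomial]
  -- orthogonality against monomials
  have horthk : ∀ k : ℕ, k < m → ∫ t, P.eval t * t ^ k ∂σ = 0 := by
    intro k hk
    have hexp : ∀ t : ℝ, P.eval t * t ^ k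
        = t ^ (m + k) - ∑ i : Fin m, r i * t ^ ((i : ℕ) + k) := by
      intro t
      rw [hPeval, sub_mul, Finset.sum_mul, pow_add]
      congr 1
      exact Finset.sum_congr rfl fun i _ => by rw [pow_add]; ring
    simp_rw [hexp]
    rw [integral_sub (integrable_pow hint _ (by omega))
      (integrable_finset_sum _ fun i _ => (integrable_pow hint _ (by omega)).const_mul _)]
    rw [integral_finset_sum _ fun i _ => (integrable_pow hint _ (by omega)).const_mul _]
    simp_rw [integral_const_mul]
    have := hrk ⟨k, hk⟩
    simp only [Fin.val_mk] at this
    rw [sub_eq_zero]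
    have hfold : (∫ (a : ℝ), a ^ (m + k) ∂σ) = c (m + k) := rfl
    rw [hfold, ← this]
    refine Finset.sum_congr rfl fun i _ => ?_
    have hfold2 : (∫ (a : ℝ), a ^ ((i:ℕ) + k) ∂σ) = c ((i:ℕ) + k) := rfl
    rw [hfold2, Nat.add_comm (i:ℕ) k]
    ring
  -- general orthogonality
  refine ⟨P, hPmonic, hPdeg, ?_⟩
  intro q hq
  have hqlt : q.natDegree < m := by omega
  have hPk : ∀ k, k < m → Integrable (fun t : ℝ => P.eval t * t ^ k) σ := by
    intro k hk
    have : (fun t : ℝ => P.eval t * t ^ k) = fun t => (P * X ^ k).eval t := by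
      funext t; rw [eval_mul, eval_pow, eval_X]
    rw [this]
    apply integrable_poly hm hint
    have : (P * X ^ k).natDegree = m + k := by
      rw [natDegree_mul hPmonic.ne_zero (pow_ne_zero _ X_ne_zero), hPdeg, natDegree_X_pow]
    omega
  have hexp : ∀ t : ℝ, P.eval t * q.eval t
      = ∑ k ∈ Finset.range m, q.coeff k * (P.eval t * t ^ k) := by
    intro t
    rw [eval_eq_sum_range' hqlt, Finset.mul_sum]
    exact Finset.sum_congr rfl fun k _ => by ring
  simp_rw [hexp]
  rw [integral_finset_sum _ fun k hk =>
    (hPk k (Finset.mem_range.mp hk)).const_mul _]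
  simp_rw [integral_const_mul]
  refine Finset.sum_eq_zero fun k hk => ?_
  rw [horthk k (Finset.mem_range.mp hk), mul_zero]


lemma roots_card [IsProbabilityMeasure σ] (hm : 1 ≤ m)
    (hint : Integrable (fun x => |x| ^ (2 * m - 1)) σ)
    (hna : ∀ F : Finset ℝ, σ ((↑F : Set ℝ))ᶜ = 0 → m ≤ F.card)
    (P : ℝ[X]) (hPmonic : P.Monic) (hPdeg : P.natDegree = m)
    (horth : ∀ q : ℝ[X], q.natDegree ≤ m - 1 → ∫ x, P.eval x * q.eval x ∂σ = 0) :
    P.roots.toFinset.card = m := by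
  classical
  have hP0 : P ≠ 0 := hPmonic.ne_zero
  obtain ⟨u, hu⟩ := prod_multiset_X_sub_C_dvd P
  set Rm : ℝ[X] := (P.roots.map fun z => X - C z).prod with hRm
  have hu0 : u ≠ 0 := fun h => hP0 (by rw [hu, h, mul_zero])
  have hRm0 : Rm ≠ 0 := fun h => hP0 (by rw [hu, h, zero_mul])
  have huroots : u.roots = 0 := by
    have h2 : P.roots = Rm.roots + u.roots := by
      conv_lhs => rw [hu]
      exact roots_mul (by rw [← hu]; exact hP0)
    rw [hRm, roots_multiset_prod_X_sub_C] at h2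
    exact (left_eq_add.mp h2)
  have hune : ∀ x : ℝ, u.eval x ≠ 0 := by
    intro x hx
    have : x ∈ u.roots := mem_roots'.mpr ⟨hu0, hx⟩
    rw [huroots] at this
    exact absurd this (Multiset.notMem_zero x)
  set sg : ℝ := if 0 < u.eval 0 then 1 else -1 with hsgdef
  have hsgne : sg ≠ 0 := by
    rw [hsgdef]; split <;> norm_num
  have hIVT : ∀ a b : ℝ, u.eval a < 0 → 0 < u.eval b → False := by
    intro a b ha hb
    have h0mem : (0:ℝ) ∈ Set.uIcc (u.eval a) (u.eval b) :=
      Set.mem_uIcc.mpr (Or.inl ⟨ha.le, hb.le⟩)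
    obtain ⟨y, -, hy⟩ := intermediate_value_uIcc (u.continuous.continuousOn) h0mem
    exact hune y hy
  have hsg : ∀ x, 0 < sg * u.eval x := by
    intro x
    rw [hsgdef]
    by_cases hp : 0 < u.eval 0
    · rw [if_pos hp, one_mul]
      rcases (hune x).lt_or_gt with hx | hx
      · exact absurd (hIVT x 0 hx hp) id
      · exact hx
    · rw [if_neg hp]
      have h0 : u.eval 0 < 0 := (hune 0).lt_or_gt.resolve_right hp
      rcases (hune x).lt_or_gt with hx | hx
      · nlinarith
      · exact absurd (hIVT 0 x h0 hx) id
  set G : Finset ℝ := P.roots.toFinset with hG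
  set Fo : Finset ℝ := G.filter (fun z => Odd (P.rootMultiplicity z)) with hFo
  have hFoG : Fo ⊆ G := Finset.filter_subset _ _
  have hFocard : m ≤ Fo.card := by
    by_contra hcon
    push_neg at hcon
    set qs : ℝ[X] := ∏ z ∈ Fo, (X - C z) with hqs
    have hqs0 : qs ≠ 0 :=
      Finset.prod_ne_zero_iff.mpr fun z _ => X_sub_C_ne_zero z
    have hqsdeg : qs.natDegree = Fo.card := by
      rw [hqs, natDegree_prod _ _ fun z _ => X_sub_C_ne_zero z]
      simp [natDegree_X_sub_C]
    have hfact : ∀ x : ℝ, P.eval x * qs.eval x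
        = u.eval x * ∏ z ∈ G,
          (x - z) ^ (P.rootMultiplicity z + if Odd (P.rootMultiplicity z) then 1 else 0) := by
      intro x
      have hReval : Rm.eval x = ∏ z ∈ G, (x - z) ^ (P.rootMultiplicity z) := by
        rw [hRm, eval_multiset_prod, Multiset.map_map]
        have hmm : (P.roots.map (eval x ∘ fun z => X - C z)) = P.roots.map (fun z => x - z) := by
          apply Multiset.map_congr rfl
          intro z _
          simp
        rw [hmm, Finset.prod_multiset_map_count]
        refine Finset.prod_congr rfl fun z _ => ?_
        rw [count_roots]
      have hqeval : qs.eval x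
          = ∏ z ∈ G, (x - z) ^ (if Odd (P.rootMultiplicity z) then 1 else 0) := by
        rw [hqs, eval_prod]
        simp_rw [eval_sub, eval_X, eval_C]
        rw [hFo, Finset.prod_filter]
        exact Finset.prod_congr rfl fun z _ => by split <;> simp
      conv_lhs => rw [hu, eval_mul]
      rw [hReval, hqeval, mul_comm _ (u.eval x), mul_assoc, ← Finset.prod_mul_distrib]
      simp_rw [← pow_add]
    have hnn : ∀ x : ℝ, 0 ≤ sg * (P.eval x * qs.eval x) := by
      intro x
      rw [hfact x, ← mul_assoc]
      apply mul_nonneg (hsg x).le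
      apply Finset.prod_nonneg
      intro z _
      apply Even.pow_nonneg
      rcases Nat.even_or_odd (P.rootMultiplicity z) with he | ho
      · rw [if_neg (Nat.not_odd_iff_even.mpr he), add_zero]
        exact he
      · rw [if_pos ho]
        exact ho.add_one
    have hintg : Integrable (fun x => sg * (P.eval x * qs.eval x)) σ := by
      have h1 : (fun x : ℝ => P.eval x * qs.eval x) = fun x => (P * qs).eval x := by
        funext x; rw [eval_mul]
      have hdeg2 : (P * qs).natDegree ≤ 2 * m - 1 := by
        rw [natDegree_mul hP0 hqs0, hPdeg, hqsdeg]; omega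
      have := (integrable_poly hm hint _ hdeg2).const_mul sg
      simpa [h1] using this
    have hzero : ∫ x, sg * (P.eval x * qs.eval x) ∂σ = 0 := by
      rw [integral_const_mul, horth qs (by omega), mul_zero]
    have hae : (fun x => sg * (P.eval x * qs.eval x)) =ᵐ[σ] 0 :=
      (integral_eq_zero_iff_of_nonneg hnn hintg).mp hzero
    have hnull : σ {x : ℝ | ¬ (sg * (P.eval x * qs.eval x)) = (0 : ℝ → ℝ) x} = 0 := hae
    have hsub : ((↑G : Set ℝ))ᶜ ⊆ {x : ℝ | ¬ (sg * (P.eval x * qs.eval x)) = (0 : ℝ → ℝ) x} := by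
      intro x hx
      simp only [Set.mem_compl_iff, Finset.mem_coe] at hx
      have hPx : P.eval x ≠ 0 := by
        intro h0
        exact hx (by rw [hG]; exact Multiset.mem_toFinset.mpr (mem_roots'.mpr ⟨hP0, h0⟩))
      have hqx : qs.eval x ≠ 0 := by
        intro h0
        rw [hqs, eval_prod] at h0
        obtain ⟨z, hzFo, hz0⟩ := Finset.prod_eq_zero_iff.mp h0
        simp only [eval_sub, eval_X, eval_C, sub_eq_zero] at hz0
        exact hx (hz0 ▸ hFoG hzFo)
      simp only [Set.mem_setOf_eq, Pi.zero_apply]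
      exact mul_ne_zero hsgne (mul_ne_zero hPx hqx)
    have hGcard := hna G (measure_mono_null hsub hnull)
    have hsum1 : ∑ z ∈ G, P.rootMultiplicity z = Multiset.card P.roots := by
      rw [hG]
      simp_rw [← count_roots]
      exact Multiset.toFinset_sum_count_eq _
    have hsum2 : ∑ z ∈ G, (if Odd (P.rootMultiplicity z) then 1 else 0) = Fo.card := by
      rw [hFo]
      exact (Finset.card_filter _ _).symm
    have hbig : 2 * G.card ≤ ∑ z ∈ G,
        (P.rootMultiplicity z + if Odd (P.rootMultiplicity z) then 1 else 0) := by
      have h2 : 2 * G.card = ∑ _z ∈ G, 2 := by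
        rw [Finset.sum_const, smul_eq_mul, mul_comm]
      rw [h2]
      refine Finset.sum_le_sum fun z hz => ?_
      have h1 : 1 ≤ P.rootMultiplicity z := by
        have := (rootMultiplicity_pos hP0).mpr
          (isRoot_of_mem_roots (Multiset.mem_toFinset.mp (hG ▸ hz)))
        omega
      rcases Nat.even_or_odd (P.rootMultiplicity z) with he | ho
      · have hne1 : P.rootMultiplicity z ≠ 1 := by
          intro h1'
          rw [h1'] at he
          exact (Nat.not_even_one) he
        rw [if_neg (Nat.not_odd_iff_even.mpr he)]
        omega
      · rw [if_pos ho]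
        omega
    have hcards : Multiset.card P.roots ≤ m := hPdeg ▸ P.card_roots'
    rw [Finset.sum_add_distrib, hsum1, hsum2] at hbig
    omega
  have hle : G.card ≤ m :=
    le_trans (le_trans (Multiset.toFinset_card_le _) P.card_roots') (le_of_eq hPdeg)
  have hge := Finset.card_le_card hFoG
  omega


lemma exists_gauss [IsProbabilityMeasure σ] (hm : 1 ≤ m)
    (hint : Integrable (fun x => |x| ^ (2 * m - 1)) σ)
    (hna : ∀ F : Finset ℝ, σ ((↑F : Set ℝ))ᶜ = 0 → m ≤ F.card) :
    ∃ (t : Fin m → ℝ) (w : Fin m → ℝ), StrictMono t ∧ (∀ i, 0 < w i) ∧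
      ∀ f : ℝ[X], f.natDegree ≤ 2 * m - 1 →
        ∫ x, f.eval x ∂σ = ∑ i, w i * f.eval (t i) := by
  classical
  obtain ⟨P, hPmonic, hPdeg, horth⟩ := exists_orth hm hint hna
  have hP0 := hPmonic.ne_zero
  have hG : P.roots.toFinset.card = m := roots_card hm hint hna P hPmonic hPdeg horth
  set nodes := P.roots.toFinset with hnodes
  have hinjOn : Set.InjOn (id : ℝ → ℝ) ↑nodes := Function.injective_id.injOn
  set wt : ℝ → ℝ := fun z => ∫ x, (Lagrange.basis nodes id z).eval x ∂σ with hwt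
  have hbdegree : ∀ z ∈ nodes, (Lagrange.basis nodes id z).natDegree = m - 1 := by
    intro z hz
    rw [Lagrange.natDegree_basis hinjOn hz, hG]
  have hbint : ∀ z ∈ nodes, Integrable (fun x => (Lagrange.basis nodes id z).eval x) σ :=
    fun z hz => integrable_poly hm hint _ (by rw [hbdegree z hz]; omega)
  have hexact : ∀ f : ℝ[X], f.natDegree ≤ 2 * m - 1 →
      ∫ x, f.eval x ∂σ = ∑ z ∈ nodes, wt z * f.eval z := by
    intro f hf
    set rem := f %ₘ P with hrem
    set g := f /ₘ P with hg
    have hdegP : P.degree = (m : ℕ) := by rw [degree_eq_natDegree hP0, hPdeg]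
    have hremlt : rem.degree < ((m : ℕ) : WithBot ℕ) := by
      rw [← hdegP]; exact degree_modByMonic_lt f hPmonic
    have hremnat : rem.natDegree ≤ m - 1 := by
      rcases eq_or_ne rem 0 with h0 | h0
      · rw [h0, natDegree_zero]; omega
      · have := (natDegree_lt_iff_degree_lt h0).mpr hremlt
        omega
    have hgdeg : g.natDegree ≤ m - 1 := by
      rw [hg, natDegree_divByMonic f hPmonic, hPdeg]
      omega
    have hsplit : ∀ x : ℝ, f.eval x = rem.eval x + P.eval x * g.eval x := by
      intro x
      conv_lhs => rw [← modByMonic_add_div f P]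
      rw [eval_add, eval_mul]
    have hremint : Integrable (fun x => rem.eval x) σ := integrable_poly hm hint _ (by omega)
    have hPgint : Integrable (fun x => P.eval x * g.eval x) σ := by
      have h1 : (fun x : ℝ => P.eval x * g.eval x) = fun x => (P * g).eval x :=
        funext fun x => (eval_mul).symm
      rw [h1]
      apply integrable_poly hm hint
      rcases eq_or_ne g 0 with h0 | h0
      · rw [h0, mul_zero, natDegree_zero]; omega
      · rw [natDegree_mul hP0 h0, hPdeg]; omega
    have hIf : ∫ x, f.eval x ∂σ = ∫ x, rem.eval x ∂σ := by
      simp_rw [hsplit]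
      rw [integral_add hremint hPgint, horth g hgdeg, add_zero]
    have hremdeglt : rem.degree < (#nodes : ℕ) := by rw [hG]; exact hremlt
    have hinterp := Lagrange.eq_interpolate hinjOn hremdeglt
    have hIr : ∫ x, rem.eval x ∂σ = ∑ z ∈ nodes, wt z * rem.eval z := by
      conv_lhs => rw [hinterp]
      simp_rw [Lagrange.interpolate_apply, eval_finset_sum, eval_mul, eval_C]
      rw [integral_finset_sum _ (fun z hz => ((hbint z hz).const_mul _))]
      refine Finset.sum_congr rfl fun z hz => ?_
      rw [integral_const_mul, id_eq, mul_comm]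
    have hR : ∑ z ∈ nodes, wt z * f.eval z = ∑ z ∈ nodes, wt z * rem.eval z := by
      refine Finset.sum_congr rfl fun z hz => ?_
      have hz0 : P.eval z = 0 := isRoot_of_mem_roots (Multiset.mem_toFinset.mp hz)
      rw [hsplit z, hz0, zero_mul, add_zero]
    rw [hIf, hIr, hR]
  have hwpos : ∀ z ∈ nodes, 0 < wt z := by
    intro z hz
    have hb0 : Lagrange.basis nodes id z ≠ 0 := Lagrange.basis_ne_zero hinjOn hz
    have hsq := hexact ((Lagrange.basis nodes id z) ^ 2)
      (by rw [natDegree_pow, hbdegree z hz]; omega)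
    have hb1 : (Lagrange.basis nodes id z).eval z = 1 :=
      Lagrange.eval_basis_self hinjOn hz
    have hrhs : ∑ y ∈ nodes, wt y * ((Lagrange.basis nodes id z) ^ 2).eval y = wt z := by
      rw [Finset.sum_eq_single z]
      · rw [eval_pow, hb1, one_pow, mul_one]
      · intro y hy hyz
        have hb2 : (Lagrange.basis nodes id z).eval y = 0 :=
          Lagrange.eval_basis_of_ne (v := (id : ℝ → ℝ)) (Ne.symm hyz) hy
        rw [eval_pow, hb2, zero_pow (by norm_num), mul_zero]
      · intro hzn; exact absurd hz hzn
    have hlhs : 0 < ∫ x, ((Lagrange.basis nodes id z) ^ 2).eval x ∂σ := by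
      have := sq_integral_pos hm hint hna _ hb0 (le_of_eq (hbdegree z hz))
      simp_rw [eval_pow]
      exact this
    rw [hsq, hrhs] at hlhs
    exact hlhs
  set e := nodes.orderIsoOfFin hG with he
  refine ⟨fun i => (e i : ℝ), fun i => wt (e i), ?_, ?_, ?_⟩
  · intro a b hab
    exact Subtype.coe_lt_coe.mpr (e.strictMono hab)
  · intro i
    exact hwpos _ (e i).2
  · intro f hf
    rw [hexact f hf]
    calc ∑ z ∈ nodes, wt z * f.eval z
        = ∑ z : nodes, wt (z : ℝ) * f.eval (z : ℝ) :=
          (Finset.sum_attach nodes _).symm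
      _ = ∑ i : Fin m, wt ((e i : ℝ)) * f.eval ((e i : ℝ)) :=
          (Equiv.sum_comp e.toEquiv (fun z : nodes => wt (z : ℝ) * f.eval (z : ℝ))).symm


lemma padding (hm : 1 ≤ m) (t : Fin m → ℝ) (w : Fin m → ℝ) (ht : StrictMono t)
    (hw : ∀ i, 0 < w i) :
    ∃ (z : Fin (2 * m + 1) → ℝ) (lam : Fin (2 * m + 1) → ℝ),
      StrictMono z ∧ (∀ i, 0 < lam i) ∧
      ∀ f : ℝ[X], f.natDegree ≤ 2 * m - 1 →
        ∑ i, lam i * f.eval (z i) = ∑ i, w i * f.eval (t i) := by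
  classical
  set T : ℕ → ℝ := fun i => t ⟨min i (m - 1), by omega⟩ with hT
  have hTeq : ∀ i : Fin m, T (i : ℕ) = t i := by
    intro i
    rw [hT]
    exact congrArg t (Fin.val_injective
      (show min (i : ℕ) (m - 1) = (i : ℕ) by have := i.isLt; omega))
  have hTlt : ∀ a b : ℕ, a < b → b ≤ m - 1 → T a < T b := by
    intro a b hab hbm
    rw [hT]
    exact ht (by rw [Fin.mk_lt_mk]; omega)
  set z' : ℕ → ℝ := fun k =>
    if k % 2 = 1 then T (k / 2)
    else if k = 0 then T 0 - 1
    else if k = 2 * m then T (m - 1) + 1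
    else (T (k / 2 - 1) + T (k / 2)) / 2 with hz'
  have hstep : ∀ k, k < 2 * m → z' k < z' (k + 1) := by
    intro k hk
    rcases Nat.even_or_odd k with he | ho
    · have h0 : k % 2 = 0 := Nat.even_iff.mp he
      have e2 : z' (k + 1) = T ((k + 1) / 2) := by
        rw [hz']; simp only []
        rw [if_pos (by omega)]
      have hd : (k + 1) / 2 = k / 2 := by omega
      by_cases hk0 : k = 0
      · subst hk0
        have e1 : z' 0 = T 0 - 1 := by
          rw [hz']
          norm_num
        rw [e1, e2]
        norm_num
      · have e1 : z' k = (T (k / 2 - 1) + T (k / 2)) / 2 := by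
          rw [hz']; simp only []
          rw [if_neg (by omega), if_neg hk0, if_neg (by omega)]
        rw [e1, e2, hd]
        have : T (k / 2 - 1) < T (k / 2) := hTlt _ _ (by omega) (by omega)
        linarith
    · have h1 : k % 2 = 1 := Nat.odd_iff.mp ho
      have e1 : z' k = T (k / 2) := by
        rw [hz']; simp only []
        rw [if_pos h1]
      by_cases hk2m : k + 1 = 2 * m
      · have e2 : z' (k + 1) = T (m - 1) + 1 := by
          rw [hz']; simp only []
          rw [if_neg (by omega), if_neg (by omega), if_pos hk2m]
        have hd : k / 2 = m - 1 := by omega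
        rw [e1, e2, hd]
        linarith
      · have e2 : z' (k + 1) = (T ((k + 1) / 2 - 1) + T ((k + 1) / 2)) / 2 := by
          rw [hz']; simp only []
          rw [if_neg (by omega), if_neg (by omega), if_neg hk2m]
        have hd1 : (k + 1) / 2 - 1 = k / 2 := by omega
        have hd2 : (k + 1) / 2 = k / 2 + 1 := by omega
        rw [e1, e2, hd1, hd2]
        have : T (k / 2) < T (k / 2 + 1) := hTlt _ _ (by omega) (by omega)
        linarith
  set z : Fin (2 * m + 1) → ℝ := fun i => z' (i : ℕ) with hz
  have hzmono : StrictMono z := by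
    rw [Fin.strictMono_iff_lt_succ]
    intro i
    have h1 : ((Fin.castSucc i : Fin (2 * m + 1)) : ℕ) = (i : ℕ) := rfl
    have h2 : ((Fin.succ i : Fin (2 * m + 1)) : ℕ) = (i : ℕ) + 1 := rfl
    rw [hz]
    simp only [h1, h2]
    exact hstep _ i.isLt
  have hzinj : Function.Injective z := hzmono.injective
  have hzodd : ∀ i : Fin (2 * m + 1), (i : ℕ) % 2 = 1 → z i = T ((i : ℕ) / 2) := by
    intro i hi
    rw [hz]; simp only []
    rw [hz']; simp only []
    rw [if_pos hi]
  -- kernel vector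
  set v : Fin (2 * m + 1) → ℝ := fun i => ∏ j ∈ Finset.univ.erase i, (z i - z j)⁻¹ with hv
  have herase : ∀ i : Fin (2 * m + 1),
      Finset.univ.erase i = Finset.Iio i ∪ Finset.Ioi i := by
    intro i
    ext j
    simp only [Finset.mem_erase, Finset.mem_univ, and_true, Finset.mem_union,
      Finset.mem_Iio, Finset.mem_Ioi]
    constructor
    · intro hne; exact lt_or_gt_of_ne hne
    · intro hlg; rcases hlg with h | h
      · exact ne_of_lt h
      · exact ne_of_gt h
  have hdisj : ∀ i : Fin (2 * m + 1), Disjoint (Finset.Iio i) (Finset.Ioi i) := by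
    intro i
    rw [Finset.disjoint_left]
    intro j hj1 hj2
    rw [Finset.mem_Iio] at hj1
    rw [Finset.mem_Ioi] at hj2
    exact absurd (hj1.trans hj2) (lt_irrefl j)
  have hDval : ∀ i : Fin (2 * m + 1), ∏ j ∈ Finset.univ.erase i, (z i - z j)
      = (∏ j ∈ Finset.Iio i, (z i - z j)) *
        ((-1 : ℝ) ^ (2 * m - (i : ℕ)) * ∏ j ∈ Finset.Ioi i, (z j - z i)) := by
    intro i
    rw [herase i, Finset.prod_union (hdisj i)]
    congr 1
    have hcard : (Finset.Ioi i).card = 2 * m - (i : ℕ) := by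
      rw [Fin.card_Ioi]
      omega
    rw [← hcard]
    have : ∀ j ∈ Finset.Ioi i, z i - z j = (-1) * (z j - z i) := by
      intro j _; ring
    rw [Finset.prod_congr rfl this, Finset.prod_mul_distrib, Finset.prod_const]
  have hApos : ∀ i : Fin (2 * m + 1), 0 < ∏ j ∈ Finset.Iio i, (z i - z j) := by
    intro i
    refine Finset.prod_pos fun j hj => ?_
    rw [Finset.mem_Iio] at hj
    exact sub_pos.mpr (hzmono hj)
  have hBpos : ∀ i : Fin (2 * m + 1), 0 < ∏ j ∈ Finset.Ioi i, (z j - z i) := by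
    intro i
    refine Finset.prod_pos fun j hj => ?_
    rw [Finset.mem_Ioi] at hj
    exact sub_pos.mpr (hzmono hj)
  have hvpos : ∀ i : Fin (2 * m + 1), (i : ℕ) % 2 = 0 → 0 < v i := by
    intro i hi
    rw [hv]; simp only []
    rw [Finset.prod_inv_distrib]
    apply inv_pos.mpr
    rw [hDval i]
    have hpow : (-1 : ℝ) ^ (2 * m - (i : ℕ)) = 1 :=
      Even.neg_one_pow (Nat.even_iff.mpr (by have := i.isLt; omega))
    rw [hpow, one_mul]
    exact mul_pos (hApos i) (hBpos i)
  have hvneg : ∀ i : Fin (2 * m + 1), (i : ℕ) % 2 = 1 → v i < 0 := by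
    intro i hi
    rw [hv]; simp only []
    rw [Finset.prod_inv_distrib]
    apply inv_lt_zero.mpr
    rw [hDval i]
    have hpow : (-1 : ℝ) ^ (2 * m - (i : ℕ)) = -1 :=
      Odd.neg_one_pow (Nat.odd_iff.mpr (by have := i.isLt; omega))
    rw [hpow]
    nlinarith [hApos i, hBpos i]
  have hvsum : ∀ f : ℝ[X], f.natDegree ≤ 2 * m - 1 →
      ∑ i, v i * f.eval (z i) = 0 := by
    intro f hf
    exact dd_sum (n := 2 * m) z hzinj f (by omega)
  -- weights
  set W : Fin (2 * m + 1) → ℝ := fun i =>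
    if h : (i : ℕ) % 2 = 1 then w ⟨(i : ℕ) / 2, by have := i.isLt; omega⟩ else 0 with hW
  have hre : ∀ G : ℝ → ℝ,
      ∑ i, W i * G (z i) = ∑ j, w j * G (t j) := by
    intro G
    rw [← Finset.sum_filter_of_ne (p := fun i : Fin (2 * m + 1) => (i : ℕ) % 2 = 1)]
    swap
    · intro i _ hne
      by_contra hodd
      rw [hW] at hne; simp only [] at hne
      rw [dif_neg hodd, zero_mul] at hne
      exact hne rfl
    refine Finset.sum_bij' (fun i hi => (⟨(i : ℕ) / 2, by
        have := i.isLt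
        simp only [Finset.mem_filter, Finset.mem_univ, true_and] at hi
        omega⟩ : Fin m))
      (fun j hj => (⟨2 * (j : ℕ) + 1, by have := j.isLt; omega⟩ : Fin (2 * m + 1)))
      ?_ ?_ ?_ ?_ ?_
    · intro i hi; exact Finset.mem_univ _
    · intro j hj
      simp only [Finset.mem_filter, Finset.mem_univ, true_and]
      omega
    · intro i hi
      simp only [Finset.mem_filter, Finset.mem_univ, true_and] at hi
      exact Fin.val_injective (show 2 * ((i : ℕ) / 2) + 1 = (i : ℕ) by omega)
    · intro j hj
      exact Fin.val_injective (show (2 * (j : ℕ) + 1) / 2 = (j : ℕ) by omega)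
    · intro i hi
      simp only [Finset.mem_filter, Finset.mem_univ, true_and] at hi
      have hzi : z i = t ⟨(i : ℕ) / 2, by have := i.isLt; omega⟩ := by
        rw [hzodd i hi]
        exact hTeq ⟨(i : ℕ) / 2, by have := i.isLt; omega⟩
      rw [hW]; simp only []
      rw [dif_pos hi, hzi]
  -- epsilon
  set ε : ℝ := Finset.univ.inf' (show (Finset.univ : Finset (Fin (2 * m + 1))).Nonempty from ⟨0, Finset.mem_univ 0⟩)
    (fun i : Fin (2 * m + 1) => if (i : ℕ) % 2 = 1 then W i / (2 * (-(v i))) else 1) with hε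
  have hεpos : 0 < ε := by
    rw [hε, Finset.lt_inf'_iff]
    intro i _
    by_cases hi : (i : ℕ) % 2 = 1
    · rw [if_pos hi]
      apply div_pos
      · rw [hW]; simp only []
        rw [dif_pos hi]
        exact hw _
      · have := hvneg i hi
        linarith
    · rw [if_neg hi]
      norm_num
  have hεle : ∀ i : Fin (2 * m + 1), (i : ℕ) % 2 = 1 → ε ≤ W i / (2 * (-(v i))) := by
    intro i hi
    have := Finset.inf'_le (b := i)
      (fun i : Fin (2 * m + 1) => if (i : ℕ) % 2 = 1 then W i / (2 * (-(v i))) else 1)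
      (Finset.mem_univ i)
    rw [if_pos hi] at this
    rw [hε]
    exact this
  set lam : Fin (2 * m + 1) → ℝ := fun i => W i + ε * v i with hlam
  have hlampos : ∀ i, 0 < lam i := by
    intro i
    rw [hlam]; simp only []
    rcases Nat.even_or_odd (i : ℕ) with he | ho
    · have hi0 : (i : ℕ) % 2 = 0 := Nat.even_iff.mp he
      have hWi : W i = 0 := by rw [hW]; simp only []; rw [dif_neg (by omega)]
      rw [hWi, zero_add]
      exact mul_pos hεpos (hvpos i hi0)
    · have hi1 : (i : ℕ) % 2 = 1 := Nat.odd_iff.mp ho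
      have hWi : 0 < W i := by
        rw [hW]; simp only []; rw [dif_pos hi1]; exact hw _
      have hvi := hvneg i hi1
      have hb := hεle i hi1
      have hv2 : 0 < -(v i) := by linarith
      have hb2 : ε * (2 * (-(v i))) ≤ W i := (le_div_iff₀ (by linarith)).mp hb
      nlinarith
  refine ⟨z, lam, hzmono, hlampos, ?_⟩
  intro f hf
  have hsplit : ∑ i, lam i * f.eval (z i)
      = ∑ i, W i * f.eval (z i) + ε * ∑ i, v i * f.eval (z i) := by
    rw [Finset.mul_sum, ← Finset.sum_add_distrib]
    refine Finset.sum_congr rfl fun i _ => ?_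
    rw [hlam]; ring
  rw [hsplit, hvsum f hf, mul_zero, add_zero, hre f.eval]

end QuadAux

open QuadAux in
/-- If a probability measure `σ` with finite `(2m−1)`-st absolute moment is not purely atomic
with fewer than `m` atoms, then there is a quadrature formula for `σ` of degree at least
`2m−1` with exactly `2m+1` distinct nodes. -/
theorem quadrature_with_2m_plus_one_nodes
    (m : ℕ) (hm : 1 ≤ m) (σ : Measure ℝ) [IsProbabilityMeasure σ]
    (hint : Integrable (fun x => |x| ^ (2 * m - 1)) σ)
    (h : ¬ ∃ m' : ℕ, m' < m ∧ ∃ (a : Fin m' → ℝ) (w : Fin m' → ℝ≥0∞),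
      Function.Injective a ∧ (∀ i, w i ≠ 0) ∧ σ = ∑ i, w i • Measure.dirac (a i)) :
    ∃ (x : Fin (2 * m + 1) → ℝ) (lam : Fin (2 * m + 1) → ℝ),
      Function.Injective x ∧ (∀ i, 0 < lam i) ∧ ∑ i, lam i = 1 ∧
      ∀ j : ℕ, j ≤ 2 * m - 1 → ∑ i, lam i * x i ^ j = ∫ t, t ^ j ∂σ := by
  classical
  have hna : ∀ F : Finset ℝ, σ ((↑F : Set ℝ))ᶜ = 0 → m ≤ F.card := by
    intro F h0
    by_contra hlt
    push_neg at hlt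
    obtain ⟨m', hm', a, w, hinj, hww, heq⟩ := QuadAux.atomic_of_null_compl σ F h0
    exact h ⟨m', by omega, a, w, hinj, hww, heq⟩
  obtain ⟨t, w, ht, hw, hexact⟩ := QuadAux.exists_gauss hm hint hna
  obtain ⟨z, lam, hz, hlam, hquad⟩ := QuadAux.padding hm t w ht hw
  refine ⟨z, lam, hz.injective, hlam, ?_, ?_⟩
  · have h1 := hquad 1 (by simp)
    have h2 := hexact 1 (by simp)
    simp only [Polynomial.eval_one, mul_one] at h1 h2
    rw [h1, ← h2]
    simp
  · intro j hj
    have hdeg : (Polynomial.X ^ j : ℝ[X]).natDegree ≤ 2 * m - 1 := by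
      rw [Polynomial.natDegree_X_pow]
      exact hj
    have h1 := hquad (Polynomial.X ^ j) hdeg
    have h2 := hexact (Polynomial.X ^ j) hdeg
    simp only [Polynomial.eval_pow, Polynomial.eval_X] at h1 h2
    rw [h1, ← h2]
end

section
/- Let σ be a probability measure on ℝ with σ([0,1]) = 1 and let n ∈ ℕ. For 1 ≤ i ≤ n define y_i := min{ y ∈ [0,1] : σ([0,y]) ≥ i/n } (this minimum exists). Then for every integer j ≥ 1, | ∫ x^j dσ(x) − (1/n)·∑_{i=1}^n y_i^j | ≤ 1/n. -/
open MeasureTheory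

lemma sum_ite_card (n m : ℕ) : ∑ i : Fin n, (if m ≤ (i : ℕ) then (1:ℝ) else 0) = ((n - m : ℕ) : ℝ) := by
  rw [Fin.sum_univ_eq_sum_range (fun i => if m ≤ i then (1:ℝ) else 0)]
  rw [Finset.sum_boole]
  congr 1
  have : (Finset.range n).filter (fun i => m ≤ i) = Finset.Ico m n := by
    ext a
    simp [Finset.mem_filter, Finset.mem_range, Finset.mem_Ico, and_comm]
  rw [this, Nat.card_Ico]

/-- Simple approximation lemma: if `σ` is a probability measure on `[0,1]` and
`y_i := min{ y ∈ [0,1] : σ([0,y]) ≥ i/n }` for `1 ≤ i ≤ n`, then for every `j ≥ 1` the `j`-th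
moment of the uniform measure on the `y_i` differs from that of `σ` by at most `1/n`. -/
theorem simple_approximation
    (σ : Measure ℝ) [IsProbabilityMeasure σ] (hσ : σ (Set.Icc (0 : ℝ) 1) = 1)
    (n : ℕ) (hn : 0 < n) (y : Fin n → ℝ)
    (hy : ∀ i : Fin n, IsLeast {t : ℝ | t ∈ Set.Icc (0 : ℝ) 1 ∧
      ENNReal.ofReal (((i : ℕ) + 1 : ℝ) / n) ≤ σ (Set.Icc 0 t)} (y i))
    (j : ℕ) (hj : 1 ≤ j) :
    |(∫ t, t ^ j ∂σ) - (n : ℝ)⁻¹ * ∑ i, y i ^ j| ≤ 1 / n := by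
  have hn' : (0:ℝ) < n := Nat.cast_pos.mpr hn
  have hj1 : (1:ℝ) ≤ j := by exact_mod_cast hj
  have hj0 : j ≠ 0 := by omega
  have hjj : j - 1 + 1 = j := Nat.sub_add_cancel hj
  set ν : Measure ℝ := volume.restrict (Set.Ioc (0:ℝ) 1) with hν
  haveI hνfin : IsFiniteMeasure ν := by
    constructor
    rw [hν, Measure.restrict_apply_univ]
    simp [Real.volume_Ioc]
  have hcompl : σ (Set.Icc (0:ℝ) 1)ᶜ = 0 := by
    rw [measure_compl measurableSet_Icc (measure_ne_top σ _), hσ, measure_univ, tsub_self]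
  -- inner integral computation
  have hinner : ∀ x ∈ Set.Icc (0:ℝ) 1,
      ∫ t, (if t < x then (j:ℝ) * t ^ (j-1) else 0) ∂ν = x ^ j := by
    intro x hx
    have h1 : (fun t => if t < x then (j:ℝ) * t ^ (j-1) else 0)
        = (Set.Iio x).indicator (fun t => (j:ℝ) * t ^ (j-1)) := by
      funext t; simp [Set.indicator_apply, Set.mem_Iio]
    rw [h1, hν, integral_indicator measurableSet_Iio,
        Measure.restrict_restrict measurableSet_Iio]
    have h2 : Set.Iio x ∩ Set.Ioc (0:ℝ) 1 = Set.Ioo 0 x := by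
      ext t
      constructor
      · rintro ⟨h, h0, _⟩; exact ⟨h0, h⟩
      · rintro ⟨h0, h⟩; exact ⟨h, h0, le_trans h.le hx.2⟩
    rw [h2, ← MeasureTheory.integral_Ioc_eq_integral_Ioo,
        ← intervalIntegral.integral_of_le hx.1,
        intervalIntegral.integral_const_mul, integral_pow, hjj,
        zero_pow hj0]
    field_simp
    rw [Nat.cast_sub hj, Nat.cast_one]; ring
  -- integral of the density over (0,1] is 1
  have hf1 : ∫ t, ((j:ℝ) * t ^ (j-1)) ∂ν = 1 := by
    rw [hν, ← intervalIntegral.integral_of_le (zero_le_one),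
        intervalIntegral.integral_const_mul, integral_pow, hjj, zero_pow hj0]
    field_simp
    rw [Nat.cast_sub hj, Nat.cast_one]; ring
  -- integrability of individual ite terms
  have hIntf : Integrable (fun t => (j:ℝ) * t ^ (j-1)) ν := by
    rw [hν]
    exact (continuous_const.mul (continuous_pow _)).integrableOn_Ioc
  have hIntB : ∀ c : ℝ, Integrable (fun t => if t < c then (j:ℝ) * t ^ (j-1) else 0) ν := by
    intro c
    have h1 : (fun t => if t < c then (j:ℝ) * t ^ (j-1) else 0)
        = (Set.Iio c).indicator (fun t => (j:ℝ) * t ^ (j-1)) := by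
      funext t; simp [Set.indicator_apply, Set.mem_Iio]
    rw [h1]
    exact hIntf.indicator measurableSet_Iio
  -- Fubini for the σ side
  have hHmeas : Measurable (fun p : ℝ × ℝ => if p.2 < p.1 then (j:ℝ) * p.2 ^ (j-1) else 0) := by
    exact Measurable.ite (measurableSet_lt measurable_snd measurable_fst)
      ((measurable_snd.pow_const _).const_mul _) measurable_const
  have hIntProd : Integrable (fun p : ℝ × ℝ => if p.2 < p.1 then (j:ℝ) * p.2 ^ (j-1) else 0)
      (σ.prod ν) := by
    apply Integrable.mono' (integrable_const (j:ℝ)) hHmeas.aestronglyMeasurable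
    have hae : ∀ᵐ p : ℝ × ℝ ∂(σ.prod ν), p.2 ∈ Set.Ioc (0:ℝ) 1 := by
      rw [ae_iff]
      have : {p : ℝ × ℝ | ¬ p.2 ∈ Set.Ioc (0:ℝ) 1} = Set.univ ×ˢ (Set.Ioc (0:ℝ) 1)ᶜ := by
        ext p; simp
      rw [this, Measure.prod_prod, hν, Measure.restrict_apply (measurableSet_Ioc.compl)]
      simp
    filter_upwards [hae] with p hp
    rcases hp with ⟨hp0, hp1⟩
    rw [Real.norm_eq_abs]
    split
    · rw [abs_of_nonneg (by positivity)]
      calc (j:ℝ) * p.2 ^ (j-1) ≤ (j:ℝ) * 1 := by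
            have := pow_le_one₀ hp0.le hp1 (n := j-1)
            nlinarith
        _ = j := mul_one _
    · simp
  have hswap := MeasureTheory.integral_integral_swap
      (f := fun x t => if t < x then (j:ℝ) * t ^ (j-1) else 0) (μ := σ) (ν := ν)
      (by exact hIntProd)
  -- identify the σ-side
  have hmom : ∫ t, t ^ j ∂σ = ∫ t, ((j:ℝ) * t ^ (j-1) * (σ (Set.Ioi t)).toReal) ∂ν := by
    have h1 : ∫ x, x ^ j ∂σ = ∫ x, (∫ t, (if t < x then (j:ℝ) * t ^ (j-1) else 0) ∂ν) ∂σ := by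
      apply integral_congr_ae
      have haeIcc : ∀ᵐ x ∂σ, x ∈ Set.Icc (0:ℝ) 1 := by
        rw [ae_iff]
        exact hcompl
      filter_upwards [haeIcc] with x hx
      exact (hinner x hx).symm
    rw [h1, hswap]
    apply integral_congr_ae
    apply Filter.Eventually.of_forall
    intro t
    show (∫ x, (if t < x then (j:ℝ) * t ^ (j-1) else 0) ∂σ)
      = (j:ℝ) * t ^ (j-1) * (σ (Set.Ioi t)).toReal
    have h2 : (fun x => if t < x then (j:ℝ) * t ^ (j-1) else 0)
        = (Set.Ioi t).indicator (fun _ => (j:ℝ) * t ^ (j-1)) := by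
      funext x; simp [Set.indicator_apply, Set.mem_Ioi]
    rw [h2, integral_indicator_const _ measurableSet_Ioi, smul_eq_mul, mul_comm]
    rfl
  -- identify the sum side
  have hsum : (n : ℝ)⁻¹ * ∑ i, y i ^ j
      = ∫ t, ((n:ℝ)⁻¹ * ∑ i, (if t < y i then (j:ℝ) * t ^ (j-1) else 0)) ∂ν := by
    rw [integral_const_mul, integral_finset_sum _ (fun i _ => hIntB (y i))]
    congr 1
    apply Finset.sum_congr rfl
    intro i _
    exact (hinner (y i) (hy i).1.1).symm
  -- key pointwise estimate
  have key : ∀ t ∈ Set.Ioc (0:ℝ) 1,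
      |(σ (Set.Ioi t)).toReal - (n:ℝ)⁻¹ * ∑ i : Fin n, (if t < y i then (1:ℝ) else 0)| ≤ 1 / n := by
    intro t ht
    set F : ℝ := (σ (Set.Icc 0 t)).toReal with hF
    have hF0 : 0 ≤ F := ENNReal.toReal_nonneg
    have hF1 : F ≤ 1 := by
      rw [hF]
      have : σ (Set.Icc 0 t) ≤ 1 := prob_le_one
      calc (σ (Set.Icc 0 t)).toReal ≤ (1 : ENNReal).toReal :=
            ENNReal.toReal_mono (by simp) this
        _ = 1 := ENNReal.toReal_one
    have hIic : σ (Set.Iic t) = σ (Set.Icc 0 t) := by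
      apply le_antisymm
      · have hun : Set.Iic t ⊆ Set.Icc 0 t ∪ Set.Iio 0 := by
          intro x hx
          rcases le_or_gt 0 x with h | h
          · exact Or.inl ⟨h, hx⟩
          · exact Or.inr h
        calc σ (Set.Iic t) ≤ σ (Set.Icc 0 t ∪ Set.Iio 0) := measure_mono hun
          _ ≤ σ (Set.Icc 0 t) + σ (Set.Iio 0) := measure_union_le _ _
          _ = σ (Set.Icc 0 t) := by
              have : σ (Set.Iio 0) = 0 := by
                apply measure_mono_null _ hcompl
                intro x hx
                simp only [Set.mem_compl_iff, Set.mem_Icc]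
                intro h
                exact absurd h.1 (not_le.mpr hx)
              rw [this, add_zero]
      · exact measure_mono (fun x hx => hx.2)
    have hIoi : (σ (Set.Ioi t)).toReal = 1 - F := by
      have h1 : Set.Ioi t = (Set.Iic t)ᶜ := by simp
      rw [h1, measure_compl measurableSet_Iic (measure_ne_top σ _), measure_univ, hIic,
          ENNReal.toReal_sub_of_le prob_le_one (by simp), ENNReal.toReal_one]
    have hiff : ∀ i : Fin n, (t < y i ↔ F < (((i:ℕ):ℝ) + 1) / n) := by
      intro i
      have h1 : y i ≤ t ↔ ENNReal.ofReal (((i:ℕ) + 1 : ℝ) / n) ≤ σ (Set.Icc 0 t) := by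
        constructor
        · intro h
          exact le_trans (hy i).1.2 (measure_mono (Set.Icc_subset_Icc_right h))
        · intro h
          exact (hy i).2 ⟨⟨ht.1.le, ht.2⟩, h⟩
      have h2 : ENNReal.ofReal (((i:ℕ) + 1 : ℝ) / n) ≤ σ (Set.Icc 0 t)
          ↔ (((i:ℕ):ℝ) + 1) / n ≤ F := by
        rw [ENNReal.ofReal_le_iff_le_toReal (measure_ne_top σ _)]
      constructor
      · intro h
        by_contra hc
        exact absurd (h1.mpr (h2.mpr (not_lt.mp hc))) (not_le.mpr h)
      · intro h
        by_contra hc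
        exact absurd (h2.mp (h1.mp (not_lt.mp hc))) (not_le.mpr h)
    set m : ℕ := ⌊(n:ℝ) * F⌋₊ with hm
    have hmn : m ≤ n := by
      rw [hm]
      calc ⌊(n:ℝ) * F⌋₊ ≤ ⌊(n:ℝ)⌋₊ := Nat.floor_le_floor (by nlinarith)
        _ = n := Nat.floor_natCast n
    have hcount : ∑ i : Fin n, (if t < y i then (1:ℝ) else 0) = ((n - m : ℕ) : ℝ) := by
      rw [← sum_ite_card n m]
      apply Finset.sum_congr rfl
      intro i _
      congr 1
      rw [eq_iff_iff, hiff i]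
      rw [lt_div_iff₀ hn', mul_comm F,
        show (((i:ℕ):ℝ) + 1) = (((i:ℕ) + 1 : ℕ) : ℝ) by push_cast; ring,
        ← Nat.floor_lt (mul_nonneg hn'.le hF0)]
      omega
    rw [hIoi, hcount]
    have hcast : ((n - m : ℕ) : ℝ) = (n : ℝ) - m := by
      push_cast [Nat.cast_sub hmn]
      ring
    rw [hcast]
    have hfl1 : (m:ℝ) ≤ (n:ℝ) * F := Nat.floor_le (mul_nonneg hn'.le hF0)
    have hfl2 : (n:ℝ) * F < m + 1 := Nat.lt_floor_add_one _
    have heq : (1 - F) - (n:ℝ)⁻¹ * ((n:ℝ) - m) = (m:ℝ)/n - F := by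
      field_simp
      ring
    rw [heq, abs_sub_le_iff]
    constructor
    · have : (m:ℝ)/n ≤ F := (div_le_iff₀ hn').mpr (by nlinarith)
      have h1n : 0 < 1/(n:ℝ) := by positivity
      linarith
    · have : F ≤ (m:ℝ)/n + 1/n := by
        rw [← add_div, le_div_iff₀ hn']
        nlinarith
      linarith
  -- integrability of the two densities
  have hIntA : Integrable (fun t => (j:ℝ) * t ^ (j-1) * (σ (Set.Ioi t)).toReal) ν := by
    have hmeas : Measurable (fun t : ℝ => (σ (Set.Ioi t)).toReal) := by
      apply Measurable.ennreal_toReal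
      apply Antitone.measurable
      intro s t hst
      exact measure_mono (Set.Ioi_subset_Ioi hst)
    apply Integrable.mono' (integrable_const (j:ℝ))
      (((measurable_id.pow_const _).const_mul _).mul hmeas).aestronglyMeasurable
    filter_upwards [ae_restrict_mem measurableSet_Ioc] with t ht
    rcases ht with ⟨ht0, ht1⟩
    show ‖(j:ℝ) * t ^ (j-1) * (σ (Set.Ioi t)).toReal‖ ≤ j
    rw [Real.norm_eq_abs, abs_of_nonneg (mul_nonneg (mul_nonneg (Nat.cast_nonneg j) (pow_nonneg ht0.le _)) ENNReal.toReal_nonneg)]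
    have h1 : (σ (Set.Ioi t)).toReal ≤ 1 := by
      calc (σ (Set.Ioi t)).toReal ≤ (1 : ENNReal).toReal :=
            ENNReal.toReal_mono (by simp) prob_le_one
        _ = 1 := ENNReal.toReal_one
    have h2 : t ^ (j-1) ≤ 1 := pow_le_one₀ ht0.le ht1
    have ha0 : (0:ℝ) ≤ t ^ (j-1) := pow_nonneg ht0.le (j-1)
    have hja : (0:ℝ) ≤ (j:ℝ) * t ^ (j-1) := mul_nonneg (Nat.cast_nonneg j) ha0
    calc (j:ℝ) * t ^ (j-1) * (σ (Set.Ioi t)).toReal ≤ (j:ℝ) * t ^ (j-1) * 1 :=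
          mul_le_mul_of_nonneg_left h1 hja
      _ = (j:ℝ) * t ^ (j-1) := mul_one _
      _ ≤ (j:ℝ) * 1 := mul_le_mul_of_nonneg_left h2 (Nat.cast_nonneg j)
      _ = (j:ℝ) := mul_one _
  have hIntBsum : Integrable (fun t => (n:ℝ)⁻¹ * ∑ i : Fin n,
      (if t < y i then (j:ℝ) * t ^ (j-1) else 0)) ν := by
    exact (integrable_finset_sum _ (fun i _ => hIntB (y i))).const_mul _
  -- final estimate
  rw [hmom, hsum, ← integral_sub hIntA hIntBsum]
  have hbound := norm_integral_le_of_norm_le (μ := ν)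
    (f := fun t => (j:ℝ) * t ^ (j-1) * (σ (Set.Ioi t)).toReal
      - (n:ℝ)⁻¹ * ∑ i : Fin n, (if t < y i then (j:ℝ) * t ^ (j-1) else 0))
    (g := fun t => (n:ℝ)⁻¹ * ((j:ℝ) * t ^ (j-1)))
    (hIntf.const_mul _) ?_
  · rw [← Real.norm_eq_abs]
    calc ‖_‖ ≤ ∫ t, (n:ℝ)⁻¹ * ((j:ℝ) * t ^ (j-1)) ∂ν := hbound
      _ = (n:ℝ)⁻¹ * ∫ t, ((j:ℝ) * t ^ (j-1)) ∂ν := integral_const_mul _ _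
      _ = 1 / n := by rw [hf1, mul_one, one_div]
  · filter_upwards [ae_restrict_mem measurableSet_Ioc] with t ht
    have hsum2 : ∑ i : Fin n, (if t < y i then (j:ℝ) * t ^ (j-1) else 0)
        = (j:ℝ) * t ^ (j-1) * ∑ i : Fin n, (if t < y i then (1:ℝ) else 0) := by
      rw [Finset.mul_sum]
      apply Finset.sum_congr rfl
      intro i _
      split <;> ring
    rw [Real.norm_eq_abs, hsum2]
    have heq : (j:ℝ) * t ^ (j-1) * (σ (Set.Ioi t)).toReal
        - (n:ℝ)⁻¹ * ((j:ℝ) * t ^ (j-1) * ∑ i : Fin n, (if t < y i then (1:ℝ) else 0))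
        = (j:ℝ) * t ^ (j-1) * ((σ (Set.Ioi t)).toReal
          - (n:ℝ)⁻¹ * ∑ i : Fin n, (if t < y i then (1:ℝ) else 0)) := by ring
    rw [heq, abs_mul]
    have hft : 0 ≤ (j:ℝ) * t ^ (j-1) := mul_nonneg (by positivity) (pow_nonneg ht.1.le _)
    rw [abs_of_nonneg hft]
    calc (j:ℝ) * t ^ (j-1) * |(σ (Set.Ioi t)).toReal
          - (n:ℝ)⁻¹ * ∑ i : Fin n, (if t < y i then (1:ℝ) else 0)|
        ≤ (j:ℝ) * t ^ (j-1) * (1/n) := by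
          apply mul_le_mul_of_nonneg_left (key t ht) hft
      _ = (n:ℝ)⁻¹ * ((j:ℝ) * t ^ (j-1)) := by rw [one_div]; ring
end

section
/- Let σ be a probability measure on ℝ with σ([0,1]) = 1, let n ∈ ℕ, and for 1 ≤ i ≤ n let y_i := min{ y ∈ [0,1] : σ([0,y]) ≥ i/n }. Let k ≥ 2 be an integer with n ≥ k(k+3) and set ρ := (k−1)·R_σ(1/(k+3)). Then there exist s := ⌈n/(k+3)⌉ pairwise disjoint index sets I₁,…,I_s ⊆ {1,…,n}, each of size exactly k, such that for every 1 ≤ r ≤ s and all i, j ∈ I_r with i ≠ j: ρ/(3(k−1)) ≤ y_i ≤ 1 − ρ/(3(k−1)) and |y_i − y_j| ≥ ρ/(k−1). -/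
open MeasureTheory

/-- `Rsig σ δ` is the inverse modulus of continuity of the measure `σ`: the infimum of
lengths of closed intervals of `σ`-measure at least `δ`. -/
noncomputable def Rsig (σ : Measure ℝ) (δ : ℝ) : ℝ :=
  sInf {r : ℝ | ∃ x y : ℝ, x ≤ y ∧ ENNReal.ofReal δ ≤ σ (Set.Icc x y) ∧ r = y - x}

lemma Rsig_le (σ : Measure ℝ) (δ : ℝ) {x y : ℝ} (hxy : x ≤ y)
    (h : ENNReal.ofReal δ ≤ σ (Set.Icc x y)) : Rsig σ δ ≤ y - x := by
  apply csInf_le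
  · exact ⟨0, by rintro r ⟨a, b, hab, -, rfl⟩; linarith⟩
  · exact ⟨x, y, hxy, h, rfl⟩

lemma Rsig_nonneg (σ : Measure ℝ) (δ : ℝ) {x y : ℝ} (hxy : x ≤ y)
    (h : ENNReal.ofReal δ ≤ σ (Set.Icc x y)) : 0 ≤ Rsig σ δ := by
  refine le_csInf ⟨y - x, x, y, hxy, h, rfl⟩ ?_
  rintro r ⟨a, b, hab, -, rfl⟩; linarith

lemma measure_Ico_le (σ : Measure ℝ) {a : ℝ} {c : ENNReal}
    (h : ∀ x : ℝ, x < a → σ (Set.Icc 0 x) ≤ c) : σ (Set.Ico 0 a) ≤ c := by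
  rcases le_or_gt a 0 with ha | ha
  · rw [Set.Ico_eq_empty (not_lt.2 ha), measure_empty]
    exact zero_le
  · have hset : Set.Ico 0 a = ⋃ m : ℕ, Set.Icc 0 (a - 1/(m+1)) := by
      ext x
      simp only [Set.mem_Ico, Set.mem_iUnion, Set.mem_Icc]
      constructor
      · rintro ⟨hx0, hxa⟩
        obtain ⟨m, hm⟩ := exists_nat_one_div_lt (sub_pos.2 hxa)
        exact ⟨m, hx0, by linarith⟩
      · rintro ⟨m, hx0, hxm⟩
        have hpos : (0:ℝ) < 1/((m:ℝ)+1) := by positivity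
        exact ⟨hx0, by linarith⟩
    rw [hset, Directed.measure_iUnion]
    · apply iSup_le
      intro m
      apply h
      have hpos : (0:ℝ) < 1/((m:ℝ)+1) := by positivity
      linarith
    · apply Monotone.directed_le
      intro m m' hmm
      apply Set.Icc_subset_Icc_right
      have h1 : ((m:ℝ)+1) ≤ ((m':ℝ)+1) := by exact_mod_cast Nat.succ_le_succ hmm
      have : 1/((m':ℝ)+1) ≤ 1/((m:ℝ)+1) := one_div_le_one_div_of_le (by positivity) h1
      linarith

/-- If `σ` is a probability measure on `[0,1]`, `y_i := min{ y ∈ [0,1] : σ([0,y]) ≥ i/n }`,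
`k ≥ 2`, `n ≥ k(k+3)` and `ρ := (k−1)·R_σ(1/(k+3))`, then there exist `⌈n/(k+3)⌉` pairwise
disjoint index sets of size `k` on which the `y_i` satisfy the separation conditions. -/
theorem subsets_exist
    (σ : Measure ℝ) [IsProbabilityMeasure σ] (hσ : σ (Set.Icc (0 : ℝ) 1) = 1)
    (n k : ℕ) (hk : 2 ≤ k) (hn : k * (k + 3) ≤ n) (y : Fin n → ℝ)
    (hy : ∀ i : Fin n, IsLeast {t : ℝ | t ∈ Set.Icc (0 : ℝ) 1 ∧
      ENNReal.ofReal (((i : ℕ) + 1 : ℝ) / n) ≤ σ (Set.Icc 0 t)} (y i))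
    (ρ : ℝ) (hρ : ρ = ((k : ℝ) - 1) * Rsig σ (1 / (k + 3))) :
    ∃ I : Fin (⌈(n : ℝ) / ((k : ℝ) + 3)⌉₊) → Finset (Fin n),
      (∀ r r', r ≠ r' → Disjoint (I r) (I r')) ∧
      (∀ r, (I r).card = k) ∧
      (∀ r, ∀ i ∈ I r,
        (ρ / (3 * ((k : ℝ) - 1)) ≤ y i ∧ y i ≤ 1 - ρ / (3 * ((k : ℝ) - 1))) ∧
        ∀ j ∈ I r, i ≠ j → ρ / ((k : ℝ) - 1) ≤ |y i - y j|) := by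
  have hk2 : (2:ℝ) ≤ (k:ℝ) := by exact_mod_cast hk
  have hk3 : (0:ℝ) < (k:ℝ) + 3 := by linarith
  have hk1 : ((k:ℝ) - 1) ≠ 0 := by intro h; linarith [h]
  have hnpos : 0 < n := lt_of_lt_of_le (by positivity) hn
  have hN : (0:ℝ) < (n:ℝ) := by exact_mod_cast hnpos
  have hnR : (k:ℝ) * ((k:ℝ)+3) ≤ (n:ℝ) := by exact_mod_cast hn
  set δ : ℝ := 1 / ((k:ℝ) + 3) with hδdef
  set q : ℝ := (n:ℝ) / ((k:ℝ) + 3) with hqdef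
  have hnq : (n:ℝ) = q * ((k:ℝ)+3) := by
    rw [hqdef, div_mul_cancel₀ _ (ne_of_gt hk3)]
  set s : ℕ := ⌈(n : ℝ) / ((k : ℝ) + 3)⌉₊ with hsdef
  have hqs : q ≤ (s:ℝ) := Nat.le_ceil _
  have hsq : (s:ℝ) < q + 1 := Nat.ceil_lt_add_one (by positivity)
  have hs1 : 1 ≤ s := Nat.one_le_ceil_iff.mpr (by positivity)
  have hkq : (k:ℝ) ≤ q := by
    rw [hqdef, le_div_iff₀ hk3]; linarith
  have hksn : (k+1) * s ≤ n := by
    have hR : (((k+1) * s : ℕ) : ℝ) < (n:ℝ) + 1 := by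
      push_cast
      linarith [hkq, hk2, mul_lt_mul_of_pos_left hsq
        (show (0:ℝ) < (k:ℝ)+1 by linarith), hnq]
    have h2 : ((k+1) * s : ℕ) < n + 1 := by exact_mod_cast hR
    omega
  obtain ⟨s', hs'⟩ : ∃ s', s = s' + 1 := ⟨s - 1, by omega⟩
  have hkey : ∀ r t : ℕ, r < s → t < k → r + t * s + s' + 2 ≤ (k+1) * s := by
    intro r t hr ht
    have hh : k - 1 + 2 = k + 1 := by omega
    calc r + t * s + s' + 2 ≤ s' + (k-1) * s + s' + 2 := by
          gcongr <;> omega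
      _ = (k-1) * s + (s' + s' + 2) := by ring
      _ = (k-1) * s + 2 * s := by
          have h2s : s' + s' + 2 = 2 * s := by omega
          rw [h2s]
      _ = (k+1) * s := by rw [← Nat.add_mul, hh]
  have hidx_lt : ∀ r t : ℕ, r < s → t < k → r + t * s + s' < n := by
    intro r t hr ht
    have h3 := le_trans (hkey r t hr ht) hksn
    exact lt_of_lt_of_le (Nat.lt_add_of_pos_right (by norm_num)) h3
  let f : Fin s → Fin k → Fin n :=
    fun r t => ⟨(r:ℕ) + (t:ℕ) * s + s', hidx_lt r t r.2 t.2⟩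
  have hlt : ∀ (i : Fin n) (x : ℝ), x < y i →
      σ (Set.Icc 0 x) ≤ ENNReal.ofReal (((i:ℕ) + 1 : ℝ)/n) := by
    intro i x hx
    by_contra hcon
    push_neg at hcon
    rcases le_or_gt 0 x with h0 | h0
    · have hx1 : x ≤ 1 := le_trans hx.le (hy i).1.1.2
      exact absurd ((hy i).2 ⟨⟨h0, hx1⟩, hcon.le⟩) (not_le.2 hx)
    · rw [Set.Icc_eq_empty (not_le.2 h0), measure_empty] at hcon
      exact absurd hcon (by simp)
  have hIco : ∀ i : Fin n, σ (Set.Ico 0 (y i)) ≤ ENNReal.ofReal (((i:ℕ) + 1 : ℝ)/n) :=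
    fun i => measure_Ico_le σ (fun x hx => hlt i x hx)
  have hmono : ∀ i j : Fin n, (i:ℕ) ≤ (j:ℕ) → y i ≤ y j := by
    intro i j hij
    apply (hy i).2
    refine ⟨(hy j).1.1, le_trans ?_ (hy j).1.2⟩
    apply ENNReal.ofReal_le_ofReal
    have hc : ((i:ℕ):ℝ) ≤ ((j:ℕ):ℝ) := by exact_mod_cast hij
    gcongr
  have hsep : ∀ i j : Fin n, (s:ℝ) ≤ ((j:ℕ):ℝ) - ((i:ℕ):ℝ) → Rsig σ δ ≤ y j - y i := by
    intro i j hij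
    have hs1R : (1:ℝ) ≤ (s:ℝ) := by exact_mod_cast hs1
    have hij' : (i:ℕ) ≤ (j:ℕ) := by
      have hc : ((i:ℕ):ℝ) ≤ ((j:ℕ):ℝ) := by linarith
      exact_mod_cast hc
    apply Rsig_le σ δ (hmono i j hij')
    have hcov : Set.Icc 0 (y j) ⊆ Set.Ico 0 (y i) ∪ Set.Icc (y i) (y j) := by
      intro x hx
      rcases lt_or_ge x (y i) with h | h
      · exact Or.inl ⟨hx.1, h⟩
      · exact Or.inr ⟨h, hx.2⟩
    have h1 : ENNReal.ofReal (((j:ℕ) + 1 : ℝ)/n) ≤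
        ENNReal.ofReal (((i:ℕ) + 1 : ℝ)/n) + σ (Set.Icc (y i) (y j)) :=
      le_trans (hy j).1.2 (le_trans (measure_mono hcov)
        (le_trans (measure_union_le _ _) (add_le_add (hIco i) le_rfl)))
    have h2 : ENNReal.ofReal (((j:ℕ) + 1 : ℝ)/n - ((i:ℕ) + 1 : ℝ)/n) ≤
        σ (Set.Icc (y i) (y j)) := by
      rw [ENNReal.ofReal_sub _ (by positivity)]
      exact tsub_le_iff_left.mpr h1
    refine le_trans (ENNReal.ofReal_le_ofReal ?_) h2
    have hqij : q ≤ ((j:ℕ):ℝ) - ((i:ℕ):ℝ) := le_trans hqs hij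
    have heq : ((j:ℕ) + 1 : ℝ)/n - ((i:ℕ) + 1 : ℝ)/n = (((j:ℕ):ℝ) - ((i:ℕ):ℝ))/n := by
      ring
    rw [heq, hδdef, div_le_div_iff₀ hk3 hN]
    linarith [mul_le_mul_of_nonneg_right hqij hk3.le, hnq]
  have hRnn : 0 ≤ Rsig σ δ := by
    refine Rsig_nonneg σ δ (x := 0) (y := 1) zero_le_one ?_
    rw [hσ]
    apply ENNReal.ofReal_le_one.mpr
    rw [hδdef, div_le_one hk3]; linarith
  have hlow : ∀ i : Fin n, s ≤ (i:ℕ) + 1 → Rsig σ δ ≤ y i := by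
    intro i hi
    have h0 : (0:ℝ) ≤ y i := (hy i).1.1.1
    have hle : Rsig σ δ ≤ y i - 0 := by
      apply Rsig_le σ δ h0
      refine le_trans (ENNReal.ofReal_le_ofReal ?_) (hy i).1.2
      have hsi : (s:ℝ) ≤ ((i:ℕ):ℝ) + 1 := by exact_mod_cast hi
      have hqi : q ≤ ((i:ℕ):ℝ) + 1 := le_trans hqs hsi
      rw [hδdef, div_le_div_iff₀ hk3 hN]
      linarith [mul_le_mul_of_nonneg_right hqi hk3.le, hnq]
    linarith
  have hhigh : ∀ i : Fin n, ((i:ℕ):ℝ) + 2 ≤ ((k:ℝ)+1) * s → Rsig σ δ ≤ 1 - y i := by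
    intro i hi
    have h1 : y i ≤ 1 := (hy i).1.1.2
    apply Rsig_le σ δ h1
    have hcov : Set.Icc (0:ℝ) 1 ⊆ Set.Ico 0 (y i) ∪ Set.Icc (y i) 1 := by
      intro x hx
      rcases lt_or_ge x (y i) with h | h
      · exact Or.inl ⟨hx.1, h⟩
      · exact Or.inr ⟨h, hx.2⟩
    have hm1 : (1:ENNReal) ≤ ENNReal.ofReal (((i:ℕ) + 1 : ℝ)/n) + σ (Set.Icc (y i) 1) := by
      calc (1:ENNReal) = σ (Set.Icc (0:ℝ) 1) := hσ.symm
        _ ≤ σ (Set.Ico 0 (y i) ∪ Set.Icc (y i) 1) := measure_mono hcov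
        _ ≤ σ (Set.Ico 0 (y i)) + σ (Set.Icc (y i) 1) := measure_union_le _ _
        _ ≤ _ := add_le_add (hIco i) le_rfl
    have h2 : ENNReal.ofReal (1 - ((i:ℕ) + 1 : ℝ)/n) ≤ σ (Set.Icc (y i) 1) := by
      rw [ENNReal.ofReal_sub _ (by positivity), ENNReal.ofReal_one]
      exact tsub_le_iff_left.mpr hm1
    refine le_trans (ENNReal.ofReal_le_ofReal ?_) h2
    have hks : ((k:ℝ)+1) * (s:ℝ) < ((k:ℝ)+1) * (q+1) :=
      mul_lt_mul_of_pos_left hsq (by linarith)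
    have hik2 : ((i:ℕ):ℝ) + 1 ≤ q * ((k:ℝ)+2) := by linarith [hi, hks, hkq]
    have hB : ((k:ℝ)+3) * (q * ((k:ℝ)+2)) = (n:ℝ) * ((k:ℝ)+2) := by rw [hnq]; ring
    rw [hδdef, le_sub_iff_add_le, div_add_div _ _ (ne_of_gt hk3) (ne_of_gt hN),
      div_le_one (by positivity)]
    linarith [mul_le_mul_of_nonneg_left hik2 hk3.le, hB]
  refine ⟨fun r => Finset.image (f r) Finset.univ, ?_, ?_, ?_⟩
  · intro r r' hrr
    rw [Finset.disjoint_left]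
    intro a ha ha'
    obtain ⟨t, -, hft⟩ := Finset.mem_image.1 ha
    obtain ⟨t', -, hft'⟩ := Finset.mem_image.1 ha'
    apply hrr
    have hval : (r:ℕ) + (t:ℕ) * s + s' = (r':ℕ) + (t':ℕ) * s + s' := by
      have hc := congrArg (Fin.val) (hft.trans hft'.symm)
      simpa [f] using hc
    have e : (r:ℕ) + (t:ℕ) * s = (r':ℕ) + (t':ℕ) * s := Nat.add_right_cancel hval
    have hr : (r:ℕ) = (r':ℕ) := by
      calc (r:ℕ) = ((r:ℕ) + (t:ℕ) * s) % s := by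
            rw [Nat.add_mul_mod_self_right, Nat.mod_eq_of_lt r.2]
        _ = ((r':ℕ) + (t':ℕ) * s) % s := by rw [e]
        _ = (r':ℕ) := by rw [Nat.add_mul_mod_self_right, Nat.mod_eq_of_lt r'.2]
    exact Fin.ext hr
  · intro r
    have hinj : Function.Injective (f r) := by
      intro t t' htt
      have hval : (r:ℕ) + (t:ℕ) * s + s' = (r:ℕ) + (t':ℕ) * s + s' := by
        have hc := congrArg (Fin.val) htt
        simpa [f] using hc
      have h1 : (t:ℕ) * s = (t':ℕ) * s :=
        Nat.add_left_cancel (Nat.add_right_cancel hval)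
      exact Fin.ext (Nat.eq_of_mul_eq_mul_right (by omega) h1)
    rw [Finset.card_image_of_injective _ hinj, Finset.card_univ, Fintype.card_fin]
  · intro r i hi
    obtain ⟨t, -, hft⟩ := Finset.mem_image.1 hi
    have hival : (i:ℕ) = (r:ℕ) + (t:ℕ) * s + s' := by rw [← hft]
    have hρ3 : ρ / (3 * ((k:ℝ) - 1)) = Rsig σ δ / 3 := by
      rw [hρ]
      field_simp
    have hρ1 : ρ / ((k:ℝ) - 1) = Rsig σ δ := by
      rw [hρ, mul_comm, mul_div_assoc, div_self hk1, mul_one]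
    have hsle : s ≤ (i:ℕ) + 1 := by
      have h1 : s' + 1 ≤ (r:ℕ) + (t:ℕ) * s + s' + 1 := by
        have h0 := Nat.le_add_left (s' + 1) ((r:ℕ) + (t:ℕ) * s)
        rwa [← Nat.add_assoc] at h0
      calc s = s' + 1 := hs'
        _ ≤ (r:ℕ) + (t:ℕ) * s + s' + 1 := h1
        _ = (i:ℕ) + 1 := by rw [hival]
    constructor
    · constructor
      · rw [hρ3]
        have hl := hlow i hsle
        linarith
      · rw [hρ3]
        have hik : ((i:ℕ):ℝ) + 2 ≤ ((k:ℝ)+1) * s := by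
          have hK := hkey (r:ℕ) (t:ℕ) r.2 t.2
          rw [← hival] at hK
          exact_mod_cast hK
        have hh := hhigh i hik
        linarith
    · intro j hj hij
      obtain ⟨t', -, hft'⟩ := Finset.mem_image.1 hj
      have hjval : (j:ℕ) = (r:ℕ) + (t':ℕ) * s + s' := by rw [← hft']
      have htt : (t:ℕ) ≠ (t':ℕ) := by
        intro h
        apply hij
        apply Fin.ext
        rw [hival, hjval, h]
      rw [hρ1]
      rcases Nat.lt_or_ge (t:ℕ) (t':ℕ) with hlt' | hge
      · have hts : (t:ℕ) * s + s ≤ (t':ℕ) * s := by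
          calc (t:ℕ) * s + s = ((t:ℕ)+1) * s := by ring
            _ ≤ (t':ℕ) * s := Nat.mul_le_mul_right s hlt'
        have hij2 : (i:ℕ) + s ≤ (j:ℕ) := by
          rw [hival, hjval]
          calc (r:ℕ) + (t:ℕ) * s + s' + s = (r:ℕ) + ((t:ℕ) * s + s) + s' := by ring
            _ ≤ (r:ℕ) + (t':ℕ) * s + s' :=
              Nat.add_le_add_right (Nat.add_le_add_left hts _) _
        have hijR : (s:ℝ) ≤ ((j:ℕ):ℝ) - ((i:ℕ):ℝ) := by
          have hc : (((i:ℕ) + s : ℕ):ℝ) ≤ ((j:ℕ):ℝ) := by exact_mod_cast hij2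
          push_cast at hc
          linarith
        have hR := hsep i j hijR
        have hyij : y i ≤ y j := hmono i j (le_trans (Nat.le_add_right _ _) hij2)
        rw [abs_of_nonpos (by linarith), neg_sub]
        linarith
      · have hlt'' : (t':ℕ) < (t:ℕ) := lt_of_le_of_ne hge (Ne.symm htt)
        have hts : (t':ℕ) * s + s ≤ (t:ℕ) * s := by
          calc (t':ℕ) * s + s = ((t':ℕ)+1) * s := by ring
            _ ≤ (t:ℕ) * s := Nat.mul_le_mul_right s hlt''
        have hij2 : (j:ℕ) + s ≤ (i:ℕ) := by
          rw [hival, hjval]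
          calc (r:ℕ) + (t':ℕ) * s + s' + s = (r:ℕ) + ((t':ℕ) * s + s) + s' := by ring
            _ ≤ (r:ℕ) + (t:ℕ) * s + s' :=
              Nat.add_le_add_right (Nat.add_le_add_left hts _) _
        have hijR : (s:ℝ) ≤ ((i:ℕ):ℝ) - ((j:ℕ):ℝ) := by
          have hc : (((j:ℕ) + s : ℕ):ℝ) ≤ ((i:ℕ):ℝ) := by exact_mod_cast hij2
          push_cast at hc
          linarith
        have hR := hsep j i hijR
        have hyij : y j ≤ y i := hmono j i (le_trans (Nat.le_add_right _ _) hij2)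
        rw [abs_of_nonneg (by linarith)]
        linarith
end
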